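/- arXiv:1601.05645 — 14 statements merged into one kernel-verified Lean document; each statement's English description precedes it below -/
import Mathlib

section
/- If the coefficient tridiagonal matrix J of a recursive matrix A is totally positive of order r (all minors of size ≤ r of every finite leading principal submatrix are nonnegative), then A is totally positive of order r. -/
/-- An infinite matrix is totally positive of order \$p\$ if all its minors of
order at most \$p\$ are nonnegative. -/
def IsTotallyPosOrd (p : ℕ) (M : ℕ → ℕ → ℝ) : Prop :=
  ∀ (m : ℕ), m ≤ p → ∀ (f g : Fin m → ℕ), StrictMono f → StrictMono g →
    0 ≤ (Matrix.of fun i j => M (f i) (g j)).det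


open Matrix Finset

lemma det_mul_eq_sum_func {m N : ℕ} (A : Matrix (Fin m) (Fin N) ℝ) (B : Matrix (Fin N) (Fin m) ℝ) :
    (A * B).det = ∑ φ : Fin m → Fin N, (∏ i, A i (φ i)) * (B.submatrix φ id).det := by
  have h1 : (A * B).det
      = (detRowAlternating : (Fin m → ℝ) [⋀^Fin m]→ₗ[ℝ] ℝ)
        (fun i => ∑ k : Fin N, A i k • B k) := by
    congr 1
    funext i j
    simp [Matrix.mul_apply, Finset.sum_apply]
  have h2 := MultilinearMap.map_sum
    (detRowAlternating : (Fin m → ℝ) [⋀^Fin m]→ₗ[ℝ] ℝ).toMultilinearMap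
    (fun (i : Fin m) (k : Fin N) => A i k • B k)
  rw [h1]
  refine h2.trans (Finset.sum_congr rfl fun φ _ => ?_)
  have := (detRowAlternating : (Fin m → ℝ) [⋀^Fin m]→ₗ[ℝ] ℝ).toMultilinearMap.map_smul_univ
    (fun i => A i (φ i)) (fun i => B (φ i))
  rw [show B.submatrix φ id = fun i => B (φ i) from rfl]
  simpa [Matrix.det, smul_eq_mul] using this

lemma det_mul_nonneg_minors {m N : ℕ} (A : Matrix (Fin m) (Fin N) ℝ) (B : Matrix (Fin N) (Fin m) ℝ)
    (hA : ∀ h : Fin m → Fin N, StrictMono h → 0 ≤ (A.submatrix id h).det)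
    (hB : ∀ h : Fin m → Fin N, StrictMono h → 0 ≤ (B.submatrix h id).det) :
    0 ≤ (A * B).det := by
  classical
  rw [det_mul_eq_sum_func]
  set F : (Fin m → Fin N) → ℝ := fun φ => (∏ i, A i (φ i)) * (B.submatrix φ id).det with hF
  have hrestrict : ∑ φ : Fin m → Fin N, F φ
      = ∑ φ ∈ Finset.univ.filter (fun φ : Fin m → Fin N => Function.Injective φ), F φ := by
    refine (Finset.sum_subset (Finset.filter_subset _ _) ?_).symm
    intro φ _ hφ
    simp only [Finset.mem_filter, Finset.mem_univ, true_and] at hφ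
    rw [Function.Injective] at hφ
    push_neg at hφ
    obtain ⟨i, j, hij, hne⟩ := hφ
    have : (B.submatrix φ id).det = 0 := by
      refine Matrix.det_zero_of_row_eq hne ?_
      funext k
      simp [Matrix.submatrix_apply, hij]
    simp [hF, this]
  rw [hrestrict]
  set T : Finset ((Fin m → Fin N) × Equiv.Perm (Fin m)) :=
    (Finset.univ.filter (fun h : Fin m → Fin N => StrictMono h)) ×ˢ Finset.univ with hT
  have hbij : ∑ q ∈ T, F (q.1 ∘ q.2) = ∑ φ ∈ Finset.univ.filter
      (fun φ : Fin m → Fin N => Function.Injective φ), F φ := by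
    refine Finset.sum_bij (fun q _ => q.1 ∘ q.2) ?_ ?_ ?_ ?_
    · rintro ⟨h, σ⟩ hq
      simp only [hT, Finset.mem_product, Finset.mem_filter, Finset.mem_univ, true_and,
        and_true] at hq
      simp only [Finset.mem_filter, Finset.mem_univ, true_and]
      exact hq.injective.comp σ.injective
    · rintro ⟨h, σ⟩ hq ⟨h', σ'⟩ hq' heq
      simp only [hT, Finset.mem_product, Finset.mem_filter, Finset.mem_univ, true_and,
        and_true] at hq hq'
      have himg : ∀ (k : Fin m → Fin N) (τ : Equiv.Perm (Fin m)),
          Finset.image (k ∘ τ) Finset.univ = Finset.image k Finset.univ := by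
        intro k τ
        rw [← Finset.image_image]
        congr 1
        exact Finset.image_univ_equiv τ
      have heq' : h ∘ ⇑σ = h' ∘ ⇑σ' := heq
      have hss : Finset.image h Finset.univ = Finset.image h' Finset.univ := by
        rw [← himg h σ, heq', himg h' σ']
      have hs : (Finset.image h Finset.univ).card = m := by
        rw [Finset.card_image_of_injective _ hq.injective, Finset.card_univ, Fintype.card_fin]
      have e1 : h = (Finset.image h Finset.univ).orderEmbOfFin hs :=
        Finset.orderEmbOfFin_unique hs
          (fun x => Finset.mem_image_of_mem _ (Finset.mem_univ x)) hq
      have e2 : h' = (Finset.image h Finset.univ).orderEmbOfFin hs :=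
        Finset.orderEmbOfFin_unique hs
          (fun x => by rw [hss]; exact Finset.mem_image_of_mem _ (Finset.mem_univ x)) hq'
      have hhh : h = h' := by rw [e1, e2]
      subst hhh
      have hσ : σ = σ' := by
        apply Equiv.coe_fn_injective
        funext i
        exact hq.injective (congrFun heq' i)
      rw [hσ]
    · intro φ hφ
      simp only [Finset.mem_filter, Finset.mem_univ, true_and] at hφ
      set s := Finset.image φ Finset.univ with hsdef
      have hs : s.card = m := by
        rw [hsdef, Finset.card_image_of_injective _ hφ, Finset.card_univ, Fintype.card_fin]
      have hmem : ∀ i, φ i ∈ s := fun i => Finset.mem_image_of_mem _ (Finset.mem_univ i)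
      set σf : Fin m → Fin m := fun i => (s.orderIsoOfFin hs).symm ⟨φ i, hmem i⟩ with hσf
      have hinj : Function.Injective σf := by
        intro i j hij
        apply hφ
        have := congrArg (fun x => ((s.orderIsoOfFin hs) x : Fin N)) hij
        simpa [hσf] using this
      have hbij := Finite.injective_iff_bijective.mp hinj
      refine ⟨⟨fun i => s.orderEmbOfFin hs i, Equiv.ofBijective σf hbij⟩, ?_, ?_⟩
      · simp only [hT, Finset.mem_product, Finset.mem_filter, Finset.mem_univ, true_and,
          and_true]
        exact (s.orderEmbOfFin hs).strictMono
      · funext i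
        show s.orderEmbOfFin hs (σf i) = φ i
        rw [← Finset.coe_orderIsoOfFin_apply, hσf]
        simp
    · rintro ⟨h, σ⟩ _
      rfl
  rw [← hbij, hT, Finset.sum_product]
  refine Finset.sum_nonneg fun h hh => ?_
  simp only [Finset.mem_filter, Finset.mem_univ, true_and] at hh
  have step : ∀ σ : Equiv.Perm (Fin m), F ((h, σ).1 ∘ (h, σ).2)
      = ((Equiv.Perm.sign σ : ℤ) : ℝ) * (∏ i, A i (h (σ i))) * (B.submatrix h id).det := by
    intro σ
    have hsub : B.submatrix (h ∘ σ) id = (B.submatrix h id).submatrix σ id := by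
      funext i j
      simp
    show (∏ i, A i (h (σ i))) * (B.submatrix (h ∘ σ) id).det = _
    rw [hsub, Matrix.det_permute]
    ring
  have hsum : ∑ σ : Equiv.Perm (Fin m), F ((h, σ).1 ∘ (h, σ).2)
      = ((A.submatrix id h)ᵀ).det * (B.submatrix h id).det := by
    rw [Matrix.det_apply', Finset.sum_mul]
    refine Finset.sum_congr rfl fun σ _ => ?_
    rw [step σ]
    rfl
  rw [hsum, Matrix.det_transpose]
  exact mul_nonneg (hA h hh) (hB h hh)

/-- If the coefficient (Jacobi) matrix of a recursive matrix is totally positive of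
order $p$, then so is the recursive matrix itself. -/
theorem recursive_matrix_tp_of_jacobi_tp (p : ℕ) (a : ℕ → ℕ → ℝ) (r s t : ℕ → ℝ)
    (hr : ∀ k, 0 ≤ r k) (hs : ∀ k, 0 ≤ s k) (ht : ∀ k, 0 ≤ t k)
    (ha0 : a 0 0 = 1) (hzero : ∀ n k, n < k → a n k = 0)
    (hrec0 : ∀ n, a (n + 1) 0 = s 0 * a n 0 + t 1 * a n 1)
    (hrec : ∀ n k, a (n + 1) (k + 1)
      = r (k + 1) * a n k + s (k + 1) * a n (k + 1) + t (k + 2) * a n (k + 2))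
    (hJ : IsTotallyPosOrd p (fun i j =>
      if i = j then s i else if i + 1 = j then r j else if j + 1 = i then t i else 0)) :
    IsTotallyPosOrd p a := by
  unfold IsTotallyPosOrd at hJ ⊢
  classical
  set J : ℕ → ℕ → ℝ := fun i j =>
    if i = j then s i else if i + 1 = j then r j else if j + 1 = i then t i else 0 with hJdef
  have hJout : ∀ j k : ℕ, ¬(j = k ∨ j + 1 = k ∨ k + 1 = j) → J j k = 0 := by
    intro j k h
    push_neg at h
    simp only [hJdef, if_neg h.1, if_neg h.2.1, if_neg h.2.2]
  have hsum : ∀ (n k N : ℕ), k + 2 < N →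
      (∑ j ∈ Finset.range N, a n j * J j k) = a (n + 1) k := by
    intro n k N hN
    match k with
    | 0 =>
      have h2 : Finset.range 2 ⊆ Finset.range N := Finset.range_subset_range.mpr (by omega)
      rw [← Finset.sum_subset h2 (by
        intro j hj hj2
        simp only [Finset.mem_range] at hj hj2
        rw [hJout j 0 (by omega), mul_zero])]
      rw [Finset.sum_range_succ, Finset.sum_range_one, hrec0 n]
      have hJ00 : J 0 0 = s 0 := by simp [hJdef]
      have hJ10 : J 1 0 = t 1 := by norm_num [hJdef]
      rw [hJ00, hJ10]; ring
    | (k' + 1) =>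
      have h2 : Finset.range (k' + 3) ⊆ Finset.range N := Finset.range_subset_range.mpr (by omega)
      rw [← Finset.sum_subset h2 (by
        intro j hj hj2
        simp only [Finset.mem_range] at hj hj2
        rw [hJout j (k' + 1) (by omega), mul_zero])]
      rw [Finset.sum_range_succ, Finset.sum_range_succ, Finset.sum_range_succ]
      rw [Finset.sum_eq_zero (by
        intro j hj
        simp only [Finset.mem_range] at hj
        rw [hJout j (k' + 1) (by omega), mul_zero])]
      have e1 : J k' (k' + 1) = r (k' + 1) := by
        simp only [hJdef]; split_ifs <;> first | rfl | omega
      have e2 : J (k' + 1) (k' + 1) = s (k' + 1) := by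
        simp only [hJdef]; split_ifs <;> first | rfl | omega
      have e3 : J (k' + 2) (k' + 1) = t (k' + 2) := by
        simp only [hJdef]; split_ifs <;> first | rfl | omega
      rw [e1, e2, e3, hrec n k']
      ring
  intro m
  induction m using Nat.strong_induction_on with
  | _ m ih =>
    intro hmp
    match m, ih, hmp with
    | 0, ih, hmp =>
      intro f g _ _
      simp [Matrix.det_isEmpty]
    | (m' + 1), ih, hmp =>
      suffices H : ∀ n : ℕ, ∀ f g : Fin (m' + 1) → ℕ, StrictMono f → StrictMono g → f 0 = n →
          0 ≤ (Matrix.of fun i j => a (f i) (g j)).det by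
        intro f g hf hg
        exact H (f 0) f g hf hg rfl
      intro n
      induction n with
      | zero =>
        intro f g hf hg hf0
        by_cases hg0 : g 0 = 0
        · rw [Matrix.det_succ_row_zero]
          rw [Finset.sum_eq_single 0 (by
            intro b _ hb
            have hgb : 0 < g b := by
              have := hg (show (0 : Fin (m' + 1)) < b by
                exact lt_of_le_of_ne (Fin.zero_le b) (Ne.symm hb))
              omega
            have : (Matrix.of fun i j => a (f i) (g j)) 0 b = 0 := by
              show a (f 0) (g b) = 0
              rw [hf0]
              exact hzero 0 (g b) hgb
            rw [this]
            ring) (by intro h; exact absurd (Finset.mem_univ 0) h)]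
          have h00 : (Matrix.of fun i j => a (f i) (g j)) 0 0 = 1 := by
            show a (f 0) (g 0) = 1
            rw [hf0, hg0, ha0]
          rw [h00]
          simp only [Fin.val_zero, pow_zero, one_mul, mul_one]
          have hminor : ((Matrix.of fun i j => a (f i) (g j)).submatrix Fin.succ
              (Fin.succAbove 0)) = (Matrix.of fun i j => a ((f ∘ Fin.succ) i) ((g ∘ Fin.succ) j)) := by
            ext i j
            simp [Fin.succAbove_zero]
          rw [hminor]
          exact ih m' (by omega) (by omega) (f ∘ Fin.succ) (g ∘ Fin.succ)
            (hf.comp Fin.strictMono_succ) (hg.comp Fin.strictMono_succ)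
        · apply le_of_eq
          symm
          apply Matrix.det_eq_zero_of_row_eq_zero 0
          intro j
          show a (f 0) (g j) = 0
          rw [hf0]
          have : 0 < g j := by
            have := hg.monotone (Fin.zero_le j)
            omega
          exact hzero 0 (g j) this
      | succ n ihn =>
        intro f g hf hg hf0
        set N := g (Fin.last m') + 3 with hNdef
        set A' : Matrix (Fin (m' + 1)) (Fin N) ℝ := Matrix.of fun i j => a (f i - 1) (j : ℕ)
          with hA'
        set C : Matrix (Fin N) (Fin (m' + 1)) ℝ := Matrix.of fun j i => J (j : ℕ) (g i) with hC
        have hfpos : ∀ i, 1 ≤ f i := by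
          intro i
          have := hf.monotone (Fin.zero_le i)
          omega
        have hMeq : (Matrix.of fun i j => a (f i) (g j)) = A' * C := by
          ext i j'
          rw [Matrix.mul_apply]
          have e : ∑ x : Fin N, A' i x * C x j'
              = ∑ jj ∈ Finset.range N, a (f i - 1) jj * J jj (g j') := by
            rw [← Fin.sum_univ_eq_sum_range]
            rfl
          rw [e, hsum (f i - 1) (g j') N (by
            have := hg.monotone (Fin.le_last j')
            omega)]
          have : f i - 1 + 1 = f i := by have := hfpos i; omega
          rw [this]
          rfl
        rw [hMeq]
        apply det_mul_nonneg_minors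
        · intro h hmono
          have : A'.submatrix id h
              = Matrix.of fun i j => a ((fun i => f i - 1) i) ((fun j => ((h j : ℕ))) j) := rfl
          rw [this]
          refine ihn (fun i => f i - 1) (fun j => (h j : ℕ)) ?_ ?_ (by show f 0 - 1 = n; omega)
          · intro i j hij
            show f i - 1 < f j - 1
            have h1 := hf hij
            have h2 := hfpos i
            omega
          · intro i j hij
            exact hmono hij
        · intro h hmono
          have : C.submatrix h id = Matrix.of fun i j => J ((fun i => ((h i : ℕ))) i) (g j) := rfl
          rw [this]
          exact hJ (m' + 1) hmp (fun i => (h i : ℕ)) g (fun i j hij => hmono hij) hg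
end

section
/- If the recursive matrix A is totally positive of order 2, then the sequence of Catalan-like numbers (a_{n,0})_{n≥0} is log-convex, i.e., a_{n,0} a_{n+2,0} ≥ a_{n+1,0}^2 for all n. -/
/-- If the recursive matrix is TP$_2$, then the Catalan-like numbers $(a_{n,0})$
form a log-convex sequence. -/
theorem catalanLike_logConvex_of_tp2 (a : ℕ → ℕ → ℝ) (r s t : ℕ → ℝ)
    (hr : ∀ k, 0 ≤ r k) (hs : ∀ k, 0 ≤ s k) (ht : ∀ k, 0 ≤ t k)
    (ha0 : a 0 0 = 1) (hzero : ∀ n k, n < k → a n k = 0)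
    (hrec0 : ∀ n, a (n + 1) 0 = s 0 * a n 0 + t 1 * a n 1)
    (hrec : ∀ n k, a (n + 1) (k + 1)
      = r (k + 1) * a n k + s (k + 1) * a n (k + 1) + t (k + 2) * a n (k + 2))
    (hA : IsTotallyPosOrd 2 a) :
    ∀ n : ℕ, a (n + 1) 0 ^ 2 ≤ a n 0 * a (n + 2) 0 := by
  intro n
  have hf : StrictMono (![n, n + 1] : Fin 2 → ℕ) := by
    intro i j hij
    fin_cases i <;> fin_cases j <;> simp_all <;> omega
  have hg : StrictMono (![0, 1] : Fin 2 → ℕ) := by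
    intro i j hij
    fin_cases i <;> fin_cases j <;> simp_all
  have hdet := hA 2 le_rfl ![n, n + 1] ![0, 1] hf hg
  rw [Matrix.det_fin_two] at hdet
  simp only [Matrix.of_apply, Matrix.cons_val_zero, Matrix.cons_val_one,
    Matrix.head_cons] at hdet
  have key : a n 0 * a (n + 2) 0 - a (n + 1) 0 ^ 2
      = t 1 * (a n 0 * a (n + 1) 1 - a n 1 * a (n + 1) 0) := by
    rw [show n + 2 = n + 1 + 1 from rfl, hrec0 (n + 1), hrec0 n]; ring
  nlinarith [mul_nonneg (ht 1) hdet]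
end

section
/- If s_{k-1} s_k ≥ r_k t_k for all k ≥ 1 (with all r_k, s_k, t_k nonnegative), then the sequence of Catalan-like numbers (a_{n,0})_{n≥0} defined by the recursive matrix is log-convex. -/
/-- If $s_{k-1} s_k \ge r_k t_k$ for all $k \ge 1$, then the Catalan-like numbers
$(a_{n,0})$ form a log-convex sequence. -/
theorem catalanLike_logConvex (a : ℕ → ℕ → ℝ) (r s t : ℕ → ℝ)
    (hr : ∀ k, 0 ≤ r k) (hs : ∀ k, 0 ≤ s k) (ht : ∀ k, 0 ≤ t k)
    (ha0 : a 0 0 = 1) (hzero : ∀ n k, n < k → a n k = 0)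
    (hrec0 : ∀ n, a (n + 1) 0 = s 0 * a n 0 + t 1 * a n 1)
    (hrec : ∀ n k, a (n + 1) (k + 1)
      = r (k + 1) * a n k + s (k + 1) * a n (k + 1) + t (k + 2) * a n (k + 2))
    (hcond : ∀ k : ℕ, r (k + 1) * t (k + 1) ≤ s k * s (k + 1)) :
    ∀ n : ℕ, a (n + 1) 0 ^ 2 ≤ a n 0 * a (n + 2) 0 := by
  -- All entries are nonnegative
  have hpos : ∀ n k, 0 ≤ a n k := by
    intro n
    induction n with
    | zero =>
      intro k
      cases k with
      | zero => rw [ha0]; norm_num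
      | succ k => rw [hzero 0 (k + 1) (Nat.succ_pos k)]
    | succ n ih =>
      intro k
      cases k with
      | zero =>
        rw [hrec0 n]
        have h1 := mul_nonneg (hs 0) (ih 0)
        have h2 := mul_nonneg (ht 1) (ih 1)
        linarith
      | succ k =>
        rw [hrec n k]
        have h1 := mul_nonneg (hr (k + 1)) (ih k)
        have h2 := mul_nonneg (hs (k + 1)) (ih (k + 1))
        have h3 := mul_nonneg (ht (k + 2)) (ih (k + 2))
        linarith
  -- Key invariant: the ratio a (n+1) k / a n k is (weakly) increasing in k,
  -- in cross-product form, for arbitrary gaps.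
  have key : ∀ n j k, j ≤ k → 0 ≤ a n j * a (n + 1) k - a (n + 1) j * a n k := by
    intro n
    induction n with
    | zero =>
      intro j k hjk
      cases j with
      | zero =>
        cases k with
        | zero => nlinarith [mul_comm (a 0 0) (a 1 0)]
        | succ k =>
          rw [hzero 0 (k + 1) (Nat.succ_pos k), ha0]
          have := hpos 1 (k + 1)
          nlinarith
      | succ j =>
        rw [hzero 0 (j + 1) (Nat.succ_pos j), hzero 0 k (by omega)]
        nlinarith
    | succ n ih =>
      intro j k hjk
      rcases eq_or_lt_of_le hjk with rfl | hlt
      · nlinarith [mul_comm (a (n + 1) j) (a (n + 2) j)]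
      · obtain ⟨K, rfl⟩ : ∃ K, k = K + 1 := ⟨k - 1, by omega⟩
        have hjK : j ≤ K := by omega
        cases j with
        | zero =>
          rcases Nat.eq_zero_or_pos K with rfl | hK
          · -- adjacent case at the boundary: (0, 1)
            have e1 : a (n + 2) 1
                = r 1 * a (n + 1) 0 + s 1 * a (n + 1) 1 + t 2 * a (n + 1) 2 :=
              hrec (n + 1) 0
            have e2 : a (n + 2) 0 = s 0 * a (n + 1) 0 + t 1 * a (n + 1) 1 :=
              hrec0 (n + 1)
            have e3 : a (n + 1) 1 = r 1 * a n 0 + s 1 * a n 1 + t 2 * a n 2 :=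
              hrec n 0
            have e4 : a (n + 1) 0 = s 0 * a n 0 + t 1 * a n 1 := hrec0 n
            have hid : a (n + 1) 0 * a (n + 2) 1 - a (n + 2) 0 * a (n + 1) 1
                = (s 0 * s 1 - r 1 * t 1) * (a n 0 * a (n + 1) 1 - a (n + 1) 0 * a n 1)
                  + s 0 * t 2 * (a n 0 * a (n + 1) 2 - a (n + 1) 0 * a n 2)
                  + t 1 * t 2 * (a n 1 * a (n + 1) 2 - a (n + 1) 1 * a n 2) := by
              rw [e1, e2, e3, e4]; ring
            have hG : 0 ≤ s 0 * s 1 - r 1 * t 1 := by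
              have := hcond 0; linarith
            have h1 := mul_nonneg hG (ih 0 1 (by omega))
            have h2 := mul_nonneg (mul_nonneg (hs 0) (ht 2)) (ih 0 2 (by omega))
            have h3 := mul_nonneg (mul_nonneg (ht 1) (ht 2)) (ih 1 2 (by omega))
            show 0 ≤ a (n + 1) 0 * a (n + 2) 1 - a (n + 2) 0 * a (n + 1) 1
            rw [hid]; linarith
          · -- generic case (0, K + 1) with 1 ≤ K
            have e1 : a (n + 2) (K + 1)
                = r (K + 1) * a (n + 1) K + s (K + 1) * a (n + 1) (K + 1)
                  + t (K + 2) * a (n + 1) (K + 2) := hrec (n + 1) K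
            have e2 : a (n + 2) 0 = s 0 * a (n + 1) 0 + t 1 * a (n + 1) 1 :=
              hrec0 (n + 1)
            have e3 : a (n + 1) (K + 1)
                = r (K + 1) * a n K + s (K + 1) * a n (K + 1)
                  + t (K + 2) * a n (K + 2) := hrec n K
            have e4 : a (n + 1) 0 = s 0 * a n 0 + t 1 * a n 1 := hrec0 n
            have hid : a (n + 1) 0 * a (n + 2) (K + 1)
                  - a (n + 2) 0 * a (n + 1) (K + 1)
                = s 0 * r (K + 1) * (a n 0 * a (n + 1) K - a (n + 1) 0 * a n K)
                  + s 0 * s (K + 1)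
                    * (a n 0 * a (n + 1) (K + 1) - a (n + 1) 0 * a n (K + 1))
                  + s 0 * t (K + 2)
                    * (a n 0 * a (n + 1) (K + 2) - a (n + 1) 0 * a n (K + 2))
                  + t 1 * r (K + 1) * (a n 1 * a (n + 1) K - a (n + 1) 1 * a n K)
                  + t 1 * s (K + 1)
                    * (a n 1 * a (n + 1) (K + 1) - a (n + 1) 1 * a n (K + 1))
                  + t 1 * t (K + 2)
                    * (a n 1 * a (n + 1) (K + 2) - a (n + 1) 1 * a n (K + 2)) := by
              rw [e1, e2, e3, e4]; ring
            have h1 := mul_nonneg (mul_nonneg (hs 0) (hr (K + 1))) (ih 0 K (by omega))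
            have h2 := mul_nonneg (mul_nonneg (hs 0) (hs (K + 1))) (ih 0 (K + 1) (by omega))
            have h3 := mul_nonneg (mul_nonneg (hs 0) (ht (K + 2))) (ih 0 (K + 2) (by omega))
            have h4 := mul_nonneg (mul_nonneg (ht 1) (hr (K + 1))) (ih 1 K (by omega))
            have h5 := mul_nonneg (mul_nonneg (ht 1) (hs (K + 1))) (ih 1 (K + 1) (by omega))
            have h6 := mul_nonneg (mul_nonneg (ht 1) (ht (K + 2))) (ih 1 (K + 2) (by omega))
            show 0 ≤ a (n + 1) 0 * a (n + 2) (K + 1) - a (n + 2) 0 * a (n + 1) (K + 1)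
            rw [hid]; linarith
        | succ p =>
          rcases eq_or_lt_of_le hjK with heq | hlt2
          · -- adjacent case (p + 1, p + 2)
            subst heq
            have e1 : a (n + 2) (p + 2)
                = r (p + 2) * a (n + 1) (p + 1) + s (p + 2) * a (n + 1) (p + 2)
                  + t (p + 3) * a (n + 1) (p + 3) := hrec (n + 1) (p + 1)
            have e2 : a (n + 2) (p + 1)
                = r (p + 1) * a (n + 1) p + s (p + 1) * a (n + 1) (p + 1)
                  + t (p + 2) * a (n + 1) (p + 2) := hrec (n + 1) p
            have e3 : a (n + 1) (p + 2)
                = r (p + 2) * a n (p + 1) + s (p + 2) * a n (p + 2)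
                  + t (p + 3) * a n (p + 3) := hrec n (p + 1)
            have e4 : a (n + 1) (p + 1)
                = r (p + 1) * a n p + s (p + 1) * a n (p + 1)
                  + t (p + 2) * a n (p + 2) := hrec n p
            have hid : a (n + 1) (p + 1) * a (n + 2) (p + 2)
                  - a (n + 2) (p + 1) * a (n + 1) (p + 2)
                = r (p + 1) * r (p + 2)
                    * (a n p * a (n + 1) (p + 1) - a (n + 1) p * a n (p + 1))
                  + r (p + 1) * s (p + 2)
                    * (a n p * a (n + 1) (p + 2) - a (n + 1) p * a n (p + 2))
                  + r (p + 1) * t (p + 3)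
                    * (a n p * a (n + 1) (p + 3) - a (n + 1) p * a n (p + 3))
                  + (s (p + 1) * s (p + 2) - r (p + 2) * t (p + 2))
                    * (a n (p + 1) * a (n + 1) (p + 2) - a (n + 1) (p + 1) * a n (p + 2))
                  + s (p + 1) * t (p + 3)
                    * (a n (p + 1) * a (n + 1) (p + 3) - a (n + 1) (p + 1) * a n (p + 3))
                  + t (p + 2) * t (p + 3)
                    * (a n (p + 2) * a (n + 1) (p + 3) - a (n + 1) (p + 2) * a n (p + 3)) := by
              rw [e1, e2, e3, e4]; ring
            have hG : 0 ≤ s (p + 1) * s (p + 2) - r (p + 2) * t (p + 2) := by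
              have := hcond (p + 1); linarith
            have h1 := mul_nonneg (mul_nonneg (hr (p + 1)) (hr (p + 2)))
              (ih p (p + 1) (by omega))
            have h2 := mul_nonneg (mul_nonneg (hr (p + 1)) (hs (p + 2)))
              (ih p (p + 2) (by omega))
            have h3 := mul_nonneg (mul_nonneg (hr (p + 1)) (ht (p + 3)))
              (ih p (p + 3) (by omega))
            have h4 := mul_nonneg hG (ih (p + 1) (p + 2) (by omega))
            have h5 := mul_nonneg (mul_nonneg (hs (p + 1)) (ht (p + 3)))
              (ih (p + 1) (p + 3) (by omega))
            have h6 := mul_nonneg (mul_nonneg (ht (p + 2)) (ht (p + 3)))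
              (ih (p + 2) (p + 3) (by omega))
            show 0 ≤ a (n + 1) (p + 1) * a (n + 2) (p + 2)
              - a (n + 2) (p + 1) * a (n + 1) (p + 2)
            rw [hid]; linarith
          · -- generic case (p + 1, K + 1) with p + 2 ≤ K
            have hK : p + 2 ≤ K := hlt2
            have e1 : a (n + 2) (K + 1)
                = r (K + 1) * a (n + 1) K + s (K + 1) * a (n + 1) (K + 1)
                  + t (K + 2) * a (n + 1) (K + 2) := hrec (n + 1) K
            have e2 : a (n + 2) (p + 1)
                = r (p + 1) * a (n + 1) p + s (p + 1) * a (n + 1) (p + 1)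
                  + t (p + 2) * a (n + 1) (p + 2) := hrec (n + 1) p
            have e3 : a (n + 1) (K + 1)
                = r (K + 1) * a n K + s (K + 1) * a n (K + 1)
                  + t (K + 2) * a n (K + 2) := hrec n K
            have e4 : a (n + 1) (p + 1)
                = r (p + 1) * a n p + s (p + 1) * a n (p + 1)
                  + t (p + 2) * a n (p + 2) := hrec n p
            have hid : a (n + 1) (p + 1) * a (n + 2) (K + 1)
                  - a (n + 2) (p + 1) * a (n + 1) (K + 1)
                = r (p + 1) * r (K + 1) * (a n p * a (n + 1) K - a (n + 1) p * a n K)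
                  + r (p + 1) * s (K + 1)
                    * (a n p * a (n + 1) (K + 1) - a (n + 1) p * a n (K + 1))
                  + r (p + 1) * t (K + 2)
                    * (a n p * a (n + 1) (K + 2) - a (n + 1) p * a n (K + 2))
                  + s (p + 1) * r (K + 1)
                    * (a n (p + 1) * a (n + 1) K - a (n + 1) (p + 1) * a n K)
                  + s (p + 1) * s (K + 1)
                    * (a n (p + 1) * a (n + 1) (K + 1) - a (n + 1) (p + 1) * a n (K + 1))
                  + s (p + 1) * t (K + 2)
                    * (a n (p + 1) * a (n + 1) (K + 2) - a (n + 1) (p + 1) * a n (K + 2))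
                  + t (p + 2) * r (K + 1)
                    * (a n (p + 2) * a (n + 1) K - a (n + 1) (p + 2) * a n K)
                  + t (p + 2) * s (K + 1)
                    * (a n (p + 2) * a (n + 1) (K + 1) - a (n + 1) (p + 2) * a n (K + 1))
                  + t (p + 2) * t (K + 2)
                    * (a n (p + 2) * a (n + 1) (K + 2) - a (n + 1) (p + 2) * a n (K + 2)) := by
              rw [e1, e2, e3, e4]; ring
            have h1 := mul_nonneg (mul_nonneg (hr (p + 1)) (hr (K + 1)))
              (ih p K (by omega))
            have h2 := mul_nonneg (mul_nonneg (hr (p + 1)) (hs (K + 1)))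
              (ih p (K + 1) (by omega))
            have h3 := mul_nonneg (mul_nonneg (hr (p + 1)) (ht (K + 2)))
              (ih p (K + 2) (by omega))
            have h4 := mul_nonneg (mul_nonneg (hs (p + 1)) (hr (K + 1)))
              (ih (p + 1) K (by omega))
            have h5 := mul_nonneg (mul_nonneg (hs (p + 1)) (hs (K + 1)))
              (ih (p + 1) (K + 1) (by omega))
            have h6 := mul_nonneg (mul_nonneg (hs (p + 1)) (ht (K + 2)))
              (ih (p + 1) (K + 2) (by omega))
            have h7 := mul_nonneg (mul_nonneg (ht (p + 2)) (hr (K + 1)))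
              (ih (p + 2) K (by omega))
            have h8 := mul_nonneg (mul_nonneg (ht (p + 2)) (hs (K + 1)))
              (ih (p + 2) (K + 1) (by omega))
            have h9 := mul_nonneg (mul_nonneg (ht (p + 2)) (ht (K + 2)))
              (ih (p + 2) (K + 2) (by omega))
            show 0 ≤ a (n + 1) (p + 1) * a (n + 2) (K + 1)
              - a (n + 2) (p + 1) * a (n + 1) (K + 1)
            rw [hid]; linarith
  -- Conclude log-convexity
  intro n
  have hW := key n 0 1 (by omega)
  have e1 : a (n + 2) 0 = s 0 * a (n + 1) 0 + t 1 * a (n + 1) 1 := hrec0 (n + 1)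
  have e2 : a (n + 1) 0 = s 0 * a n 0 + t 1 * a n 1 := hrec0 n
  rw [e2] at hW
  rw [e1, e2]
  nlinarith [mul_nonneg (ht 1) hW]
end

section
/- If a recursive matrix A satisfies a_{0,0}=1 and a_{n+1,k} = r_k a_{n,k-1} + s_k a_{n,k} with r_k, s_k ≥ 0 (the case t_k = 0), then A is totally positive: every minor of every finite leading principal submatrix is nonnegative. -/
/-- An infinite matrix is totally positive if all its minors are nonnegative. -/
def IsTotallyPos (M : ℕ → ℕ → ℝ) : Prop :=
  ∀ (m : ℕ) (f g : Fin m → ℕ), StrictMono f → StrictMono g →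
    0 ≤ (Matrix.of fun i j => M (f i) (g j)).det

/-- A recursive matrix with $t_k = 0$, i.e. $a_{n+1,k} = r_k a_{n,k-1} + s_k a_{n,k}$
with nonnegative $r_k, s_k$, is totally positive. -/
theorem recursive_matrix_tp_of_bidiagonal (a : ℕ → ℕ → ℝ) (r s : ℕ → ℝ)
    (hr : ∀ k, 0 ≤ r k) (hs : ∀ k, 0 ≤ s k)
    (ha0 : a 0 0 = 1) (hzero : ∀ n k, n < k → a n k = 0)
    (hrec0 : ∀ n, a (n + 1) 0 = s 0 * a n 0)
    (hrec : ∀ n k, a (n + 1) (k + 1) = r (k + 1) * a n k + s (k + 1) * a n (k + 1)) :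
    IsTotallyPos a := by
  set r' : ℕ → ℝ := fun k => if k = 0 then 0 else r k with hr'def
  have hr' : ∀ k, 0 ≤ r' k := by
    intro k; simp only [r']; split <;> [exact le_rfl; exact hr k]
  have key : ∀ n k, a (n + 1) k = r' k * a n (k - 1) + s k * a n k := by
    intro n k
    cases k with
    | zero => simp [r', hrec0 n]
    | succ k => simp [r', hrec n k]
  suffices aux : ∀ μ m (f g : Fin m → ℕ), StrictMono f → StrictMono g →
      m + ∑ i, f i ≤ μ → 0 ≤ (Matrix.of fun i j => a (f i) (g j)).det by
    intro m f g hf hg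
    exact aux (m + ∑ i, f i) m f g hf hg le_rfl
  intro μ
  induction μ with
  | zero =>
    intro m f g hf hg hμ
    have hm : m = 0 := by omega
    subst hm
    simp [Matrix.det_isEmpty]
  | succ μ ih =>
    intro m f g hf hg hμ
    match m, f, g, hf, hg, hμ with
    | 0, f, g, hf, hg, hμ => simp [Matrix.det_isEmpty]
    | Nat.succ m, f, g, hf, hg, hμ =>
    by_cases hf0 : f 0 = 0
    · by_cases hg0 : g 0 = 0
      · -- expand along row 0
        rw [Matrix.det_succ_row_zero]
        have hrow : ∀ j : Fin (m + 1), j ≠ 0 →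
            (-1 : ℝ) ^ (j : ℕ) * (Matrix.of fun i j => a (f i) (g j)) 0 j *
              ((Matrix.of fun i j => a (f i) (g j)).submatrix Fin.succ j.succAbove).det = 0 := by
          intro j hj
          have : a (f 0) (g j) = 0 := by
            apply hzero
            rw [hf0]
            have : g 0 < g j := hg (Fin.pos_of_ne_zero hj)
            omega
          simp [Matrix.of_apply, this]
        rw [Finset.sum_eq_single 0 (fun j _ hj => hrow j hj) (by simp)]
        have h00 : (Matrix.of fun i j => a (f i) (g j)) 0 0 = 1 := by
          simp [Matrix.of_apply, hf0, hg0, ha0]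
        rw [h00]
        simp only [Fin.val_zero, pow_zero, one_mul, mul_one]
        have hsub : ((Matrix.of fun i j => a (f i) (g j)).submatrix Fin.succ
            (Fin.succAbove 0)) = Matrix.of fun i j : Fin m => a (f i.succ) (g j.succ) := by
          ext i j
          simp [Matrix.submatrix_apply, Fin.zero_succAbove]
        rw [hsub]
        apply ih m (fun i => f i.succ) (fun j => g j.succ)
          (hf.comp (Fin.strictMono_succ)) (hg.comp (Fin.strictMono_succ))
        rw [Fin.sum_univ_succ, hf0] at hμ
        omega
      · -- row 0 is zero
        apply le_of_eq
        symm
        apply Matrix.det_eq_zero_of_row_eq_zero 0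
        intro j
        simp only [Matrix.of_apply]
        apply hzero
        have : g 0 ≤ g j := hg.monotone (Fin.zero_le j)
        omega
    · -- main case: all f i ≥ 1
      have hf1 : ∀ i, 1 ≤ f i := by
        intro i
        have : f 0 ≤ f i := hf.monotone (Fin.zero_le i)
        omega
      set f' : Fin (m + 1) → ℕ := fun i => f i - 1 with hf'def
      have hf' : StrictMono f' := by
        intro i j hij
        have := hf hij
        have := hf1 i
        simp only [f']
        omega
      set hcf : (Fin (m + 1) → Bool) → Fin (m + 1) → ℕ :=
        fun c j => if c j then g j - 1 else g j with hcfdef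
      set w : (Fin (m + 1) → Bool) → Fin (m + 1) → ℝ :=
        fun c j => if c j then r' (g j) else s (g j) with hwdef
      set v : Fin (m + 1) → Bool → (Fin (m + 1) → ℝ) :=
        fun j b i => (if b then r' (g j) else s (g j)) *
          a (f' i) (if b then g j - 1 else g j) with hvdef
      have expand : (Matrix.of fun i j => a (f i) (g j)).det
          = ∑ c : Fin (m + 1) → Bool,
              (∏ j, w c j) * (Matrix.of fun i j => a (f' i) (hcf c j)).det := by
        rw [← Matrix.det_transpose]
        have hT : (Matrix.of fun i j => a (f i) (g j)).transpose
            = fun j => ∑ b : Bool, v j b := by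
          funext j i
          simp only [Matrix.transpose_apply, Matrix.of_apply, Finset.sum_apply,
            Fintype.sum_bool, v, if_true, if_false]
          have hfi : f i = (f i - 1) + 1 := (Nat.succ_pred_eq_of_pos (hf1 i)).symm
          rw [hfi, key]
          simp [f']
        rw [show ((Matrix.of fun i j => a (f i) (g j)).transpose).det
            = (Matrix.detRowAlternating (R := ℝ) (n := Fin (m+1))).toMultilinearMap
                ((Matrix.of fun i j => a (f i) (g j)).transpose) from rfl,
          hT,
          (Matrix.detRowAlternating (R := ℝ) (n := Fin (m+1))).toMultilinearMap.map_sum]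
        apply Finset.sum_congr rfl
        intro c _
        have h1 : (Matrix.detRowAlternating (R := ℝ) (n := Fin (m+1))).toMultilinearMap
              (fun j => v j (c j))
            = Matrix.det (Matrix.of fun j i => w c j *
                (Matrix.of fun j' i' => a (f' i') (hcf c j')) j i) := rfl
        rw [h1, Matrix.det_mul_column]
        rw [← Matrix.det_transpose (Matrix.of fun j i => a (f' i) (hcf c j))]
        rfl
      rw [expand]
      apply Finset.sum_nonneg
      intro c _
      apply mul_nonneg
      · apply Finset.prod_nonneg
        intro j _
        simp only [w]
        split
        · exact hr' _
        · exact hs _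
      · -- the inner determinant is nonnegative
        by_cases hmono : StrictMono (hcf c)
        · apply ih m.succ f' (hcf c) hf' hmono
          have hsum : ∑ i : Fin m.succ, f' i + ∑ _i : Fin m.succ, (1 : ℕ)
              = ∑ i : Fin m.succ, f i := by
            rw [← Finset.sum_add_distrib]
            apply Finset.sum_congr rfl
            intro i _
            have := hf1 i
            simp only [f']
            omega
          simp only [Finset.sum_const, Finset.card_univ, Fintype.card_fin, smul_eq_mul,
            mul_one] at hsum
          omega
        · -- repeated column ⇒ det = 0
          have hmon : Monotone (hcf c) := by
            intro i j hij
            rcases eq_or_lt_of_le hij with h | h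
            · subst h; exact le_rfl
            · have hgg : g i + 1 ≤ g j := hg h
              simp only [hcf]
              split <;> split <;> omega
          have hninj : ¬ Function.Injective (hcf c) := by
            intro hinj
            exact hmono (hmon.strictMono_of_injective hinj)
          rw [Function.not_injective_iff] at hninj
          obtain ⟨i, j, hij, hne⟩ := hninj
          apply le_of_eq
          symm
          apply Matrix.det_zero_of_column_eq hne
          intro k
          simp only [Matrix.of_apply, hij]
end

section
/- A nonnegative lower (or upper) bidiagonal matrix is totally positive: all its minors are nonnegative. -/
open Matrix Finset

lemma bidiag_lower_aux (n : ℕ) (M : Matrix (Fin n) (Fin n) ℝ)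
    (hM : ∀ i j, 0 ≤ M i j)
    (h : ∀ i j : Fin n, (i : ℕ) ≠ (j : ℕ) → (i : ℕ) ≠ (j : ℕ) + 1 → M i j = 0)
    (m : ℕ) (f g : Fin m → Fin n) (hf : StrictMono f) (hg : StrictMono g) :
    0 ≤ (Matrix.of fun i j => M (f i) (g j)).det := by
  rw [Matrix.det_apply]
  rw [Finset.sum_eq_single (1 : Equiv.Perm (Fin m))]
  · simp only [Equiv.Perm.sign_one, one_smul, Equiv.Perm.one_apply, Matrix.of_apply]
    exact Finset.prod_nonneg fun i _ => hM _ _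
  · intro σ _ hσ
    have hprod : (∏ i, (Matrix.of fun i j => M (f i) (g j)) (σ i) i) = 0 := by
      by_contra hp
      have hne : ∀ i, M (f (σ i)) (g i) ≠ 0 := by
        intro i
        have := Finset.prod_ne_zero_iff.mp hp i (Finset.mem_univ i)
        simpa using this
      have hrange : ∀ i : Fin m, (g i : ℕ) ≤ (f (σ i) : ℕ) ∧ (f (σ i) : ℕ) ≤ (g i : ℕ) + 1 := by
        intro i
        by_cases h1 : (f (σ i) : ℕ) = (g i : ℕ)
        · omega
        by_cases h2 : (f (σ i) : ℕ) = (g i : ℕ) + 1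
        · omega
        · exact absurd (h _ _ h1 h2) (hne i)
      have hmono : StrictMono (fun i => σ i) := by
        intro i j hij
        have h1 : (f (σ i) : ℕ) ≤ (g i : ℕ) + 1 := (hrange i).2
        have h2 : (g j : ℕ) ≤ (f (σ j) : ℕ) := (hrange j).1
        have h3 : (g i : ℕ) < (g j : ℕ) := hg hij
        have h4 : (f (σ i) : ℕ) ≤ (f (σ j) : ℕ) := by omega
        have h5 : σ i ≠ σ j := fun e => absurd (σ.injective e) (ne_of_lt hij)
        have h6 : f (σ i) ≠ f (σ j) := fun e => h5 (hf.injective e)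
        have : (f (σ i) : ℕ) < (f (σ j) : ℕ) :=
          lt_of_le_of_ne h4 (fun e => h6 (Fin.ext e))
        exact hf.lt_iff_lt.mp (Fin.lt_def.mpr this)
      have : (fun i => σ i) = id := by
        apply (hmono.range_inj strictMono_id).mp
        simp [Set.range_id, Set.range_eq_univ.mpr σ.surjective]
      exact hσ (Equiv.ext fun i => congrFun this i)
    rw [hprod, smul_zero]
  · intro h1
    exact absurd (Finset.mem_univ _) h1

/-- A nonnegative lower (or upper) bidiagonal matrix is totally positive:
all of its minors are nonnegative. -/
theorem bidiagonal_totally_positive (n : ℕ) (M : Matrix (Fin n) (Fin n) ℝ)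
    (hM : ∀ i j, 0 ≤ M i j)
    (hbi : (∀ i j : Fin n, (i : ℕ) ≠ (j : ℕ) → (i : ℕ) ≠ (j : ℕ) + 1 → M i j = 0) ∨
           (∀ i j : Fin n, (i : ℕ) ≠ (j : ℕ) → (j : ℕ) ≠ (i : ℕ) + 1 → M i j = 0)) :
    ∀ (m : ℕ) (f g : Fin m → Fin n), StrictMono f → StrictMono g →
      0 ≤ (Matrix.of fun i j => M (f i) (g j)).det := by
  intro m f g hf hg
  rcases hbi with h | h
  · exact bidiag_lower_aux n M hM h m f g hf hg
  · have := bidiag_lower_aux n Mᵀ (fun i j => hM j i)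
      (fun i j h1 h2 => h j i (Ne.symm h1) h2) m g f hg hf
    rwa [show (Matrix.of fun i j => Mᵀ (g i) (f j)) = (Matrix.of fun i j => M (f i) (g j))ᵀ
        from rfl, Matrix.det_transpose] at this
end

section
/- Let A be the recursive matrix defined by a_{0,0}=1, a_{n+1,k} = r_k a_{n,k-1} + s_k a_{n,k} + t_{k+1} a_{n,k+1}, with all parameters nonnegative. If s_0 ≥ r_1 and s_k ≥ r_{k+1} + t_k for all k ≥ 1, then A is totally positive. -/
open Matrix

section Aux

lemma det_comb_nonneg {m : ℕ} (X : ℕ → ℕ → ℝ) (f : Fin m → ℕ)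
    (H : ∀ h : Fin m → ℕ, StrictMono h → 0 ≤ (Matrix.of fun i j => X (f i) (h j)).det)
    (c : Fin m → Bool → ℝ) (e : Fin m → Bool → ℕ)
    (hc : ∀ j b, 0 ≤ c j b)
    (he : ∀ (j j' : Fin m) (b b' : Bool), j < j' → e j b ≤ e j' b') :
    0 ≤ (Matrix.of fun i j => ∑ b : Bool, c j b * X (f i) (e j b)).det := by
  rw [← Matrix.det_transpose]
  have hT : (Matrix.of fun i j => ∑ b : Bool, c j b * X (f i) (e j b)).transpose
      = fun j : Fin m => ∑ b : Bool, c j b • (fun i : Fin m => X (f i) (e j b)) := by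
    funext j i
    simp [Matrix.transpose_apply, Finset.sum_apply]
  show 0 ≤ Matrix.detRowAlternating _
  rw [hT]
  rw [show (fun j : Fin m => ∑ b : Bool, c j b • (fun i : Fin m => X (f i) (e j b)))
      = fun j : Fin m => ∑ b : Bool,
        (fun b' : Bool => c j b' • (fun i : Fin m => X (f i) (e j b'))) b from rfl]
  rw [← AlternatingMap.coe_multilinearMap]
  rw [MultilinearMap.map_sum]
  apply Finset.sum_nonneg
  intro κ _
  have := (Matrix.detRowAlternating (R := ℝ) (n := Fin m)).toMultilinearMap.map_smul_univ
    (fun j => c j (κ j)) (fun j => fun i : Fin m => X (f i) (e j (κ j)))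
  simp only [AlternatingMap.coe_multilinearMap] at this ⊢
  rw [this, smul_eq_mul]
  apply mul_nonneg (Finset.prod_nonneg fun j _ => hc j (κ j))
  set μ : Fin m → ℕ := fun j => e j (κ j) with hμ
  by_cases hinj : Function.Injective μ
  · have hmono : Monotone μ := by
      intro j j' hjj'
      rcases lt_or_eq_of_le hjj' with h | h
      · exact he j j' _ _ h
      · exact le_of_eq (by rw [h])
    have hsm : StrictMono μ := hmono.strictMono_of_injective hinj
    have : (Matrix.detRowAlternating (fun j => fun i : Fin m => X (f i) (μ j)))
        = (Matrix.of fun i j => X (f i) (μ j)).det := by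
      rw [← Matrix.det_transpose]
      rfl
    rw [this]
    exact H μ hsm
  · obtain ⟨j, j', hjj', hne⟩ : ∃ j j', μ j = μ j' ∧ j ≠ j' := by
      simp only [Function.Injective] at hinj
      push_neg at hinj
      obtain ⟨j, j', h1, h2⟩ := hinj
      exact ⟨j, j', h1, h2⟩
    have : Matrix.detRowAlternating (fun j => fun i : Fin m => X (f i) (μ j))
        = Matrix.det (Matrix.of fun j i => X (f i) (μ j)) := rfl
    rw [this, Matrix.det_zero_of_row_eq hne]
    funext i; simp [hjj']

lemma det_expand_row0 {m : ℕ} (M : Matrix (Fin (m+1)) (Fin (m+1)) ℝ)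
    (h : ∀ j : Fin (m+1), j ≠ 0 → M 0 j = 0) :
    M.det = M 0 0 * (M.submatrix Fin.succ Fin.succ).det := by
  rw [Matrix.det_succ_row_zero]
  rw [Finset.sum_eq_single 0]
  · simp [Fin.succAbove_zero]
  · intro j _ hj; rw [h j hj]; ring
  · intro hj; exact absurd (Finset.mem_univ 0) hj

noncomputable def luData (r s t : ℕ → ℝ) : ℕ → ℝ × ℝ
  | 0 => if s 0 = 0 then (1, 0) else (s 0, 1)
  | (k+1) =>
      let p := luData r s t k
      let c := s (k+1) - (t (k+1) / p.1) * (p.2 * r (k+1))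
      if c = 0 then (1, 0) else (c, 1)

variable (r s t : ℕ → ℝ)

noncomputable def υ (k : ℕ) : ℝ := (luData r s t k).1
noncomputable def lam (k : ℕ) : ℝ := (luData r s t k).2

variable {r s t}
variable (hr : ∀ k, 0 ≤ r k) (hs : ∀ k, 0 ≤ s k) (ht : ∀ k, 0 ≤ t k)
  (h0 : r 1 ≤ s 0) (hk : ∀ k : ℕ, 1 ≤ k → r (k + 1) + t k ≤ s k)

include hr hs ht h0 hk in
lemma lu_inv : ∀ k, 0 < υ r s t k ∧
    ((lam r s t k = 0 ∧ r (k+1) = 0) ∨ (lam r s t k = 1 ∧ r (k+1) ≤ υ r s t k)) ∧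
    (lam r s t k * υ r s t k + (if k = 0 then 0 else
      (t k / υ r s t (k-1)) * (lam r s t (k-1) * r k)) = s k) := by
  intro k
  induction k with
  | zero =>
    simp only [υ, lam, luData, if_pos, reduceIte]
    by_cases h : s 0 = 0
    · rw [if_pos h]
      refine ⟨one_pos, Or.inl ⟨rfl, le_antisymm (h ▸ h0) (hr 1)⟩, by simp [h]⟩
    · rw [if_neg h]
      exact ⟨lt_of_le_of_ne (hs 0) (Ne.symm h), Or.inr ⟨rfl, h0⟩, by simp⟩
  | succ k ih =>
    obtain ⟨hpos, hlam, heq⟩ := ih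
    set c := s (k+1) - (t (k+1) / υ r s t k) * (lam r s t k * r (k+1)) with hc
    have hd : luData r s t (k+1) = (if c = 0 then ((1:ℝ),(0:ℝ)) else (c,1)) := rfl
    have hbound : (t (k+1) / υ r s t k) * (lam r s t k * r (k+1)) ≤ t (k+1) := by
      rcases hlam with ⟨hl0, hr0⟩ | ⟨hl1, hrle⟩
      · rw [hl0]; simp [ht (k+1)]
      · rw [hl1, one_mul, div_mul_eq_mul_div, mul_comm, div_le_iff₀ hpos]
        have := mul_le_mul_of_nonneg_left hrle (ht (k+1))
        calc r (k+1) * t (k+1) = t (k+1) * r (k+1) := mul_comm _ _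
          _ ≤ t (k+1) * υ r s t k := this
    have hnonneg : (0:ℝ) ≤ (t (k+1) / υ r s t k) * (lam r s t k * r (k+1)) := by
      apply mul_nonneg (div_nonneg (ht (k+1)) (le_of_lt hpos))
      rcases hlam with ⟨hl0, _⟩ | ⟨hl1, _⟩
      · rw [hl0]; simp
      · rw [hl1]; simpa using hr (k+1)
    have hcge : r (k+2) ≤ c := by
      have h1 : r (k+2) + t (k+1) ≤ s (k+1) := hk (k+1) (Nat.le_add_left 1 k)
      rw [hc]; linarith
    have hcnn : 0 ≤ c := le_trans (hr (k+2)) hcge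
    have hυs : υ r s t (k+1) = (if c = 0 then ((1:ℝ),(0:ℝ)) else (c,1)).1 := by rw [υ, hd]
    have hls : lam r s t (k+1) = (if c = 0 then ((1:ℝ),(0:ℝ)) else (c,1)).2 := by rw [lam, hd]
    by_cases hcz : c = 0
    · rw [if_pos hcz] at hυs hls
      refine ⟨by rw [hυs]; exact one_pos, Or.inl ⟨hls, le_antisymm (hcz ▸ hcge) (hr (k+2))⟩, ?_⟩
      rw [hυs, hls]
      simp only [Nat.add_sub_cancel, if_neg (Nat.succ_ne_zero k)]
      have h2 : (t (k+1) / υ r s t k) * (lam r s t k * r (k+1)) = s (k+1) - c := by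
        rw [hc]; ring
      rw [h2, hcz]; ring
    · rw [if_neg hcz] at hυs hls
      have hcpos : 0 < c := lt_of_le_of_ne hcnn (Ne.symm hcz)
      refine ⟨hυs ▸ hcpos, Or.inr ⟨hls, hυs ▸ hcge⟩, ?_⟩
      rw [hυs, hls, one_mul]
      simp only [Nat.add_sub_cancel, if_neg (Nat.succ_ne_zero k)]
      rw [hc]; ring

end Aux

/-- If $s_0 \ge r_1$ and $s_k \ge r_{k+1} + t_k$ for all $k \ge 1$,
then the recursive matrix is totally positive. -/
theorem recursive_matrix_tp_of_rowDominant (a : ℕ → ℕ → ℝ) (r s t : ℕ → ℝ)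
    (hr : ∀ k, 0 ≤ r k) (hs : ∀ k, 0 ≤ s k) (ht : ∀ k, 0 ≤ t k)
    (ha0 : a 0 0 = 1) (hzero : ∀ n k, n < k → a n k = 0)
    (hrec0 : ∀ n, a (n + 1) 0 = s 0 * a n 0 + t 1 * a n 1)
    (hrec : ∀ n k, a (n + 1) (k + 1)
      = r (k + 1) * a n k + s (k + 1) * a n (k + 1) + t (k + 2) * a n (k + 2))
    (h0 : r 1 ≤ s 0) (hk : ∀ k : ℕ, 1 ≤ k → r (k + 1) + t k ≤ s k) :
    IsTotallyPos a := by
  classical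
  have inv := lu_inv hr hs ht h0 hk
  set A1 : ℕ → ℕ → ℝ :=
    fun n k => lam r s t k * a n k + t (k+1) / υ r s t k * a n (k+1) with hA1def
  have hne : ∀ k, υ r s t k ≠ 0 := fun k => ne_of_gt (inv k).1
  have hlamnn : ∀ k, (0:ℝ) ≤ lam r s t k := by
    intro k
    rcases (inv k).2.1 with ⟨h, _⟩ | ⟨h, _⟩ <;> rw [h] <;> norm_num
  have entry2 : ∀ n k, υ r s t k * A1 n k + (if k = 0 then (0:ℝ) else
      (lam r s t (k-1) * r k) * A1 n (k-1)) = a (n+1) k := by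
    intro n k
    cases k with
    | zero =>
      simp only [if_pos, reduceIte, add_zero, hA1def]
      rw [hrec0 n]
      have h00 := (inv 0).2.2
      simp only [reduceIte, add_zero] at h00
      have e10 : υ r s t 0 * (t 1 / υ r s t 0) = t 1 := by
        rw [mul_comm]; exact div_mul_cancel₀ _ (hne 0)
      linear_combination (a n 0) * h00 + (a n 1) * e10
    | succ k' =>
      simp only [if_neg (Nat.succ_ne_zero k'), Nat.add_sub_cancel, hA1def]
      rw [hrec n k']
      have h := (inv (k'+1)).2.2
      simp only [if_neg (Nat.succ_ne_zero k'), Nat.add_sub_cancel] at h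
      have hl2 : lam r s t k' * lam r s t k' * r (k'+1) = r (k'+1) := by
        rcases (inv k').2.1 with ⟨hl0, hr0⟩ | ⟨hl1, _⟩
        · rw [hl0, hr0]; ring
        · rw [hl1]; ring
      have e1 : υ r s t (k'+1) * (t (k'+2) / υ r s t (k'+1)) = t (k'+2) := by
        rw [mul_comm]; exact div_mul_cancel₀ _ (hne (k'+1))
      linear_combination (a n (k'+1)) * h + (a n k') * hl2 + (a n (k'+2)) * e1
  have key : ∀ N (m : ℕ) (f g : Fin m → ℕ), StrictMono f → StrictMono g →
      (∀ i, f i ≤ N) → 0 ≤ (Matrix.of fun i j => a (f i) (g j)).det := by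
    intro N
    induction N using Nat.strong_induction_on with
    | _ N IH =>
    intro m f g hf hg hbound
    have posRows : ∀ (m' : ℕ) (f' g' : Fin m' → ℕ), StrictMono f' → StrictMono g' →
        (∀ i, 1 ≤ f' i) → (∀ i, f' i ≤ N) →
        0 ≤ (Matrix.of fun i j => a (f' i) (g' j)).det := by
      intro m' f' g' hf' hg' h1 hN
      rcases Nat.eq_zero_or_pos m' with hm | hm
      · subst hm
        rw [Matrix.det_fin_zero]
        exact zero_le_one
      · have hN1 : 1 ≤ N := le_trans (h1 ⟨0, hm⟩) (hN ⟨0, hm⟩)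
        set f0 : Fin m' → ℕ := fun i => f' i - 1 with hf0
        have hf0m : StrictMono f0 := by
          intro i j hij
          have h2 := hf' hij
          have h3 := h1 i
          simp only [hf0]
          omega
        have H0 : ∀ h : Fin m' → ℕ, StrictMono h →
            0 ≤ (Matrix.of fun i j => a (f0 i) (h j)).det := by
          intro h hh
          exact IH (N-1) (by omega) m' f0 h hf0m hh
            (fun i => by have := hN i; have := h1 i; simp only [hf0]; omega)
        have H1 : ∀ h : Fin m' → ℕ, StrictMono h →
            0 ≤ (Matrix.of fun i j => A1 (f0 i) (h j)).det := by
          intro h hh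
          have hcb := det_comb_nonneg a f0 H0
            (fun j b => cond b (lam r s t (h j)) (t (h j + 1) / υ r s t (h j)))
            (fun j b => cond b (h j) (h j + 1))
            (by
              intro j b
              cases b
              · exact div_nonneg (ht _) (le_of_lt (inv (h j)).1)
              · exact hlamnn (h j))
            (by
              intro j j' b b' hjj'
              have := hh hjj'
              cases b <;> cases b' <;> simp only [Bool.cond_true, Bool.cond_false] <;> omega)
          have hEq : (Matrix.of fun i j => A1 (f0 i) (h j))
              = (Matrix.of fun (i j : Fin m') => ∑ b : Bool,
                (cond b (lam r s t (h j)) (t (h j + 1) / υ r s t (h j))) *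
                  a (f0 i) (cond b (h j) (h j + 1))) := by
            ext i j
            rw [Matrix.of_apply, Matrix.of_apply, Fintype.sum_bool]
            simp only [Bool.cond_true, Bool.cond_false, hA1def]
          rw [hEq]
          exact hcb
        have H2 := det_comb_nonneg A1 f0 H1
          (fun j b => cond b (υ r s t (g' j))
            (if g' j = 0 then 0 else lam r s t (g' j - 1) * r (g' j)))
          (fun j b => cond b (g' j) (g' j - 1))
          (by
            intro j b
            cases b
            · by_cases hz : g' j = 0
              · simp [hz]
              · simp only [Bool.cond_false, if_neg hz]
                exact mul_nonneg (hlamnn _) (hr _)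
            · exact le_of_lt (inv (g' j)).1)
          (by
            intro j j' b b' hjj'
            have := hg' hjj'
            cases b <;> cases b' <;> simp only [Bool.cond_true, Bool.cond_false] <;> omega)
        have hfe : ∀ i, f0 i + 1 = f' i := fun i => by
          have := h1 i; simp only [hf0]; omega
        have hEq2 : (Matrix.of fun i j => a (f' i) (g' j))
            = (Matrix.of fun (i j : Fin m') => ∑ b : Bool,
              (cond b (υ r s t (g' j))
                (if g' j = 0 then 0 else lam r s t (g' j - 1) * r (g' j))) *
              A1 (f0 i) (cond b (g' j) (g' j - 1))) := by
          ext i j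
          rw [Matrix.of_apply, Matrix.of_apply, Fintype.sum_bool]
          simp only [Bool.cond_true, Bool.cond_false]
          rw [← hfe i, ← entry2 (f0 i) (g' j)]
          by_cases hz : g' j = 0
          · simp [hz]
          · rw [if_neg hz, if_neg hz]
        rw [hEq2]
        exact H2
    rcases Nat.eq_zero_or_pos m with hm | hm
    · subst hm
      rw [Matrix.det_fin_zero]
      exact zero_le_one
    · obtain ⟨m', rfl⟩ : ∃ m', m = m' + 1 := ⟨m - 1, by omega⟩
      by_cases hf0 : f 0 = 0
      · by_cases hg0 : g 0 = 0
        · have hrow : ∀ j : Fin (m'+1), j ≠ 0 →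
              (Matrix.of fun i j => a (f i) (g j)) 0 j = 0 := by
            intro j hj
            have hgj : 0 < g j := by
              have : g 0 < g j := hg (Fin.pos_of_ne_zero hj)
              omega
            rw [Matrix.of_apply, hf0]
            exact hzero 0 (g j) hgj
          rw [det_expand_row0 _ hrow]
          have h00 : (Matrix.of fun i j => a (f i) (g j)) 0 0 = 1 := by
            rw [Matrix.of_apply, hf0, hg0, ha0]
          rw [h00, one_mul]
          have hsub : ((Matrix.of fun i j => a (f i) (g j)).submatrix Fin.succ Fin.succ)
              = (Matrix.of fun (i j : Fin m') => a (f i.succ) (g j.succ)) := rfl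
          rw [hsub]
          exact posRows m' (fun i => f i.succ) (fun j => g j.succ)
            (fun i j hij => hf (by simpa using hij))
            (fun i j hij => hg (by simpa using hij))
            (fun i => by
              show 1 ≤ f i.succ
              have h2 : f 0 < f i.succ := hf (Fin.succ_pos i)
              omega)
            (fun i => hbound i.succ)
        · apply le_of_eq
          symm
          apply Matrix.det_eq_zero_of_row_eq_zero 0
          intro j
          have hgj : 0 < g j := by
            have h2 : g 0 ≤ g j := hg.monotone (Fin.zero_le j)
            omega
          rw [Matrix.of_apply, hf0]
          exact hzero 0 (g j) hgj
      · have h1 : ∀ i, 1 ≤ f i := by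
          intro i
          have h2 : f 0 ≤ f i := hf.monotone (Fin.zero_le i)
          omega
        exact posRows (m'+1) f g hf hg h1 hbound
  intro m f g hf hg
  exact key (Finset.univ.sup f) m f g hf hg (fun i => Finset.le_sup (Finset.mem_univ i))
end

section
/- Let A be the recursive matrix defined by a_{0,0}=1, a_{n+1,k} = r_k a_{n,k-1} + s_k a_{n,k} + t_{k+1} a_{n,k+1}, with all parameters nonnegative. If s_0 ≥ t_1 and s_k ≥ r_k + t_{k+1} for all k ≥ 1, then A is totally positive. -/
open Matrix in
/-- If all minors with strictly increasing row selections are nonnegative,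
so are those with merely monotone row selections (repeats give determinant zero). -/
private lemma det_row_select_nonneg {m : ℕ} (w : ℕ → Fin m → ℝ)
    (hw : ∀ p : Fin m → ℕ, StrictMono p → 0 ≤ (Matrix.of fun j i => w (p j) i).det)
    (p : Fin m → ℕ) (hp : Monotone p) :
    0 ≤ (Matrix.of fun j i => w (p j) i).det := by
  by_cases hinj : Function.Injective p
  · exact hw p (hp.strictMono_of_injective hinj)
  · obtain ⟨j, j', hjj, hne⟩ := Function.not_injective_iff.mp hinj
    have : (Matrix.of fun j i => w (p j) i).det = 0 := by
      apply Matrix.det_zero_of_row_eq hne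
      show (fun i => w (p j) i) = fun i => w (p j') i
      rw [hjj]
    rw [this]

open Matrix in
/-- Determinants whose rows are single rows `w k` or "pair" rows `w k + w (k+1)`,
selected along a monotone pattern, are nonnegative provided all strictly increasing
row minors of `w` are nonnegative. -/
private lemma det_pair_rows_nonneg {m : ℕ} (w : ℕ → Fin m → ℝ)
    (hw : ∀ p : Fin m → ℕ, StrictMono p → 0 ≤ (Matrix.of fun j i => w (p j) i).det)
    (ι : Fin m → ℕ) (hι : Monotone ι) :
    0 ≤ (Matrix.of fun j i =>
      (if ι j % 2 = 0 then w (ι j / 2) else w (ι j / 2) + w (ι j / 2 + 1)) i).det := by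
  set v : ℕ → Fin m → ℝ :=
    fun h => if h % 2 = 0 then w (h / 2) else w (h / 2) + w (h / 2 + 1) with hv
  show 0 ≤ (Matrix.of fun j i => v (ι j) i).det
  apply det_row_select_nonneg v _ ι hι
  intro ι hιs
  have hrow : ∀ j, v (ι j) = ∑ p ∈ Finset.Icc (ι j / 2) ((ι j + 1) / 2), w p := by
    intro j
    rcases Nat.even_or_odd' (ι j) with ⟨k, hk | hk⟩
    · have h1 : ι j % 2 = 0 := by omega
      have h2 : ι j / 2 = k := by omega
      have h3 : (ι j + 1) / 2 = k := by omega
      rw [hv]; simp [h1, h2, h3]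
    · have h1 : ¬ (ι j % 2 = 0) := by omega
      have h2 : ι j / 2 = k := by omega
      have h3 : (ι j + 1) / 2 = k + 1 := by omega
      rw [hv]; simp only [h1, if_false, h2, h3]
      rw [show Finset.Icc k (k + 1) = {k, k + 1} by ext x; simp [Finset.mem_Icc]; omega]
      rw [Finset.sum_insert (by simp), Finset.sum_singleton]
  have key : (Matrix.of fun j i => v (ι j) i).det
      = Matrix.detRowAlternating.toMultilinearMap
          (fun j => ∑ p ∈ Finset.Icc (ι j / 2) ((ι j + 1) / 2), w p) := by
    congr 1
    funext j
    exact hrow j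
  rw [key, MultilinearMap.map_sum_finset]
  apply Finset.sum_nonneg
  intro c hc
  rw [Fintype.mem_piFinset] at hc
  have hmono : Monotone c := by
    intro j j' hle
    rcases eq_or_lt_of_le hle with h | h
    · rw [h]
    · have h1 := hc j
      have h2 := hc j'
      simp only [Finset.mem_Icc] at h1 h2
      have := hιs h
      omega
  exact det_row_select_nonneg w hw c hmono

open Matrix in
/-- If $s_0 \ge t_1$ and $s_k \ge r_k + t_{k+1}$ for all $k \ge 1$,
then the recursive matrix is totally positive. -/
theorem recursive_matrix_tp_of_colDominant (a : ℕ → ℕ → ℝ) (r s t : ℕ → ℝ)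
    (hr : ∀ k, 0 ≤ r k) (hs : ∀ k, 0 ≤ s k) (ht : ∀ k, 0 ≤ t k)
    (ha0 : a 0 0 = 1) (hzero : ∀ n k, n < k → a n k = 0)
    (hrec0 : ∀ n, a (n + 1) 0 = s 0 * a n 0 + t 1 * a n 1)
    (hrec : ∀ n k, a (n + 1) (k + 1)
      = r (k + 1) * a n k + s (k + 1) * a n (k + 1) + t (k + 2) * a n (k + 2))
    (h0 : t 1 ≤ s 0) (hk : ∀ k : ℕ, 1 ≤ k → r k + t (k + 1) ≤ s k) :
    IsTotallyPos a := by
  suffices H : ∀ N (m : ℕ) (f g : Fin m → ℕ), StrictMono f → StrictMono g →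
      m + ∑ i, f i ≤ N → 0 ≤ (Matrix.of fun i j => a (f i) (g j)).det by
    intro m f g hf hg
    exact H (m + ∑ i, f i) m f g hf hg le_rfl
  intro N
  induction N with
  | zero =>
    intro m f g hf hg hm
    have : m = 0 := by omega
    subst this
    simp [Matrix.det_isEmpty]
  | succ N IH =>
    rintro (_ | m') f g hf hg hm
    · simp [Matrix.det_isEmpty]
    rcases Nat.eq_zero_or_pos (f 0) with hf0 | hf0
    · -- the first selected row is row 0 of `a`, which is `e₀`
      by_cases hg0 : g 0 = 0
      · rw [Matrix.det_succ_row_zero]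
        have hterm : ∀ j : Fin (m' + 1), j ∈ Finset.univ → j ≠ 0 →
            (-1 : ℝ) ^ (j : ℕ) * (Matrix.of fun i j => a (f i) (g j)) 0 j *
              ((Matrix.of fun i j => a (f i) (g j)).submatrix Fin.succ j.succAbove).det = 0 := by
          intro j _ hj
          have hpos : (0 : Fin (m' + 1)) < j := Fin.pos_of_ne_zero hj
          have hgj : 0 < g j := by
            have := hg hpos
            omega
          have : a (f 0) (g j) = 0 := by
            apply hzero
            omega
          simp [this]
        rw [Finset.sum_eq_single_of_mem 0 (Finset.mem_univ _) hterm]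
        have h00 : (Matrix.of fun i j => a (f i) (g j)) 0 0 = 1 := by
          simp [hf0, hg0, ha0]
        rw [h00]
        simp only [Fin.val_zero, pow_zero, one_mul, Fin.succAbove_zero]
        have e : ((Matrix.of fun i j => a (f i) (g j)).submatrix Fin.succ Fin.succ)
            = Matrix.of fun i j => a (f (Fin.succ i)) (g (Fin.succ j)) := rfl
        rw [e]
        apply IH
        · exact hf.comp Fin.strictMono_succ
        · exact hg.comp Fin.strictMono_succ
        · have := Fin.sum_univ_succ f
          omega
      · have : (Matrix.of fun i j => a (f i) (g j)).det = 0 := by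
          apply Matrix.det_eq_zero_of_row_eq_zero 0
          intro j
          have hgj : 0 < g j := by
            have := hg.monotone (Fin.zero_le j)
            omega
          exact hzero _ _ (by omega)
        rw [this]
    · -- all selected rows are ≥ 1 : use the recurrence
      have hf1 : ∀ i, 1 ≤ f i := fun i => le_trans hf0 (hf.monotone (Fin.zero_le i))
      set f' : Fin (m' + 1) → ℕ := fun i => f i - 1 with hf'def
      have hf's : StrictMono f' := by
        intro i i' h
        have h1 := hf h
        have h2 := hf1 i
        simp only [hf'def]
        omega
      set w : ℕ → Fin (m' + 1) → ℝ := fun k i => a (f' i) k with hwdef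
      set v : ℕ → Fin (m' + 1) → ℝ :=
        fun h => if h % 2 = 0 then w (h / 2) else w (h / 2) + w (h / 2 + 1) with hvdef
      set coef : Fin (m' + 1) → ℕ → ℝ := fun j q =>
        if g j = 0 then (if q = 0 then s 0 - t 1 else if q = 1 then t 1 else 0)
        else (if q = 0 then r (g j) else if q = 1 then s (g j) - r (g j) - t (g j + 1)
          else if q = 2 then t (g j + 1) else 0) with hcdef
      set idx : Fin (m' + 1) → ℕ → ℕ := fun j q => 2 * g j - 1 + q with hidef
      have hcoef : ∀ j q, 0 ≤ coef j q := by
        intro j q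
        simp only [hcdef]
        split_ifs with h1 h2 h3 h4 h5 h6
        · linarith [h0]
        · exact ht 1
        · exact le_refl 0
        · exact hr _
        · have := hk (g j) (by omega)
          linarith
        · exact ht _
        · exact le_refl 0
      have hw : ∀ p : Fin (m' + 1) → ℕ, StrictMono p →
          0 ≤ (Matrix.of fun j i => w (p j) i).det := by
        intro p hp
        have e : (Matrix.of fun j i => w (p j) i) = (Matrix.of fun i j => a (f' i) (p j))ᵀ := rfl
        rw [e, Matrix.det_transpose]
        apply IH _ f' p hf's hp
        have hsum : ∑ i, f' i + (m' + 1) = ∑ i, f i := by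
          calc ∑ i, f' i + (m' + 1) = ∑ i : Fin (m' + 1), (f' i + 1) := by
                rw [Finset.sum_add_distrib]; simp
            _ = ∑ i, f i := Finset.sum_congr rfl (fun i _ => by
                have := hf1 i; simp only [hf'def]; omega)
        omega
      have hrow : ∀ j, (fun i => a (f i) (g j))
          = ∑ q ∈ Finset.range 3, coef j q • v (idx j q) := by
        intro j
        funext i
        have hfi : f i = f' i + 1 := by have := hf1 i; simp only [hf'def]; omega
        simp only [Finset.sum_apply, Pi.smul_apply, smul_eq_mul]
        rw [Finset.sum_range_succ, Finset.sum_range_succ, Finset.sum_range_one]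
        rcases Nat.eq_zero_or_pos (g j) with hgj | hgj
        · rw [hgj, hfi, hrec0]
          have e0 : idx j 0 = 0 := by simp [hidef, hgj]
          have e1 : idx j 1 = 1 := by simp [hidef, hgj]
          have e2 : idx j 2 = 2 := by simp [hidef, hgj]
          rw [e0, e1, e2]
          have v0 : v 0 = w 0 := by simp [hvdef]
          have v1 : v 1 = w 0 + w 1 := by norm_num [hvdef]
          rw [v0, v1]
          simp only [hcdef, hgj, if_pos rfl]
          norm_num
          ring
        · obtain ⟨k, hgj'⟩ : ∃ k, g j = k + 1 := ⟨g j - 1, by omega⟩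
          rw [hgj', hfi, hrec]
          have e0 : idx j 0 = 2 * k + 1 := by simp only [hidef, hgj']; omega
          have e1 : idx j 1 = 2 * k + 2 := by simp only [hidef, hgj']; omega
          have e2 : idx j 2 = 2 * k + 3 := by simp only [hidef, hgj']; omega
          rw [e0, e1, e2]
          have v0 : v (2 * k + 1) = w k + w (k + 1) := by
            have h1 : ¬((2 * k + 1) % 2 = 0) := by omega
            have h2 : (2 * k + 1) / 2 = k := by omega
            simp [hvdef, h1, h2]
          have v1 : v (2 * k + 2) = w (k + 1) := by
            have h1 : (2 * k + 2) % 2 = 0 := by omega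
            have h2 : (2 * k + 2) / 2 = k + 1 := by omega
            simp [hvdef, h1, h2]
          have v2 : v (2 * k + 3) = w (k + 1) + w (k + 2) := by
            have h1 : ¬((2 * k + 3) % 2 = 0) := by omega
            have h2 : (2 * k + 3) / 2 = k + 1 := by omega
            simp [hvdef, h1, h2]
          rw [v0, v1, v2]
          simp only [hcdef, hgj']
          norm_num
          simp only [hwdef, Pi.add_apply]
          ring
      rw [show (Matrix.of fun i j => a (f i) (g j))
          = (Matrix.of fun j i => a (f i) (g j))ᵀ from rfl, Matrix.det_transpose]
      have key : (Matrix.of fun j i => a (f i) (g j))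
          = (fun j => ∑ q ∈ Finset.range 3, coef j q • v (idx j q)) := by
        funext j
        exact hrow j
      rw [key]
      show 0 ≤ Matrix.detRowAlternating.toMultilinearMap
          (fun j => ∑ q ∈ Finset.range 3, coef j q • v (idx j q))
      rw [MultilinearMap.map_sum_finset]
      apply Finset.sum_nonneg
      intro c hc
      rw [Fintype.mem_piFinset] at hc
      rw [MultilinearMap.map_smul_univ]
      by_cases hcz : ∀ j, coef j (c j) ≠ 0
      · apply smul_nonneg (Finset.prod_nonneg fun j _ => hcoef j (c j))
        have hmono : Monotone (fun j => idx j (c j)) := by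
          intro j j' hle
          rcases eq_or_lt_of_le hle with h | h
          · rw [h]
          · have hgg := hg h
            have hcj : c j < 3 := Finset.mem_range.mp (hc j)
            have hcj' : c j' < 3 := Finset.mem_range.mp (hc j')
            have hub : c j ≤ 2 ∧ (g j = 0 → c j ≤ 1) := by
              constructor
              · omega
              · intro h0'
                by_contra hcon
                apply hcz j
                have : c j = 2 := by omega
                simp [hcdef, h0', this]
            simp only [hidef]
            omega
        exact det_pair_rows_nonneg w hw (fun j => idx j (c j)) hmono
      · push_neg at hcz
        obtain ⟨j, hj⟩ := hcz
        rw [Finset.prod_eq_zero (Finset.mem_univ j) hj, zero_smul]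
end

section
/- Let A be the recursive matrix defined by a_{0,0}=1, a_{n+1,k} = r_k a_{n,k-1} + s_k a_{n,k} + t_{k+1} a_{n,k+1}, with all parameters nonnegative. If s_0 ≥ 1 and s_k ≥ r_k t_k + 1 for all k ≥ 1, then A is totally positive. -/
/-- Mixed-column expansion lemma: if every "pure" minor (monotone column choice) of the
row system `A` is nonnegative, then so is the determinant of a matrix whose columns are
nonnegative combinations of column `g j` and column `τ (g j)`, provided all pure choices
stay monotone. -/
lemma det_mix_nonneg {m : ℕ} (A : Fin m → ℕ → ℝ) (α β : ℕ → ℝ) (τ : ℕ → ℕ)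
    (g : Fin m → ℕ) (hα : ∀ k, 0 ≤ α k) (hβ : ∀ k, 0 ≤ β k)
    (hmono : ∀ c : Fin m → Bool, Monotone fun j => if c j then τ (g j) else g j)
    (H : ∀ h : Fin m → ℕ, Monotone h → 0 ≤ (Matrix.of fun i j => A i (h j)).det) :
    0 ≤ (Matrix.of fun i j => α (g j) * A i (g j) + β (g j) * A i (τ (g j))).det := by
  set M : ℕ → (Fin m → Bool) → Matrix (Fin m) (Fin m) ℝ := fun l c =>
    Matrix.of fun i j => if l ≤ (j : ℕ) then A i (if c j then τ (g j) else g j)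
      else α (g j) * A i (g j) + β (g j) * A i (τ (g j)) with hM
  have claim : ∀ l c, 0 ≤ (M l c).det := by
    intro l
    induction l with
    | zero =>
      intro c
      have : M 0 c = Matrix.of fun i j => A i ((fun j => if c j then τ (g j) else g j) j) := by
        ext i j
        simp [hM]
      rw [this]
      exact H _ (hmono c)
    | succ l IH =>
      intro c
      by_cases hl : l < m
      · set j0 : Fin m := ⟨l, hl⟩ with hj0
        have key : M (l + 1) c = Matrix.updateCol (M l c) j0
            (fun i => α (g j0) * A i (g j0) + β (g j0) * A i (τ (g j0))) := by
          ext i j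
          by_cases hj : j = j0
          · subst hj
            simp [hM, Matrix.updateCol_self, hj0]
          · rw [Matrix.updateCol_ne hj]
            have hjl : (j : ℕ) ≠ l := by
              intro h; exact hj (Fin.ext h)
            have : (l + 1 ≤ (j : ℕ)) ↔ (l ≤ (j : ℕ)) := by omega
            simp only [hM, Matrix.of_apply]
            rw [if_congr this rfl rfl]
        have e1 : Matrix.updateCol (M l c) j0 (fun i => A i (g j0))
            = M l (Function.update c j0 false) := by
          ext i j
          by_cases hj : j = j0
          · subst hj
            simp [hM, Matrix.updateCol_self, hj0]
          · rw [Matrix.updateCol_ne hj]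
            simp only [hM, Matrix.of_apply, Function.update_of_ne hj]
        have e2 : Matrix.updateCol (M l c) j0 (fun i => A i (τ (g j0)))
            = M l (Function.update c j0 true) := by
          ext i j
          by_cases hj : j = j0
          · subst hj
            simp [hM, Matrix.updateCol_self, hj0]
          · rw [Matrix.updateCol_ne hj]
            simp only [hM, Matrix.of_apply, Function.update_of_ne hj]
        rw [key]
        have : (fun i => α (g j0) * A i (g j0) + β (g j0) * A i (τ (g j0)))
            = (α (g j0) • fun i => A i (g j0)) + (β (g j0) • fun i => A i (τ (g j0))) := by
          funext i; simp [mul_comm]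
        rw [this, Matrix.det_updateCol_add, Matrix.det_updateCol_smul,
          Matrix.det_updateCol_smul, e1, e2]
        exact add_nonneg (mul_nonneg (hα _) (IH _)) (mul_nonneg (hβ _) (IH _))
      · have : M (l + 1) c = M l c := by
          ext i j
          have h1 : ¬ (l + 1 ≤ (j : ℕ)) := by omega
          have h2 : ¬ (l ≤ (j : ℕ)) := by have := j.isLt; omega
          simp [hM, h1, h2]
        rw [this]
        exact IH c
  have : (Matrix.of fun i j => α (g j) * A i (g j) + β (g j) * A i (τ (g j)))
      = M m (fun _ => false) := by
    ext i j
    have : ¬ (m ≤ (j : ℕ)) := by have := j.isLt; omega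
    simp [hM, this]
  rw [this]
  exact claim m _


noncomputable def recUAux (r s t : ℕ → ℝ) : ℕ → ℝ
  | 0 => s 0
  | k + 1 => s (k + 1) - r (k + 1) * t (k + 1) / recUAux r s t k

lemma recUAux_one_le (r s t : ℕ → ℝ) (hr : ∀ k, 0 ≤ r k) (ht : ∀ k, 0 ≤ t k)
    (h0 : 1 ≤ s 0) (hk : ∀ k : ℕ, 1 ≤ k → r k * t k + 1 ≤ s k) :
    ∀ k, 1 ≤ recUAux r s t k := by
  intro k
  induction k with
  | zero => exact h0
  | succ k IH =>
    have h1 : r (k + 1) * t (k + 1) / recUAux r s t k ≤ r (k + 1) * t (k + 1) :=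
      div_le_self (mul_nonneg (hr _) (ht _)) IH
    have h2 := hk (k + 1) (by omega)
    show 1 ≤ s (k + 1) - r (k + 1) * t (k + 1) / recUAux r s t k
    linarith

/-- A monotone non-strictly-monotone map has a repeat. -/
lemma exists_eq_of_not_strictMono {m : ℕ} {g : Fin m → ℕ} (hg : Monotone g)
    (h : ¬ StrictMono g) : ∃ j j' : Fin m, j ≠ j' ∧ g j = g j' := by
  rw [StrictMono] at h
  push_neg at h
  obtain ⟨j, j', hlt, hnot⟩ := h
  exact ⟨j, j', ne_of_lt hlt, le_antisymm (hg hlt.le) hnot⟩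

lemma recursive_matrix_minor (a : ℕ → ℕ → ℝ) (r s t : ℕ → ℝ)
    (hr : ∀ k, 0 ≤ r k) (hs : ∀ k, 0 ≤ s k) (ht : ∀ k, 0 ≤ t k)
    (ha0 : a 0 0 = 1) (hzero : ∀ n k, n < k → a n k = 0)
    (hrec0 : ∀ n, a (n + 1) 0 = s 0 * a n 0 + t 1 * a n 1)
    (hrec : ∀ n k, a (n + 1) (k + 1)
      = r (k + 1) * a n k + s (k + 1) * a n (k + 1) + t (k + 2) * a n (k + 2))
    (h0 : 1 ≤ s 0) (hk : ∀ k : ℕ, 1 ≤ k → r k * t k + 1 ≤ s k) :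
    ∀ (N n m : ℕ) (f g : Fin m → ℕ), n + m ≤ N → StrictMono f → Monotone g →
      (∀ i, f i ≤ n) → 0 ≤ (Matrix.of fun i j => a (f i) (g j)).det := by
  -- setup: the LU data
  set u : ℕ → ℝ := recUAux r s t with hudef
  have hu : ∀ k, 1 ≤ u k := recUAux_one_le r s t hr ht h0 hk
  have hupos : ∀ k, (0 : ℝ) < u k := fun k => lt_of_lt_of_le one_pos (hu k)
  have hune : ∀ k, u k ≠ 0 := fun k => (hupos k).ne'
  set v : ℕ → ℕ → ℝ := fun n k => a n k + t (k + 1) / u k * a n (k + 1) with hvdef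
  have key : ∀ n k, a (n + 1) k = u k * v n k + (if k = 0 then (0:ℝ) else r k * v n (k - 1)) := by
    intro n k
    cases k with
    | zero =>
      have hu0 : u 0 = s 0 := rfl
      simp only [hvdef, if_pos rfl, add_zero, hu0, hrec0]
      have hs0 : s 0 ≠ 0 := by have := h0; intro h; rw [h] at this; linarith
      field_simp
      simp
    | succ k =>
      have huk : u (k + 1) = s (k + 1) - r (k + 1) * t (k + 1) / u k := rfl
      simp only [hvdef, if_neg (Nat.succ_ne_zero k), Nat.succ_sub_one, hrec]
      have c1 : u (k + 1) * (t (k + 2) / u (k + 1) * a n (k + 2)) = t (k + 2) * a n (k + 2) := by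
        rw [← mul_assoc, mul_div_cancel₀ _ (hune (k + 1))]
      rw [mul_add, c1, huk]
      field_simp
      ring
  intro N
  induction N with
  | zero =>
    intro n m f g hN hf hg hfn
    have hm : m = 0 := by omega
    subst hm
    rw [Matrix.det_isEmpty]
    exact zero_le_one
  | succ N IH =>
    intro n m f g hN hf hg hfn
    rcases m with _ | m
    · rw [Matrix.det_isEmpty]; exact zero_le_one
    by_cases hsg : StrictMono g
    · by_cases hf0 : f 0 = 0
      · by_cases hg0 : g 0 = 0
        · -- expand along the first row, which is e₀
          rw [Matrix.det_succ_row_zero]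
          rw [Finset.sum_eq_single 0]
          · simp only [Fin.val_zero, pow_zero, one_mul, Matrix.of_apply, hf0, hg0, ha0,
              Fin.succAbove_zero]
            have hsub : ((Matrix.of fun i j => a (f i) (g j)).submatrix Fin.succ Fin.succ)
                = Matrix.of fun (i : Fin m) (j : Fin m) =>
                  a ((f ∘ Fin.succ) i) ((g ∘ Fin.succ) j) := rfl
            rw [hsub]
            exact IH n m (f ∘ Fin.succ) (g ∘ Fin.succ) (by omega)
              (hf.comp Fin.strictMono_succ) (hg.comp Fin.strictMono_succ.monotone)
              (fun i => hfn _)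
          · intro b _ hb
            have hgb : 0 < g b := by
              have : (0 : Fin (m+1)) < b := Fin.pos_of_ne_zero hb
              have := hsg this
              omega
            have : a (f 0) (g b) = 0 := by
              rw [hf0]; exact hzero 0 (g b) hgb
            simp [this]
          · intro h; exact absurd (Finset.mem_univ _) h
        · -- first row is identically zero
          have : ∀ j : Fin (m+1), (Matrix.of fun i j => a (f i) (g j)) 0 j = 0 := by
            intro j
            have h1 : 0 < g j := lt_of_lt_of_le (Nat.pos_of_ne_zero hg0) (hg (Fin.zero_le j))
            simp only [Matrix.of_apply, hf0]
            exact hzero 0 (g j) h1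
          rw [Matrix.det_eq_zero_of_row_eq_zero 0 this]
      · -- all rows have index ≥ 1 : use the LU factorization
        have hf1 : ∀ i, 1 ≤ f i := by
          intro i
          have := hf.monotone (Fin.zero_le i)
          omega
        have hn1 : 1 ≤ n := le_trans (hf1 0) (hfn 0)
        set f' : Fin (m+1) → ℕ := fun i => f i - 1 with hf'def
        have hf's : StrictMono f' := by
          intro i i' hii
          have := hf hii
          have := hf1 i
          simp only [hf'def]
          omega
        have hMeq : (Matrix.of fun (i : Fin (m+1)) j => a (f i) (g j))
            = Matrix.of fun i j => u (g j) * v (f' i) (g j)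
              + (if g j = 0 then (0:ℝ) else r (g j)) * v (f' i) (g j - 1) := by
          ext i j
          have hfi : f i = f' i + 1 := by
            have := hf1 i
            simp only [hf'def]
            omega
          rw [Matrix.of_apply, Matrix.of_apply, hfi, key]
          by_cases h : g j = 0
          · simp [h]
          · simp [h]
        have hH : ∀ h : Fin (m+1) → ℕ, Monotone h →
            0 ≤ (Matrix.of fun i j => v (f' i) (h j)).det := by
          intro h hh
          by_cases hsh : StrictMono h
          · have hveq : (Matrix.of fun (i : Fin (m+1)) j => v (f' i) (h j))
                = Matrix.of fun i j => (1:ℝ) * a (f' i) (h j)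
                  + t (h j + 1) / u (h j) * a (f' i) (h j + 1) := by
              ext i j
              simp [hvdef]
            rw [hveq]
            have m1 : ∀ c : Fin (m+1) → Bool,
                Monotone fun j => if c j then (fun k => k + 1) (h j) else h j := by
              intro c j j' hle
              rcases eq_or_lt_of_le hle with hE | hlt
              · subst hE; exact le_refl _
              · have := hsh hlt
                dsimp only
                split_ifs <;> omega
            have m2 : ∀ h' : Fin (m+1) → ℕ, Monotone h' →
                0 ≤ (Matrix.of fun i j => a (f' i) (h' j)).det := by
              intro h' hh'
              exact IH (n - 1) (m + 1) f' h' (by omega) hf's hh'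
                (fun i => by have := hfn i; have := hf1 i; simp only [hf'def]; omega)
            exact det_mix_nonneg (fun i k => a (f' i) k) (fun _ => (1:ℝ))
              (fun k => t (k + 1) / u k) (fun k => k + 1) h
              (fun k => zero_le_one) (fun k => div_nonneg (ht _) (hupos k).le) m1 m2
          · obtain ⟨j, j', hne, heq⟩ := exists_eq_of_not_strictMono hh hsh
            rw [Matrix.det_zero_of_column_eq hne (fun i => by simp [heq])]
        have m1 : ∀ c : Fin (m+1) → Bool,
            Monotone fun j => if c j then (fun k => k - 1) (g j) else g j := by
          intro c j j' hle
          rcases eq_or_lt_of_le hle with h | h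
          · subst h; exact le_refl _
          · have := hsg h
            dsimp only
            split_ifs <;> omega
        rw [hMeq]
        exact det_mix_nonneg (fun i k => v (f' i) k) u
          (fun k => if k = 0 then (0:ℝ) else r k) (fun k => k - 1) g
          (fun k => le_trans zero_le_one (hu k))
          (fun k => by split_ifs <;> first | exact le_refl 0 | exact hr k) m1 hH
    · obtain ⟨j, j', hne, heq⟩ := exists_eq_of_not_strictMono hg hsg
      rw [Matrix.det_zero_of_column_eq hne (fun i => by simp [heq])]

/-- If $s_0 \ge 1$ and $s_k \ge r_k t_k + 1$ for all $k \ge 1$,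
then the recursive matrix is totally positive. -/
theorem recursive_matrix_tp (a : ℕ → ℕ → ℝ) (r s t : ℕ → ℝ)
    (hr : ∀ k, 0 ≤ r k) (hs : ∀ k, 0 ≤ s k) (ht : ∀ k, 0 ≤ t k)
    (ha0 : a 0 0 = 1) (hzero : ∀ n k, n < k → a n k = 0)
    (hrec0 : ∀ n, a (n + 1) 0 = s 0 * a n 0 + t 1 * a n 1)
    (hrec : ∀ n k, a (n + 1) (k + 1)
      = r (k + 1) * a n k + s (k + 1) * a n (k + 1) + t (k + 2) * a n (k + 2))
    (h0 : 1 ≤ s 0) (hk : ∀ k : ℕ, 1 ≤ k → r k * t k + 1 ≤ s k) :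
    IsTotallyPos a := by
  intro m f g hf hg
  rcases m with _ | m
  · rw [Matrix.det_isEmpty]; exact zero_le_one
  · exact recursive_matrix_minor a r s t hr hs ht ha0 hzero hrec0 hrec h0 hk
      (f (Fin.last m) + (m + 1)) (f (Fin.last m)) (m + 1) f g (le_refl _) hf hg.monotone
      (fun i => hf.monotone (Fin.le_last i))
end

section
/- Let A be the recursive matrix defined by a_{0,0}=1 and a_{n+1,k} = a_{n,k-1} + s_k a_{n,k} + a_{n,k+1} (i.e., r_k = t_k = 1), with s_k ≥ 0. If s_0 ≥ 1 and s_k ≥ 2 for all k ≥ 1, then A is totally positive. -/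
set_option linter.unreachableTactic false
set_option linter.unnecessarySeqFocus false
set_option linter.unusedTactic false

open Matrix Finset Equiv

namespace TPAux



variable {m K : ℕ}

instance instDecSM : DecidablePred (fun q : Fin m → Fin K => StrictMono q) := fun _ =>
  decidable_of_iff (∀ a b, a < b → _ < _) ⟨fun h _ _ hab => h _ _ hab, fun h _ _ hab => h hab⟩

theorem cb_step1 (A : Matrix (Fin m) (Fin K) ℝ) (B : Matrix (Fin K) (Fin m) ℝ) :
    det (A * B) = ∑ p : Fin m → Fin K, (∏ i, B (p i) i) * det (A.submatrix id p) := by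
  have h1 : det (A * B)
      = ∑ p : Fin m → Fin K, ∑ σ : Equiv.Perm (Fin m),
          (Equiv.Perm.sign σ : ℝ) * ∏ i, A (σ i) (p i) * B (p i) i := by
    simp only [det_apply', mul_apply, prod_univ_sum, mul_sum, Fintype.piFinset_univ]
    rw [Finset.sum_comm]
  rw [h1]
  refine Finset.sum_congr rfl fun p _ => ?_
  rw [det_apply', Finset.mul_sum]
  refine Finset.sum_congr rfl fun σ _ => ?_
  simp only [submatrix_apply, id_eq]
  rw [Finset.prod_mul_distrib]
  ring

/-- the sorted version of an injective map -/
noncomputable def sorted (p : Fin m → Fin K) (hp : Function.Injective p) : Fin m → Fin K :=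
  (Finset.image p Finset.univ).orderEmbOfFin
    (by rw [Finset.card_image_of_injective _ hp, Finset.card_univ, Fintype.card_fin])

theorem sorted_strictMono (p : Fin m → Fin K) (hp : Function.Injective p) :
    StrictMono (sorted p hp) := (Finset.orderEmbOfFin _ _).strictMono

noncomputable def permOf (p : Fin m → Fin K) (hp : Function.Injective p) : Equiv.Perm (Fin m) :=
  (Equiv.ofBijective (fun i => (⟨p i, by simp⟩ : (Finset.image p Finset.univ : Finset (Fin K))))
    (by
      rw [Fintype.bijective_iff_injective_and_card]
      constructor
      · intro i j h
        exact hp (congrArg Subtype.val h)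
      · rw [Fintype.card_coe, Finset.card_image_of_injective _ hp, Finset.card_univ,
          Fintype.card_fin])).trans
    ((Finset.image p Finset.univ).orderIsoOfFin
      (by rw [Finset.card_image_of_injective _ hp, Finset.card_univ, Fintype.card_fin])).symm.toEquiv

theorem sorted_comp_permOf (p : Fin m → Fin K) (hp : Function.Injective p) :
    sorted p hp ∘ permOf p hp = p := by
  funext i
  simp only [Function.comp_apply, sorted, permOf, Equiv.trans_apply]
  rw [← Finset.coe_orderIsoOfFin_apply]
  simp

theorem cauchy_binet (A : Matrix (Fin m) (Fin K) ℝ) (B : Matrix (Fin K) (Fin m) ℝ) :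
    det (A * B) = ∑ q ∈ Finset.univ.filter (fun q : Fin m → Fin K => StrictMono q),
      det (A.submatrix id q) * det (B.submatrix q id) := by
  rw [cb_step1]
  -- kill non-injective p
  rw [← Finset.sum_filter_add_sum_filter_not Finset.univ (fun p : Fin m → Fin K => Function.Injective p)]
  have h2 : ∑ p ∈ Finset.univ.filter (fun p : Fin m → Fin K => ¬ Function.Injective p),
      (∏ i, B (p i) i) * det (A.submatrix id p) = 0 := by
    refine Finset.sum_eq_zero fun p hp => ?_
    rw [Finset.mem_filter] at hp
    simp only [Function.Injective] at hp
    push_neg at hp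
    obtain ⟨i, j, hij, hne⟩ := hp.2
    have : det (A.submatrix id p) = 0 := by
      rw [← det_transpose]
      exact det_zero_of_row_eq hne (by ext k; simp [hij])
    rw [this, mul_zero]
  rw [h2, add_zero]
  -- group by sorted map
  have h3 : ∑ p ∈ Finset.univ.filter (fun p : Fin m → Fin K => Function.Injective p),
      (∏ i, B (p i) i) * det (A.submatrix id p)
      = ∑ x ∈ (Finset.univ.filter (fun q : Fin m → Fin K => StrictMono q)) ×ˢ
          (Finset.univ : Finset (Equiv.Perm (Fin m))),
          (∏ i, B (x.1 (x.2 i)) i) * det (A.submatrix id (x.1 ∘ x.2)) := by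
    refine Finset.sum_bij'
      (fun p hp => (sorted p ((Finset.mem_filter.mp hp).2), permOf p ((Finset.mem_filter.mp hp).2)))
      (fun x _ => x.1 ∘ x.2) ?_ ?_ ?_ ?_ ?_
    · intro p hp
      simp only [Finset.mem_product, Finset.mem_filter, Finset.mem_univ, true_and]
      exact ⟨sorted_strictMono p _, trivial⟩
    · intro x hx
      simp only [Finset.mem_product, Finset.mem_filter, Finset.mem_univ, true_and] at hx
      simp only [Finset.mem_filter, Finset.mem_univ, true_and]
      exact hx.1.injective.comp x.2.injective
    · intro p hp
      exact sorted_comp_permOf p ((Finset.mem_filter.mp hp).2)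
    · intro x hx
      simp only [Finset.mem_product, Finset.mem_filter, Finset.mem_univ, true_and] at hx
      have hinj : Function.Injective (x.1 ∘ x.2) := hx.1.injective.comp x.2.injective
      have himg : Finset.image (x.1 ∘ x.2) Finset.univ = Finset.image x.1 Finset.univ := by
        ext y; simp only [Finset.mem_image, Finset.mem_univ, true_and, Function.comp_apply]
        constructor
        · rintro ⟨i, rfl⟩; exact ⟨x.2 i, rfl⟩
        · rintro ⟨i, rfl⟩; exact ⟨x.2.symm i, by simp⟩
      have hs : sorted (x.1 ∘ x.2) hinj = x.1 := by
        have := Finset.orderEmbOfFin_unique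
          (s := Finset.image (x.1 ∘ x.2) Finset.univ) (f := x.1)
          (by rw [Finset.card_image_of_injective _ hinj, Finset.card_univ, Fintype.card_fin])
          (fun i => by rw [himg]; simp) hx.1
        exact this.symm
      refine Prod.ext hs (Equiv.ext fun i => ?_)
      simp only [permOf, Equiv.trans_apply, Equiv.ofBijective_apply]
      rw [RelIso.coe_fn_toEquiv, OrderIso.symm_apply_eq]
      refine Subtype.ext ?_
      simp only [RelIso.coe_fn_toEquiv, Finset.coe_orderIsoOfFin_apply]
      have h2' := Finset.orderEmbOfFin_unique
          (s := Finset.image (x.1 ∘ x.2) Finset.univ) (f := x.1)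
          (by rw [Finset.card_image_of_injective _ hinj, Finset.card_univ, Fintype.card_fin])
          (fun i => by rw [himg]; simp) hx.1
      exact congrFun h2' (x.2 i)
    · intro p hp
      have h := (Finset.mem_filter.mp hp).2
      conv_lhs => rw [← sorted_comp_permOf p h]
      rfl

  rw [h3, Finset.sum_product]
  refine Finset.sum_congr rfl fun q hq => ?_
  simp only [Finset.mem_filter] at hq
  have hdet : ∀ σ : Equiv.Perm (Fin m),
      det (A.submatrix id (q ∘ σ)) = (Equiv.Perm.sign σ : ℝ) * det (A.submatrix id q) := by
    intro σ
    rw [show A.submatrix id (q ∘ σ) = (A.submatrix id q).submatrix id σ by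
      rw [submatrix_submatrix]; rfl]
    exact det_permute' σ _
  calc ∑ σ : Equiv.Perm (Fin m), (∏ i, B (q (σ i)) i) * det (A.submatrix id (q ∘ σ))
      = det (A.submatrix id q) * ∑ σ : Equiv.Perm (Fin m),
          (Equiv.Perm.sign σ : ℝ) * ∏ i, B (q (σ i)) i := by
        rw [Finset.mul_sum]
        refine Finset.sum_congr rfl fun σ _ => ?_
        rw [hdet σ]; ring
    _ = det (A.submatrix id q) * det (B.submatrix q id) := by
        congr 1
        rw [det_apply']
        refine Finset.sum_congr rfl fun σ _ => ?_
        simp [submatrix_apply]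




theorem det_last_col {n : ℕ} (M : Matrix (Fin (n+1)) (Fin (n+1)) ℝ)
    (h : ∀ i, i ≠ Fin.last n → M i (Fin.last n) = 0) :
    det M = M (Fin.last n) (Fin.last n) * det (M.submatrix Fin.castSucc Fin.castSucc) := by
  rw [det_succ_column M (Fin.last n), Finset.sum_eq_single (Fin.last n)]
  · rw [Fin.succAbove_last]
    have he : (-1 : ℝ) ^ (((Fin.last n : ℕ)) + ((Fin.last n : ℕ))) = 1 :=
      Even.neg_one_pow ⟨(Fin.last n : ℕ), rfl⟩
    rw [he, one_mul]
  · intro i _ hne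
    rw [h i hne]; ring
  · simp

theorem det_last_row {n : ℕ} (M : Matrix (Fin (n+1)) (Fin (n+1)) ℝ)
    (h : ∀ j, j ≠ Fin.last n → M (Fin.last n) j = 0) :
    det M = M (Fin.last n) (Fin.last n) * det (M.submatrix Fin.castSucc Fin.castSucc) := by
  rw [← det_transpose M, det_last_col Mᵀ (fun j hj => h j hj), ← transpose_submatrix,
    det_transpose]
  rfl

theorem det_first {n : ℕ} (M : Matrix (Fin (n+1)) (Fin (n+1)) ℝ) (h00 : M 0 0 = 1)
    (h0 : ∀ j, j ≠ 0 → M 0 j = 0) : det M = det (M.submatrix Fin.succ Fin.succ) := by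
  rw [det_succ_row_zero, Finset.sum_eq_single 0]
  · simp [h00, Fin.succAbove_zero]
  · intro j _ hne
    rw [h0 j hne]; ring
  · simp

theorem bidiag_tp (M : ℕ → ℕ → ℝ) (hpos : ∀ i j, 0 ≤ M i j)
    (hsupp : ∀ i j, M i j ≠ 0 → j ≤ i ∧ i ≤ j + 1) :
    ∀ (m : ℕ) (f g : Fin m → ℕ), StrictMono f → StrictMono g →
      0 ≤ (Matrix.of fun i j => M (f i) (g j)).det := by
  intro m
  induction m with
  | zero => intro f g _ _; simp [Matrix.det_fin_zero]
  | succ n ih =>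
    intro f g hf hg
    have hle : ∀ i : Fin (n+1), f i ≤ f (Fin.last n) := fun i => hf.monotone (Fin.le_last i)
    have hgle : ∀ j : Fin (n+1), g j ≤ g (Fin.last n) := fun j => hg.monotone (Fin.le_last j)
    have hlt : ∀ i : Fin (n+1), i ≠ Fin.last n → f i < f (Fin.last n) := fun i hi =>
      hf (Fin.lt_last_iff_ne_last.mpr hi)
    have hglt : ∀ j : Fin (n+1), j ≠ Fin.last n → g j < g (Fin.last n) := fun j hj =>
      hg (Fin.lt_last_iff_ne_last.mpr hj)
    have hsub : 0 ≤ ((Matrix.of fun i j => M (f i) (g j)).submatrix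
        Fin.castSucc Fin.castSucc).det :=
      ih (f ∘ Fin.castSucc) (g ∘ Fin.castSucc) (hf.comp Fin.strictMono_castSucc)
        (hg.comp Fin.strictMono_castSucc)
    rcases Nat.lt_trichotomy (f (Fin.last n)) (g (Fin.last n)) with h | h | h
    · rw [det_eq_zero_of_column_eq_zero (Fin.last n) ?_]
      intro i
      by_contra hne
      have h1 := (hsupp _ _ hne).1
      have h2 := hle i
      omega
    · rw [det_last_col]
      · exact mul_nonneg (hpos _ _) hsub
      · intro i hi
        by_contra hne
        have h1 := (hsupp _ _ hne).1
        have h2 := hlt i hi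
        omega
    · rcases Nat.lt_or_ge (g (Fin.last n) + 1) (f (Fin.last n)) with h2 | h2
      · rw [det_eq_zero_of_row_eq_zero (Fin.last n) ?_]
        intro j
        by_contra hne
        have h1 := (hsupp _ _ hne).2
        have h3 := hgle j
        omega
      · rw [det_last_row]
        · exact mul_nonneg (hpos _ _) hsub
        · intro j hj
          by_contra hne
          have h1 := (hsupp _ _ hne).2
          have h3 := hglt j hj
          omega




variable (s : ℕ → ℝ)

noncomputable def cs : ℕ → ℝ
  | 0 => s 0
  | k + 1 => s (k + 1) - 1 / cs k

theorem one_le_cs (h0 : 1 ≤ s 0) (hk : ∀ k : ℕ, 1 ≤ k → 2 ≤ s k) : ∀ k, 1 ≤ cs s k := by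
  intro k
  induction k with
  | zero => exact h0
  | succ k ih =>
    have hpos : (0:ℝ) < cs s k := lt_of_lt_of_le one_pos ih
    have : 1 / cs s k ≤ 1 := by
      rw [div_le_one hpos]; exact ih
    have h2 := hk (k+1) (by omega)
    simp only [cs]
    linarith

noncomputable def Lm (k j : ℕ) : ℝ :=
  if j = k then 1 else if j + 1 = k then 1 / cs s j else 0

noncomputable def Um (j c : ℕ) : ℝ :=
  if c = j then cs s j else if c = j + 1 then 1 else 0

def Jm (k c : ℕ) : ℝ :=
  (if k + 1 = c then 1 else 0) + (if k = c then s c else 0) + (if c + 1 = k then 1 else 0)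

theorem cs_pos (h0 : 1 ≤ s 0) (hk : ∀ k : ℕ, 1 ≤ k → 2 ≤ s k) (k : ℕ) : 0 < cs s k := lt_of_lt_of_le one_pos (one_le_cs s h0 hk k)

theorem Lm_nonneg (h0 : 1 ≤ s 0) (hk : ∀ k : ℕ, 1 ≤ k → 2 ≤ s k) (k j : ℕ) : 0 ≤ Lm s k j := by
  unfold Lm
  split_ifs
  · exact zero_le_one
  · exact le_of_lt (by have := cs_pos s h0 hk j; positivity)
  · exact le_refl 0

theorem Lm_supp (k j : ℕ) (h : Lm s k j ≠ 0) : j ≤ k ∧ k ≤ j + 1 := by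
  unfold Lm at h
  split_ifs at h with h1 h2
  · omega
  · omega
  · exact absurd rfl h

theorem Um_nonneg (h0 : 1 ≤ s 0) (hk : ∀ k : ℕ, 1 ≤ k → 2 ≤ s k) (j c : ℕ) : 0 ≤ Um s j c := by
  unfold Um
  split_ifs
  · exact le_of_lt (cs_pos s h0 hk j)
  · exact zero_le_one
  · exact le_refl 0

theorem Um_supp (j c : ℕ) (h : Um s j c ≠ 0) : j ≤ c ∧ c ≤ j + 1 := by
  unfold Um at h
  split_ifs at h with h1 h2
  · omega
  · omega
  · exact absurd rfl h

theorem Jm_factor (h0 : 1 ≤ s 0) (hk : ∀ k : ℕ, 1 ≤ k → 2 ≤ s k) (K k c : ℕ) (hkK : k < K) :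
    Jm s k c = ∑ j ∈ Finset.range K, Lm s k j * Um s j c := by
  have hsplit : ∀ j, Lm s k j * Um s j c
      = (if j = k then Um s k c else 0)
        + (if j = k - 1 ∧ 1 ≤ k then (1 / cs s j) * Um s j c else 0) := by
    intro j
    unfold Lm
    by_cases hjk : j = k
    · subst hjk
      rw [if_pos rfl, if_pos rfl, if_neg (by omega)]
      ring
    · rw [if_neg hjk, if_neg hjk]
      by_cases hj1 : j + 1 = k
      · rw [if_pos hj1, if_pos (by omega)]
        ring
      · rw [if_neg hj1, if_neg (by omega)]
        ring
  rw [Finset.sum_congr rfl fun j _ => hsplit j, Finset.sum_add_distrib]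
  have hs1 : ∑ j ∈ Finset.range K, (if j = k then Um s k c else 0) = Um s k c := by
    rw [Finset.sum_ite_eq' (Finset.range K) k fun _ => Um s k c]
    simp [Finset.mem_range, hkK]
  rw [hs1]
  match k, hkK with
  | 0, hkK =>
    have hs2 : ∑ j ∈ Finset.range K,
        (if j = 0 - 1 ∧ 1 ≤ 0 then (1 / cs s j) * Um s j c else 0) = 0 :=
      Finset.sum_eq_zero fun j _ => by simp
    rw [hs2, add_zero]
    rcases c with _ | _ | c <;> simp [Jm, Um, cs]
  | (k' + 1), hkK =>
    have hs2 : ∑ j ∈ Finset.range K,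
        (if j = (k' + 1) - 1 ∧ 1 ≤ k' + 1 then (1 / cs s j) * Um s j c else 0)
        = (1 / cs s k') * Um s k' c := by
      have : ∀ j, (if j = (k' + 1) - 1 ∧ 1 ≤ k' + 1 then (1 / cs s j) * Um s j c else 0)
          = (if j = k' then (1 / cs s j) * Um s j c else 0) := by
        intro j; congr 1; simp
      rw [Finset.sum_congr rfl fun j _ => this j,
        Finset.sum_ite_eq' (Finset.range K) k' fun j => (1 / cs s j) * Um s j c]
      simp only [Finset.mem_range]
      rw [if_pos (by omega)]
    rw [hs2]
    have hne : cs s k' ≠ 0 := ne_of_gt (cs_pos s h0 hk k')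
    have hrw : cs s (k' + 1) = s (k' + 1) - 1 / cs s k' := by simp [cs]
    by_cases hc : c = k' + 1
    · subst hc
      unfold Jm Um
      split_ifs <;> (try omega) <;> (try norm_num) <;>
        (try (rw [hrw]; field_simp)) <;> (try field_simp) <;>
        (try (simp [one_div, inv_mul_cancel₀ hne]))
    · unfold Jm Um
      split_ifs <;> (try omega) <;> (try norm_num) <;>
        (try (rw [hrw]; field_simp)) <;> (try field_simp) <;>
        (try (simp [one_div, inv_mul_cancel₀ hne]))


theorem det_mul_nonneg {m K : ℕ} (A : Matrix (Fin m) (Fin K) ℝ) (B : Matrix (Fin K) (Fin m) ℝ)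
    (hA : ∀ q : Fin m → Fin K, StrictMono q → 0 ≤ det (A.submatrix id q))
    (hB : ∀ q : Fin m → Fin K, StrictMono q → 0 ≤ det (B.submatrix q id)) :
    0 ≤ det (A * B) := by
  rw [cauchy_binet]
  refine Finset.sum_nonneg fun q hq => ?_
  have hq' : StrictMono q := (Finset.mem_filter.mp hq).2
  exact mul_nonneg (hA q hq') (hB q hq')

theorem Jm_minor_nonneg (s : ℕ → ℝ) (h0 : 1 ≤ s 0) (hk : ∀ k : ℕ, 1 ≤ k → 2 ≤ s k) :
    ∀ (m : ℕ) (f g : Fin m → ℕ), StrictMono f → StrictMono g →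
      0 ≤ (Matrix.of fun i c => Jm s (f i) (g c)).det := by
  intro m f g hf hg
  match m with
  | 0 => simp [Matrix.det_fin_zero]
  | n + 1 =>
    set K := f (Fin.last n) + 1 with hK
    have hfK : ∀ i, f i < K := fun i => by
      have := hf.monotone (Fin.le_last i); omega
    have hfac : (Matrix.of fun i c => Jm s (f i) (g c))
        = (Matrix.of fun (i : Fin (n+1)) (j : Fin K) => Lm s (f i) (j : ℕ))
          * (Matrix.of fun (j : Fin K) (c : Fin (n+1)) => Um s (j : ℕ) (g c)) := by
      ext i c
      simp only [Matrix.mul_apply, Matrix.of_apply]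
      rw [Fin.sum_univ_eq_sum_range (fun j => Lm s (f i) j * Um s j (g c)) K]
      exact Jm_factor s h0 hk K (f i) (g c) (hfK i)
    rw [hfac]
    refine det_mul_nonneg _ _ (fun q hq => ?_) (fun q hq => ?_)
    · have := bidiag_tp (fun x y => Lm s x y) (fun x y => Lm_nonneg s h0 hk x y)
        (fun x y => Lm_supp s x y) (n+1) f (fun j => (q j : ℕ)) hf
        (fun a b hab => hq hab)
      exact this
    · rw [← Matrix.det_transpose]
      have := bidiag_tp (fun x y => Um s y x)
        (fun x y => Um_nonneg s h0 hk y x)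
        (fun x y hxy => Um_supp s y x hxy) (n+1) g (fun j => (q j : ℕ)) hg
        (fun a b hab => hq hab)
      exact this

section Main

variable (a : ℕ → ℕ → ℝ) (s : ℕ → ℝ)

theorem a_row (hzero : ∀ n k, n < k → a n k = 0)
    (hrec0 : ∀ n, a (n + 1) 0 = s 0 * a n 0 + a n 1)
    (hrec : ∀ n k, a (n + 1) (k + 1) = a n k + s (k + 1) * a n (k + 1) + a n (k + 2))
    (n c K : ℕ) (hnK : n < K) :
    a (n + 1) c = ∑ k ∈ Finset.range K, a n k * Jm s k c := by
  have hsplit : ∀ k, a n k * Jm s k c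
      = (if k = c - 1 ∧ 1 ≤ c then a n k else 0) + (if k = c then a n k * s c else 0)
        + (if k = c + 1 then a n k else 0) := by
    intro k
    unfold Jm
    split_ifs <;> first | omega | ring
  rw [Finset.sum_congr rfl fun k _ => hsplit k, Finset.sum_add_distrib, Finset.sum_add_distrib]
  have hS2 : (∑ k ∈ Finset.range K, if k = c then a n k * s c else 0) = a n c * s c := by
    rw [Finset.sum_ite_eq' (Finset.range K) c fun k => a n k * s c]
    by_cases hc : c < K
    · rw [if_pos (Finset.mem_range.mpr hc)]
    · rw [if_neg (by simp [Finset.mem_range]; omega), hzero n c (by omega)]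
      ring
  have hS3 : (∑ k ∈ Finset.range K, if k = c + 1 then a n k else 0) = a n (c + 1) := by
    rw [Finset.sum_ite_eq' (Finset.range K) (c+1) fun k => a n k]
    by_cases hc : c + 1 < K
    · rw [if_pos (Finset.mem_range.mpr hc)]
    · rw [if_neg (by simp [Finset.mem_range]; omega), hzero n (c+1) (by omega)]
  match c with
  | 0 =>
    have hS1 : (∑ k ∈ Finset.range K, if k = 0 - 1 ∧ 1 ≤ 0 then a n k else 0) = 0 :=
      Finset.sum_eq_zero fun k _ => by simp
    rw [hS1, hS2, hS3, hrec0 n]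
    ring
  | c' + 1 =>
    have hS1 : (∑ k ∈ Finset.range K, if k = (c' + 1) - 1 ∧ 1 ≤ c' + 1 then a n k else 0)
        = a n c' := by
      have he : ∀ k, (if k = (c' + 1) - 1 ∧ 1 ≤ c' + 1 then a n k else 0)
          = (if k = c' then a n k else 0) := fun k => by
        congr 1; simp
      rw [Finset.sum_congr rfl fun k _ => he k, Finset.sum_ite_eq' (Finset.range K) c' fun k => a n k]
      by_cases hc : c' < K
      · rw [if_pos (Finset.mem_range.mpr hc)]
      · rw [if_neg (by simp [Finset.mem_range]; omega), hzero n c' (by omega)]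
    rw [hS1, hS2, hS3, hrec n c']
    ring

theorem main_aux (hs : ∀ k, 0 ≤ s k)
    (ha0 : a 0 0 = 1) (hzero : ∀ n k, n < k → a n k = 0)
    (hrec0 : ∀ n, a (n + 1) 0 = s 0 * a n 0 + a n 1)
    (hrec : ∀ n k, a (n + 1) (k + 1) = a n k + s (k + 1) * a n (k + 1) + a n (k + 2))
    (h0 : 1 ≤ s 0) (hk : ∀ k : ℕ, 1 ≤ k → 2 ≤ s k) :
    ∀ (N m : ℕ) (f g : Fin m → ℕ), m + (∑ i, f i) ≤ N → StrictMono f → StrictMono g →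
      0 ≤ (Matrix.of fun i j => a (f i) (g j)).det := by
  intro N
  induction N with
  | zero =>
    intro m f g hm _ _
    have : m = 0 := by omega
    subst this
    simp [Matrix.det_fin_zero]
  | succ N ih =>
    intro m f g hm hf hg
    match m with
    | 0 => simp [Matrix.det_fin_zero]
    | m' + 1 =>
      by_cases hf0 : f 0 = 0
      · by_cases hg0 : g 0 = 0
        · rw [det_first (Matrix.of fun i j => a (f i) (g j)) (by simp [hf0, hg0, ha0])
            (fun j hj => ?_)]
          · have hstep : ((Matrix.of fun i j => a (f i) (g j)).submatrix Fin.succ Fin.succ)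
                = Matrix.of fun i j => a (f (Fin.succ i)) (g (Fin.succ j)) := rfl
            rw [hstep]
            refine ih m' (f ∘ Fin.succ) (g ∘ Fin.succ) ?_ (hf.comp Fin.strictMono_succ)
              (hg.comp Fin.strictMono_succ)
            have hsum : (∑ i, f i) = f 0 + ∑ i : Fin m', f (Fin.succ i) :=
              Fin.sum_univ_succ f
            simp only [Function.comp]
            omega
          · have h1 : g 0 < g j := hg (Fin.pos_of_ne_zero hj)
            simp only [Matrix.of_apply, hf0]
            exact hzero 0 (g j) (by omega)
        · refine le_of_eq (det_eq_zero_of_row_eq_zero 0 fun j => ?_).symm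
          have : 0 < g j := lt_of_lt_of_le (Nat.pos_of_ne_zero hg0) (hg.monotone (Fin.zero_le j))
          simp only [Matrix.of_apply, hf0]
          exact hzero 0 (g j) this
      · -- every row index is positive
        have hf1 : ∀ i, 1 ≤ f i :=
          fun i => le_trans (Nat.one_le_iff_ne_zero.mpr hf0) (hf.monotone (Fin.zero_le i))
        set f' : Fin (m' + 1) → ℕ := fun i => f i - 1 with hf'
        have hf'm : StrictMono f' := by
          intro i j hij
          have h1 := hf hij
          have h2 := hf1 i
          simp only [hf']
          omega
        set K := f (Fin.last m') + 1 with hK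
        have hfK : ∀ i, f' i < K := fun i => by
          have := hf.monotone (Fin.le_last i)
          have := hf1 i
          simp only [hf', hK]
          omega
        have hfac : (Matrix.of fun i j => a (f i) (g j))
            = (Matrix.of fun (i : Fin (m'+1)) (k : Fin K) => a (f' i) (k : ℕ))
              * (Matrix.of fun (k : Fin K) (j : Fin (m'+1)) => Jm s (k : ℕ) (g j)) := by
          ext i j
          simp only [Matrix.mul_apply, Matrix.of_apply]
          rw [Fin.sum_univ_eq_sum_range (fun k => a (f' i) k * Jm s k (g j)) K]
          have hfi : f i = f' i + 1 := by
            have := hf1 i; simp only [hf']; omega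
          rw [hfi]
          exact a_row a s hzero hrec0 hrec (f' i) (g j) K (hfK i)
        rw [hfac]
        refine det_mul_nonneg _ _ (fun q hq => ?_) (fun q hq => ?_)
        · have hmono : StrictMono (fun j => ((q j : ℕ))) := fun x y hxy => hq hxy
          refine ih (m' + 1) f' (fun j => (q j : ℕ)) ?_ hf'm hmono
          have hsum : ∑ i, f i = (∑ i, f' i) + ∑ _i : Fin (m' + 1), 1 := by
            rw [← Finset.sum_add_distrib]
            refine Finset.sum_congr rfl fun i _ => ?_
            have := hf1 i
            simp only [hf']
            omega
          have hcard : (∑ _i : Fin (m' + 1), (1:ℕ)) = m' + 1 := by simp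
          omega
        · exact Jm_minor_nonneg s h0 hk (m' + 1) (fun k => (q k : ℕ)) g
            (fun x y hxy => hq hxy) hg

end Main

end TPAux


/-- For the recursive matrix with $r_k = t_k = 1$: if $s_0 \ge 1$ and $s_k \ge 2$
for $k \ge 1$, then the matrix is totally positive. -/
theorem admissible_matrix_tp (a : ℕ → ℕ → ℝ) (s : ℕ → ℝ)
    (hs : ∀ k, 0 ≤ s k)
    (ha0 : a 0 0 = 1) (hzero : ∀ n k, n < k → a n k = 0)
    (hrec0 : ∀ n, a (n + 1) 0 = s 0 * a n 0 + a n 1)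
    (hrec : ∀ n k, a (n + 1) (k + 1)
      = a n k + s (k + 1) * a n (k + 1) + a n (k + 2))
    (h0 : 1 ≤ s 0) (hk : ∀ k : ℕ, 1 ≤ k → 2 ≤ s k) :
    IsTotallyPos a := by
  intro m f g hf hg
  exact TPAux.main_aux a s hs ha0 hzero hrec0 hrec h0 hk (m + ∑ i, f i) m f g le_rfl hf hg
end

section
/- Let A be the recursive matrix defined by a_{0,0}=1 and a_{n+1,k} = a_{n,k-1} + s_k a_{n,k} + t_{k+1} a_{n,k+1} (i.e., r_k = 1), with s_k, t_k ≥ 0. If s_0 ≥ 1 and s_k ≥ t_k + 1 for all k ≥ 1, then A is totally positive. -/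
open Matrix Finset in
/-- Column-expansion lemma: if each column of `B` is a nonnegative combination of
two columns of `M` (with indices given by `σ` and `τ`), and the relevant minors of `M`
are nonnegative, then the minor of `B` is nonnegative. -/
lemma col_step {m : ℕ} (B M : ℕ → ℕ → ℝ) (f g : Fin m → ℕ)
    (σ τ : ℕ → ℕ) (c d : ℕ → ℝ) (hc : ∀ k, 0 ≤ c k) (hd : ∀ k, 0 ≤ d k)
    (hστ : ∀ k, σ k ≤ τ k) (hcross : ∀ j k, j < k → τ j ≤ σ k)
    (hrel : ∀ n k, B n k = c k * M n (σ k) + d k * M n (τ k))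
    (hg : StrictMono g)
    (hM : ∀ h : Fin m → ℕ, StrictMono h → (∀ j, h j = σ (g j) ∨ h j = τ (g j)) →
      0 ≤ (Matrix.of fun i j => M (f i) (h j)).det) :
    0 ≤ (Matrix.of fun i j => B (f i) (g j)).det := by
  classical
  rw [← Matrix.det_transpose]
  set v : Fin m → Bool → (Fin m → ℝ) := fun j b =>
    if b then d (g j) • (fun i => M (f i) (τ (g j)))
    else c (g j) • (fun i => M (f i) (σ (g j))) with hv
  have h1 : ((Matrix.of fun i j => B (f i) (g j))ᵀ) = fun j => ∑ b : Bool, v j b := by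
    funext j i
    simp only [Matrix.transpose_apply, Matrix.of_apply, hv, Fintype.sum_bool, if_true,
      Bool.false_eq_true, if_false, Pi.add_apply, Pi.smul_apply, smul_eq_mul]
    rw [hrel]; ring
  have h2 : ((Matrix.of fun i j => B (f i) (g j))ᵀ).det
      = ∑ r : Fin m → Bool, Matrix.detRowAlternating (fun j => v j (r j)) := by
    show Matrix.detRowAlternating _ = _
    rw [h1, ← AlternatingMap.coe_multilinearMap]
    exact MultilinearMap.map_sum _ (fun j (b : Bool) => v j b)
  rw [h2]
  apply Finset.sum_nonneg
  intro r _
  have h3 : (fun j => v j (r j))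
      = fun j => (if r j then d (g j) else c (g j)) •
          (fun i => M (f i) (if r j then τ (g j) else σ (g j))) := by
    funext j
    cases hrj : r j <;> simp [hv, hrj]
  rw [h3, ← AlternatingMap.coe_multilinearMap, MultilinearMap.map_smul_univ]
  set h : Fin m → ℕ := fun j => if r j then τ (g j) else σ (g j) with hh
  have hcoeff : 0 ≤ ∏ j, (if r j then d (g j) else c (g j)) := by
    apply Finset.prod_nonneg
    intro j _
    cases r j <;> simp [hc, hd]
  rw [smul_eq_mul]
  apply mul_nonneg hcoeff
  have hdet : (Matrix.detRowAlternating : (Fin m → ℝ) [⋀^Fin m]→ₗ[ℝ] ℝ).toMultilinearMap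
      (fun j i => M (f i) (h j)) = (Matrix.of fun j i => M (f i) (h j)).det := rfl
  rw [hdet]
  by_cases hsm : StrictMono h
  · rw [← Matrix.det_transpose]
    have : (Matrix.of fun j i => M (f i) (h j))ᵀ = Matrix.of fun i j => M (f i) (h j) := rfl
    rw [this]
    exact hM h hsm (fun j => by cases hrj : r j <;> simp [hh, hrj])
  · -- h is monotone but not strictly monotone: two equal columns
    have hmono : Monotone h := by
      intro j j' hle
      rcases eq_or_lt_of_le hle with rfl | hlt
      · exact le_rfl
      · have hb1 : h j ≤ τ (g j) := by cases hrj : r j <;> simp [hh, hrj, hστ]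
        have hb2 : σ (g j') ≤ h j' := by cases hrj : r j' <;> simp [hh, hrj, hστ]
        have := hcross (g j) (g j') (hg hlt)
        calc h j ≤ τ (g j) := hb1
          _ ≤ σ (g j') := this
          _ ≤ h j' := hb2
    obtain ⟨j, j', hjj', heq⟩ : ∃ j j', j < j' ∧ h j = h j' := by
      simp only [StrictMono, not_forall] at hsm
      obtain ⟨j, j', hlt, hnot⟩ := hsm
      exact ⟨j, j', hlt, le_antisymm (hmono hlt.le) (not_lt.mp hnot)⟩
    have hz : (Matrix.of fun j i => M (f i) (h j)).det = 0 := by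
      apply Matrix.det_zero_of_row_eq (ne_of_lt hjj')
      funext i
      simp [heq]
    exact le_of_eq hz.symm

noncomputable def uu (s t : ℕ → ℝ) : ℕ → ℝ
  | 0 => s 0
  | k + 1 => s (k + 1) - t (k + 1) / uu s t k

lemma uu_ge_one (s t : ℕ → ℝ) (ht : ∀ k, 0 ≤ t k) (h0 : 1 ≤ s 0)
    (hk : ∀ k : ℕ, 1 ≤ k → t k + 1 ≤ s k) : ∀ k, 1 ≤ uu s t k := by
  intro k
  induction k with
  | zero => simpa [uu] using h0
  | succ k ih =>
    have h1 : t (k + 1) / uu s t k ≤ t (k + 1) := div_le_self (ht _) ih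
    have h2 := hk (k + 1) (by omega)
    show 1 ≤ s (k + 1) - t (k + 1) / uu s t k
    linarith

section Rel
variable (a : ℕ → ℕ → ℝ) (s t : ℕ → ℝ)

/-- The intermediate matrix `M = a · L`. -/
noncomputable def Mm (n k : ℕ) : ℝ := a n k + (t (k + 1) / uu s t k) * a n (k + 1)

lemma hrelU (ht : ∀ k, 0 ≤ t k) (h0 : 1 ≤ s 0)
    (hk : ∀ k : ℕ, 1 ≤ k → t k + 1 ≤ s k)
    (hrec0 : ∀ n, a (n + 1) 0 = s 0 * a n 0 + t 1 * a n 1)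
    (hrec : ∀ n k, a (n + 1) (k + 1)
      = a n k + s (k + 1) * a n (k + 1) + t (k + 2) * a n (k + 2)) :
    ∀ n k, a (n + 1) k
      = (if k = 0 then (0:ℝ) else 1) * Mm a s t n (k - 1) + uu s t k * Mm a s t n k := by
  have hu : ∀ k, 1 ≤ uu s t k := uu_ge_one s t ht h0 hk
  have hne : ∀ k, uu s t k ≠ 0 := fun k => by have := hu k; linarith
  intro n k
  cases k with
  | zero =>
    rw [hrec0, if_pos rfl, zero_mul, zero_add]
    unfold Mm
    rw [show uu s t 0 = s 0 from rfl]
    have hs0 : s 0 ≠ 0 := by linarith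
    field_simp
  | succ k =>
    rw [hrec, if_neg (Nat.succ_ne_zero k), one_mul, Nat.add_sub_cancel]
    unfold Mm
    have h2 := hne (k + 1)
    have e1 : uu s t (k + 1) * (t (k + 2) / uu s t (k + 1)) = t (k + 2) :=
      mul_div_cancel₀ _ h2
    have e2 : uu s t (k + 1) = s (k + 1) - t (k + 1) / uu s t k := rfl
    rw [mul_add, mul_comm (uu s t (k+1)) (t (k + 2) / uu s t (k + 1) * a n (k + 2)),
      mul_comm (t (k + 2) / uu s t (k + 1)) (a n (k + 2)), mul_assoc, mul_comm (t (k + 2) / uu s t (k + 1)) (uu s t (k+1)), e1]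
    rw [e2]
    have h1 := hne k
    field_simp
    ring

end Rel

lemma key (a : ℕ → ℕ → ℝ) (s t : ℕ → ℝ)
    (hs : ∀ k, 0 ≤ s k) (ht : ∀ k, 0 ≤ t k)
    (ha0 : a 0 0 = 1) (hzero : ∀ n k, n < k → a n k = 0)
    (hrec0 : ∀ n, a (n + 1) 0 = s 0 * a n 0 + t 1 * a n 1)
    (hrec : ∀ n k, a (n + 1) (k + 1)
      = a n k + s (k + 1) * a n (k + 1) + t (k + 2) * a n (k + 2))
    (h0 : 1 ≤ s 0) (hk : ∀ k : ℕ, 1 ≤ k → t k + 1 ≤ s k) :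
    ∀ N m (f g : Fin m → ℕ), StrictMono f → StrictMono g → m + ∑ i, f i ≤ N →
      0 ≤ (Matrix.of fun i j => a (f i) (g j)).det := by
  have hu : ∀ k, 1 ≤ uu s t k := uu_ge_one s t ht h0 hk
  have hrU := hrelU a s t ht h0 hk hrec0 hrec
  intro N
  induction N with
  | zero =>
    intro m f g hf hg hN
    have hm : m = 0 := by omega
    subst hm
    rw [Matrix.det_fin_zero]
    norm_num
  | succ N ih =>
    intro m f g hf hg hN
    cases m with
    | zero =>
      rw [Matrix.det_fin_zero]
      norm_num
    | succ m =>
      by_cases hf0 : f 0 = 0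
      · by_cases hg0 : g 0 = 0
        · rw [Matrix.det_succ_row_zero]
          rw [Finset.sum_eq_single (0 : Fin (m + 1))]
          · simp only [Fin.val_zero, pow_zero, one_mul, Matrix.of_apply, Fin.succAbove_zero]
            rw [hf0, hg0, ha0, one_mul]
            have hsub : (Matrix.of fun i j => a (f i) (g j)).submatrix Fin.succ Fin.succ
                = Matrix.of fun (i j : Fin m) => a (f i.succ) (g j.succ) := rfl
            rw [hsub]
            apply ih m (fun i => f i.succ) (fun j => g j.succ)
              (hf.comp Fin.strictMono_succ) (hg.comp Fin.strictMono_succ)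
            have hsum := Fin.sum_univ_succ f
            rw [hf0] at hsum
            omega
          · intro j _ hj
            have hgj : 0 < g j := by
              have h0j : (0 : Fin (m + 1)) < j := Fin.pos_of_ne_zero hj
              have := hg h0j
              omega
            simp only [Matrix.of_apply]
            rw [hf0, hzero 0 (g j) hgj, mul_zero, zero_mul]
          · intro habs
            exact absurd (Finset.mem_univ 0) habs
        · apply le_of_eq
          symm
          apply Matrix.det_eq_zero_of_row_eq_zero 0
          intro j
          have hgj : 0 < g j := by
            have := hg.monotone (Fin.zero_le j)
            omega
          show a (f 0) (g j) = 0
          rw [hf0]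
          exact hzero 0 (g j) hgj
      · have hf1 : ∀ i, 1 ≤ f i := fun i => by
          have := hf.monotone (Fin.zero_le i)
          omega
        set f' : Fin (m + 1) → ℕ := fun i => f i - 1 with hf'def
        have hf' : StrictMono f' := by
          intro i j hij
          have := hf hij
          have := hf1 i
          simp only [hf'def]
          omega
        have hmat : (Matrix.of fun i j => a (f i) (g j))
            = Matrix.of fun i j => a (f' i + 1) (g j) := by
          ext i j
          simp only [Matrix.of_apply, hf'def]
          congr 2
          have := hf1 i
          omega
        rw [hmat]
        apply col_step (fun n k => a (n + 1) k) (Mm a s t) f' g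
          (fun k => k - 1) id (fun k => if k = 0 then (0:ℝ) else 1) (uu s t)
        · intro k
          split <;> norm_num
        · intro k
          have := hu k
          linarith
        · intro k
          exact Nat.sub_le k 1
        · intro j k hjk
          show j ≤ k - 1
          omega
        · exact fun n k => hrU n k
        · exact hg
        · intro h hh hmem
          apply col_step (Mm a s t) a f' h id (fun k => k + 1) (fun _ => (1:ℝ))
            (fun k => t (k + 1) / uu s t k)
          · intro k
            norm_num
          · intro k
            exact div_nonneg (ht _) (by linarith [hu k])
          · intro k
            exact Nat.le_succ k
          · intro j k hjk
            show j + 1 ≤ k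
            omega
          · intro n k
            show Mm a s t n k = 1 * a n k + t (k + 1) / uu s t k * a n (k + 1)
            unfold Mm
            ring
          · exact hh
          · intro h' hh' hmem'
            apply ih (m + 1) f' h' hf' hh'
            have hsum : ∑ i, f i = (∑ i, f' i) + (m + 1) := by
              have : ∀ i ∈ Finset.univ, f i = f' i + 1 := fun i _ => by
                simp only [hf'def]
                have := hf1 i
                omega
              rw [Finset.sum_congr rfl this, Finset.sum_add_distrib]
              simp
            omega

/-- For the recursive matrix with $r_k = 1$: if $s_0 \ge 1$ and $s_k \ge t_k + 1$
for $k \ge 1$, then the matrix is totally positive. -/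
theorem recursive_matrix_tp_r_one (a : ℕ → ℕ → ℝ) (s t : ℕ → ℝ)
    (hs : ∀ k, 0 ≤ s k) (ht : ∀ k, 0 ≤ t k)
    (ha0 : a 0 0 = 1) (hzero : ∀ n k, n < k → a n k = 0)
    (hrec0 : ∀ n, a (n + 1) 0 = s 0 * a n 0 + t 1 * a n 1)
    (hrec : ∀ n k, a (n + 1) (k + 1)
      = a n k + s (k + 1) * a n (k + 1) + t (k + 2) * a n (k + 2))
    (h0 : 1 ≤ s 0) (hk : ∀ k : ℕ, 1 ≤ k → t k + 1 ≤ s k) :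
    IsTotallyPos a := by
  intro m f g hf hg
  exact key a s t hs ht ha0 hzero hrec0 hrec h0 hk (m + ∑ i, f i) m f g hf hg le_rfl
end

section
/- The Bell triangle X = [X_{n,k}] defined by X_{0,0}=1, X_{n+1,k} = X_{n,k-1} + (k+1) X_{n,k} + (k+1) X_{n,k+1} (with X_{n,k}=0 unless n ≥ k ≥ 0) is totally positive; in particular, all its minors of any order are nonnegative. -/
/-- Mixing columns by a nonnegative lower-bidiagonal matrix preserves nonnegativity
of minors with a fixed row set. -/
lemma det_mix_lower (M : ℕ → ℕ → ℝ) (u v : ℕ → ℝ) (hu : ∀ j, 0 ≤ u j) (hv : ∀ j, 0 ≤ v j)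
    (m : ℕ) (f : Fin m → ℕ)
    (hM : ∀ g : Fin m → ℕ, StrictMono g → 0 ≤ (Matrix.of fun i j => M (f i) (g j)).det)
    (g : Fin m → ℕ) (hg : StrictMono g) :
    0 ≤ (Matrix.of fun i j =>
        u (g j) * M (f i) (g j) + v (g j) * M (f i) (g j + 1)).det := by
  suffices h : ∀ t, t ≤ m → ∀ ε : Fin m → ℕ,
      (∀ j k : Fin m, t ≤ (j : ℕ) → j < k → ε j < ε k) →
      (∀ j : Fin m, t ≤ (j : ℕ) → g j ≤ ε j) →
      0 ≤ (Matrix.of fun (i j : Fin m) => if (j : ℕ) < t then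
            u (g j) * M (f i) (g j) + v (g j) * M (f i) (g j + 1)
          else M (f i) (ε j)).det by
    have h2 := h m le_rfl g (fun j _ hj _ => absurd j.isLt (by omega))
      (fun j _ => le_rfl)
    have e : (Matrix.of fun (i : Fin m) (j : Fin m) => if (j : ℕ) < m then
            u (g j) * M (f i) (g j) + v (g j) * M (f i) (g j + 1)
          else M (f i) (g j))
        = Matrix.of fun i j => u (g j) * M (f i) (g j) + v (g j) * M (f i) (g j + 1) := by
      ext i j; simp [j.isLt]
    rwa [e] at h2
  intro t
  induction t with
  | zero =>
    intro _ ε h1 _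
    simpa using hM ε (fun j k hjk => h1 j k (Nat.zero_le _) hjk)
  | succ t ih =>
    intro ht ε h1 h2
    have htm : t < m := by omega
    set pt : Fin m := ⟨t, htm⟩ with hpt
    set A : (Fin m → ℕ) → Matrix (Fin m) (Fin m) ℝ := fun ε' => Matrix.of fun i j =>
      if (j : ℕ) < t then u (g j) * M (f i) (g j) + v (g j) * M (f i) (g j + 1)
      else M (f i) (ε' j) with hA
    set ε1 : Fin m → ℕ := Function.update ε pt (g pt) with hε1
    set ε2 : Fin m → ℕ := Function.update ε pt (g pt + 1) with hε2
    have key : (Matrix.of fun (i : Fin m) (j : Fin m) => if (j : ℕ) < t + 1 then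
            u (g j) * M (f i) (g j) + v (g j) * M (f i) (g j + 1)
          else M (f i) (ε j))
        = (A ε1).updateCol pt
            ((u (g pt)) • (fun i => M (f i) (g pt)) + (v (g pt)) • (fun i => M (f i) (g pt + 1))) := by
      ext i j
      by_cases hj : j = pt
      · subst hj
        simp [Matrix.updateCol_self, hpt]
      · rw [Matrix.updateCol_ne hj]
        have hjt : (j : ℕ) ≠ t := fun h => hj (Fin.ext h)
        simp only [hA, Matrix.of_apply]
        by_cases hlt : (j : ℕ) < t
        · simp [hlt, show (j : ℕ) < t + 1 by omega]
        · simp [hlt, show ¬ (j : ℕ) < t + 1 by omega, hε1, Function.update_of_ne hj]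
    rw [key, Matrix.det_updateCol_add, Matrix.det_updateCol_smul,
      Matrix.det_updateCol_smul]
    have e1 : (A ε1).updateCol pt (fun i => M (f i) (g pt)) = A ε1 := by
      have hcol : (fun i => M (f i) (g pt)) = fun i => (A ε1) i pt := by
        funext i
        simp [hA, hε1, hpt]
      rw [hcol, Matrix.updateCol_eq_self]
    have e2 : (A ε1).updateCol pt (fun i => M (f i) (g pt + 1)) = A ε2 := by
      ext i j
      by_cases hj : j = pt
      · subst hj
        simp [Matrix.updateCol_self, hA, hε2, hpt]
      · rw [Matrix.updateCol_ne hj]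
        simp only [hA, Matrix.of_apply]
        by_cases hlt : (j : ℕ) < t <;>
          simp [hlt, hε1, hε2, Function.update_of_ne hj]
    rw [e1, e2]
    have d1 : 0 ≤ (A ε1).det := by
      apply ih (by omega)
      · intro j k hj hjk
        by_cases hjp : j = pt
        · subst hjp
          have hkp : k ≠ pt := by
            intro h; subst h; exact absurd hjk (lt_irrefl _)
          rw [hε1, Function.update_self, Function.update_of_ne hkp]
          have hk2 : t + 1 ≤ (k : ℕ) := by
            have := hjk; simp [Fin.lt_def, hpt] at this; omega
          calc g pt < g k := hg hjk
            _ ≤ ε k := h2 k hk2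
        · have hjt : t + 1 ≤ (j : ℕ) := by
            have : (j : ℕ) ≠ t := fun h => hjp (Fin.ext h)
            omega
          have hkp : k ≠ pt := by
            intro h; subst h
            have := hjk; simp [Fin.lt_def, hpt] at this; omega
          rw [hε1, Function.update_of_ne hjp, Function.update_of_ne hkp]
          exact h1 j k hjt hjk
      · intro j hj
        by_cases hjp : j = pt
        · subst hjp; rw [hε1, Function.update_self]
        · have hjt : t + 1 ≤ (j : ℕ) := by
            have : (j : ℕ) ≠ t := fun h => hjp (Fin.ext h)
            omega
          rw [hε1, Function.update_of_ne hjp]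
          exact h2 j hjt
    have d2 : 0 ≤ (A ε2).det := by
      by_cases hc : ∃ k : Fin m, (k : ℕ) = t + 1 ∧ ε k = g pt + 1
      · obtain ⟨k, hk1, hk2⟩ := hc
        have hne : pt ≠ k := Fin.ne_of_val_ne (show t ≠ (k:ℕ) by omega)
        have : (A ε2).det = 0 := by
          apply Matrix.det_zero_of_column_eq hne
          intro i
          have hkp : k ≠ pt := fun h => by rw [h] at hk1; simp [hpt] at hk1
          simp only [hA, Matrix.of_apply]
          rw [if_neg (by simp [hpt]), if_neg (by omega)]
          rw [hε2, Function.update_self, Function.update_of_ne hkp, hk2]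
        rw [this]
      · apply ih (by omega)
        · intro j k hj hjk
          by_cases hjp : j = pt
          · subst hjp
            have hkp : k ≠ pt := by
              intro h; subst h; exact absurd hjk (lt_irrefl _)
            rw [hε2, Function.update_self, Function.update_of_ne hkp]
            have hk2 : t + 1 ≤ (k : ℕ) := by
              have := hjk; simp [Fin.lt_def, hpt] at this; omega
            by_cases hke : (k : ℕ) = t + 1
            · have hge : g pt + 1 ≤ ε k := by
                have : g pt < g k := hg hjk
                have : g k ≤ ε k := h2 k hk2
                omega
              have : ε k ≠ g pt + 1 := fun h => hc ⟨k, hke, h⟩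
              omega
            · have hkk : t + 1 < (k : ℕ) := by omega
              set k' : Fin m := ⟨t + 1, by omega⟩ with hk'
              have h1' : ε k' < ε k := h1 k' k (by simp [hk']) (by simp [Fin.lt_def, hk']; omega)
              have h2' : g k' ≤ ε k' := h2 k' (by simp [hk'])
              have : g pt < g k' := hg (by simp [Fin.lt_def, hpt, hk'])
              omega
          · have hjt : t + 1 ≤ (j : ℕ) := by
              have : (j : ℕ) ≠ t := fun h => hjp (Fin.ext h)
              omega
            have hkp : k ≠ pt := by
              intro h; subst h
              have := hjk; simp [Fin.lt_def, hpt] at this; omega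
            rw [hε2, Function.update_of_ne hjp, Function.update_of_ne hkp]
            exact h1 j k hjt hjk
        · intro j hj
          by_cases hjp : j = pt
          · subst hjp; rw [hε2, Function.update_self]; omega
          · have hjt : t + 1 ≤ (j : ℕ) := by
              have : (j : ℕ) ≠ t := fun h => hjp (Fin.ext h)
              omega
            rw [hε2, Function.update_of_ne hjp]
            exact h2 j hjt
    exact add_nonneg (mul_nonneg (hu _) d1) (mul_nonneg (hv _) d2)

/-- Mixing columns by a nonnegative upper-bidiagonal matrix preserves nonnegativity
of minors with a fixed row set. -/
lemma det_mix_upper (M : ℕ → ℕ → ℝ) (a b : ℕ → ℝ) (ha : ∀ j, 0 ≤ a j) (hb : ∀ j, 0 ≤ b j)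
    (m : ℕ) (f : Fin m → ℕ)
    (hM : ∀ g : Fin m → ℕ, StrictMono g → 0 ≤ (Matrix.of fun i j => M (f i) (g j)).det)
    (g : Fin m → ℕ) (hg : StrictMono g) :
    0 ≤ (Matrix.of fun i j => a (g j) * M (f i) (g j)
        + (if g j = 0 then 0 else b (g j) * M (f i) (g j - 1))).det := by
  suffices h : ∀ d t, t + d = m → ∀ ε : Fin m → ℕ,
      (∀ j k : Fin m, (k : ℕ) < t → j < k → ε j < ε k) →
      (∀ j : Fin m, (j : ℕ) < t → ε j ≤ g j) →
      0 ≤ (Matrix.of fun (i j : Fin m) => if (j : ℕ) < t then M (f i) (ε j)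
          else a (g j) * M (f i) (g j)
            + (if g j = 0 then 0 else b (g j) * M (f i) (g j - 1))).det by
    have h2 := h m 0 (by omega) g (fun j k hk _ => absurd hk (by omega)) (fun j hj => absurd hj (by omega))
    have e : (Matrix.of fun (i j : Fin m) => if (j : ℕ) < 0 then M (f i) (g j)
          else a (g j) * M (f i) (g j)
            + (if g j = 0 then 0 else b (g j) * M (f i) (g j - 1)))
        = Matrix.of fun (i j : Fin m) => a (g j) * M (f i) (g j)
            + (if g j = 0 then 0 else b (g j) * M (f i) (g j - 1)) := by
      ext i j; simp
    rwa [e] at h2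
  intro d
  induction d with
  | zero =>
    intro t htd ε h1 _
    have e : (Matrix.of fun (i j : Fin m) => if (j : ℕ) < t then M (f i) (ε j)
          else a (g j) * M (f i) (g j)
            + (if g j = 0 then 0 else b (g j) * M (f i) (g j - 1)))
        = Matrix.of fun (i j : Fin m) => M (f i) (ε j) := by
      ext i j
      have hjt : (j : ℕ) < t := by have := j.isLt; omega
      simp [hjt]
    rw [e]
    exact hM ε (fun j k hjk => h1 j k (by have := k.isLt; omega) hjk)
  | succ d ih =>
    intro t htd ε h1 h2
    have htm : t < m := by omega
    set pt : Fin m := ⟨t, htm⟩ with hpt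
    set A : (Fin m → ℕ) → Matrix (Fin m) (Fin m) ℝ := fun ε' => Matrix.of fun (i j : Fin m) =>
      if (j : ℕ) < t + 1 then M (f i) (ε' j)
      else a (g j) * M (f i) (g j)
        + (if g j = 0 then 0 else b (g j) * M (f i) (g j - 1)) with hA
    set ε1 : Fin m → ℕ := Function.update ε pt (g pt) with hε1
    set ε2 : Fin m → ℕ := Function.update ε pt (g pt - 1) with hε2
    have d1 : 0 ≤ (A ε1).det := by
      apply ih (t + 1) (by omega)
      · intro j k hk hjk
        by_cases hkp : k = pt
        · subst hkp
          have hjp : j ≠ pt := by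
            intro h; subst h; exact absurd hjk (lt_irrefl _)
          rw [hε1, Function.update_self, Function.update_of_ne hjp]
          have hjt : (j : ℕ) < t := by
            have := hjk; simp [Fin.lt_def, hpt] at this; omega
          calc ε j ≤ g j := h2 j hjt
            _ < g pt := hg hjk
        · have hkt : (k : ℕ) < t := by
            have : (k : ℕ) ≠ t := fun h => hkp (Fin.ext h)
            omega
          have hjp : j ≠ pt := by
            intro h; subst h
            have := hjk; simp [Fin.lt_def, hpt] at this; omega
          rw [hε1, Function.update_of_ne hjp, Function.update_of_ne hkp]
          exact h1 j k hkt hjk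
      · intro j hj
        by_cases hjp : j = pt
        · subst hjp; rw [hε1, Function.update_self]
        · have hjt : (j : ℕ) < t := by
            have : (j : ℕ) ≠ t := fun h => hjp (Fin.ext h)
            omega
          rw [hε1, Function.update_of_ne hjp]
          exact h2 j hjt
    by_cases hg0 : g pt = 0
    · have key : (Matrix.of fun (i j : Fin m) => if (j : ℕ) < t then M (f i) (ε j)
            else a (g j) * M (f i) (g j)
              + (if g j = 0 then 0 else b (g j) * M (f i) (g j - 1)))
          = (A ε1).updateCol pt ((a (g pt)) • (fun i => M (f i) (g pt))) := by
        ext i j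
        by_cases hj : j = pt
        · subst hj
          simp [Matrix.updateCol_self, hg0, hpt, show g ⟨t, htm⟩ = 0 from hg0]
        · rw [Matrix.updateCol_ne hj]
          have hjt : (j : ℕ) ≠ t := fun h => hj (Fin.ext h)
          simp only [hA, Matrix.of_apply]
          by_cases hlt : (j : ℕ) < t
          · simp [hlt, show (j : ℕ) < t + 1 by omega, hε1, Function.update_of_ne hj]
          · simp [hlt, show ¬ (j : ℕ) < t + 1 by omega]
      rw [key, Matrix.det_updateCol_smul]
      have e1 : (A ε1).updateCol pt (fun i => M (f i) (g pt)) = A ε1 := by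
        have hcol : (fun i => M (f i) (g pt)) = fun i => (A ε1) i pt := by
          funext i
          simp [hA, hε1, hpt]
        rw [hcol, Matrix.updateCol_eq_self]
      rw [e1]
      exact mul_nonneg (ha _) d1
    · have key : (Matrix.of fun (i j : Fin m) => if (j : ℕ) < t then M (f i) (ε j)
            else a (g j) * M (f i) (g j)
              + (if g j = 0 then 0 else b (g j) * M (f i) (g j - 1)))
          = (A ε1).updateCol pt
              ((a (g pt)) • (fun i => M (f i) (g pt))
                + (b (g pt)) • (fun i => M (f i) (g pt - 1))) := by
        ext i j
        by_cases hj : j = pt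
        · subst hj
          simp [Matrix.updateCol_self, hg0, hpt, show ¬ g ⟨t, htm⟩ = 0 from hg0]
        · rw [Matrix.updateCol_ne hj]
          have hjt : (j : ℕ) ≠ t := fun h => hj (Fin.ext h)
          simp only [hA, Matrix.of_apply]
          by_cases hlt : (j : ℕ) < t
          · simp [hlt, show (j : ℕ) < t + 1 by omega, hε1, Function.update_of_ne hj]
          · simp [hlt, show ¬ (j : ℕ) < t + 1 by omega]
      rw [key, Matrix.det_updateCol_add, Matrix.det_updateCol_smul,
        Matrix.det_updateCol_smul]
      have e1 : (A ε1).updateCol pt (fun i => M (f i) (g pt)) = A ε1 := by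
        have hcol : (fun i => M (f i) (g pt)) = fun i => (A ε1) i pt := by
          funext i
          simp [hA, hε1, hpt]
        rw [hcol, Matrix.updateCol_eq_self]
      have e2 : (A ε1).updateCol pt (fun i => M (f i) (g pt - 1)) = A ε2 := by
        ext i j
        by_cases hj : j = pt
        · subst hj
          simp [Matrix.updateCol_self, hA, hε2, hpt]
        · rw [Matrix.updateCol_ne hj]
          simp only [hA, Matrix.of_apply]
          by_cases hlt : (j : ℕ) < t + 1 <;>
            simp [hlt, hε1, hε2, Function.update_of_ne hj]
      rw [e1, e2]
      have d2 : 0 ≤ (A ε2).det := by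
        by_cases hc : ∃ k : Fin m, (k : ℕ) + 1 = t ∧ ε k = g pt - 1
        · obtain ⟨k, hk1, hk2⟩ := hc
          have hne : pt ≠ k := Fin.ne_of_val_ne (show t ≠ (k : ℕ) by omega)
          have : (A ε2).det = 0 := by
            apply Matrix.det_zero_of_column_eq hne
            intro i
            have hkp : k ≠ pt := fun h => by rw [h] at hk1; simp [hpt] at hk1
            simp only [hA, Matrix.of_apply]
            rw [if_pos (by simp [hpt]), if_pos (by omega)]
            rw [hε2, Function.update_self, Function.update_of_ne hkp, hk2]
          rw [this]
        · apply ih (t + 1) (by omega)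
          · intro j k hk hjk
            by_cases hkp : k = pt
            · subst hkp
              have hjp : j ≠ pt := by
                intro h; subst h; exact absurd hjk (lt_irrefl _)
              rw [hε2, Function.update_self, Function.update_of_ne hjp]
              have hjt : (j : ℕ) < t := by
                have := hjk; simp [Fin.lt_def, hpt] at this; omega
              by_cases hje : (j : ℕ) + 1 = t
              · have hle : ε j ≤ g pt - 1 := by
                  have h3 : ε j ≤ g j := h2 j hjt
                  have h4 : g j < g pt := hg hjk
                  omega
                have : ε j ≠ g pt - 1 := fun h => hc ⟨j, hje, h⟩
                omega
              · have hjj : (j : ℕ) + 1 < t := by omega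
                set j' : Fin m := ⟨t - 1, by omega⟩ with hj'
                have h1' : ε j < ε j' := h1 j j' (by simp [hj']; omega) (by simp [Fin.lt_def, hj']; omega)
                have h2' : ε j' ≤ g j' := h2 j' (by simp [hj']; omega)
                have h3' : g j' < g pt := hg (by simp [Fin.lt_def, hpt, hj']; omega)
                omega
            · have hkt : (k : ℕ) < t := by
                have : (k : ℕ) ≠ t := fun h => hkp (Fin.ext h)
                omega
              have hjp : j ≠ pt := by
                intro h; subst h
                have := hjk; simp [Fin.lt_def, hpt] at this; omega
              rw [hε2, Function.update_of_ne hjp, Function.update_of_ne hkp]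
              exact h1 j k hkt hjk
          · intro j hj
            by_cases hjp : j = pt
            · subst hjp; rw [hε2, Function.update_self]; omega
            · have hjt : (j : ℕ) < t := by
                have : (j : ℕ) ≠ t := fun h => hjp (Fin.ext h)
                omega
              rw [hε2, Function.update_of_ne hjp]
              exact h2 j hjt
      exact add_nonneg (mul_nonneg (ha _) d1) (mul_nonneg (hb _) d2)

lemma bell_aux (X : ℕ → ℕ → ℝ)
    (hX0 : X 0 0 = 1) (hzero : ∀ n k, n < k → X n k = 0)
    (hrec0 : ∀ n, X (n + 1) 0 = X n 0 + X n 1)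
    (hrec : ∀ n k, X (n + 1) (k + 1)
      = X n k + ((k : ℝ) + 2) * X n (k + 1) + ((k : ℝ) + 2) * X n (k + 2)) :
    ∀ N m (f g : Fin m → ℕ), StrictMono f → StrictMono g →
      m + ∑ i, f i ≤ N → 0 ≤ (Matrix.of fun i j => X (f i) (g j)).det := by
  intro N
  induction N with
  | zero =>
    intro m f g hf hg hm
    have hm0 : m = 0 := by omega
    subst hm0
    simp [Matrix.det_fin_zero]
  | succ N ih =>
    intro m f g hf hg hm
    match m, f, g, hf, hg, hm with
    | 0, f, g, hf, hg, hm => simp [Matrix.det_fin_zero]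
    | m' + 1, f, g, hf, hg, hm =>
      by_cases hf0 : f 0 = 0
      · -- expand along the first row, which is (X 0 (g 0), 0, ..., 0)
        rw [Matrix.det_succ_row_zero, Fin.sum_univ_succ]
        have tail : ∀ j : Fin m',
            (-1 : ℝ) ^ ((j.succ : Fin (m' + 1)) : ℕ)
              * (Matrix.of fun i j => X (f i) (g j)) 0 j.succ
              * ((Matrix.of fun i j => X (f i) (g j)).submatrix Fin.succ j.succ.succAbove).det
            = 0 := by
          intro j
          have : X (f 0) (g j.succ) = 0 := by
            rw [hf0]
            exact hzero 0 (g j.succ)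
              (by have := hg (show (0 : Fin (m' + 1)) < j.succ from Fin.succ_pos j); omega)
          simp [this]
        rw [Finset.sum_eq_zero (fun j _ => tail j), add_zero]
        have hminor : 0 ≤ ((Matrix.of fun i j => X (f i) (g j)).submatrix
            Fin.succ ((0 : Fin (m' + 1)).succAbove)).det := by
          rw [Fin.succAbove_zero]
          have : ((Matrix.of fun i j => X (f i) (g j)).submatrix Fin.succ Fin.succ)
              = Matrix.of fun i j => X ((f ∘ Fin.succ) i) ((g ∘ Fin.succ) j) := rfl
          rw [this]
          apply ih m' (f ∘ Fin.succ) (g ∘ Fin.succ)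
            (hf.comp Fin.strictMono_succ) (hg.comp Fin.strictMono_succ)
          have hsum : ∑ i : Fin (m' + 1), f i = f 0 + ∑ i : Fin m', f i.succ :=
            Fin.sum_univ_succ f
          rw [hf0] at hsum
          simp only [Function.comp]
          omega
        have hentry : 0 ≤ X (f 0) (g 0) := by
          by_cases hg0 : g 0 = 0
          · rw [hf0, hg0, hX0]; norm_num
          · rw [hf0, hzero 0 (g 0) (by omega)]
        simpa using mul_nonneg hentry hminor
      · -- all rows are ≥ 1 : use the recurrence and the two mixing lemmas
        have hf1 : ∀ i, 1 ≤ f i := by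
          intro i
          have h01 : f 0 ≤ f i := hf.monotone (Fin.zero_le i)
          omega
        set f' : Fin (m' + 1) → ℕ := fun i => f i - 1 with hf'def
        have hf' : StrictMono f' := by
          intro i j hij
          have := hf hij
          have := hf1 i
          simp only [hf'def]
          omega
        have hMX : ∀ g' : Fin (m' + 1) → ℕ, StrictMono g' →
            0 ≤ (Matrix.of fun i j => X (f' i) (g' j)).det := by
          intro g' hg'
          apply ih (m' + 1) f' g' hf' hg'
          have hsum : ∑ i : Fin (m' + 1), f i = ∑ i : Fin (m' + 1), (f' i + 1) := by
            apply Finset.sum_congr rfl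
            intro i _
            have := hf1 i
            simp only [hf'def]
            omega
          rw [Finset.sum_add_distrib] at hsum
          simp at hsum
          omega
        set P : ℕ → ℕ → ℝ := fun n k => 1 * X n k + ((k : ℝ) + 1) * X n (k + 1) with hPdef
        have hP : ∀ g' : Fin (m' + 1) → ℕ, StrictMono g' →
            0 ≤ (Matrix.of fun i j => P (f' i) (g' j)).det := by
          intro g' hg'
          exact det_mix_lower X (fun _ => 1) (fun k => (k : ℝ) + 1)
            (fun _ => zero_le_one) (fun k => by positivity) (m' + 1) f' hMX g' hg'
        have hQ := det_mix_upper P (fun _ => 1) (fun _ => 1)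
          (fun _ => zero_le_one) (fun _ => zero_le_one) (m' + 1) f' hP g hg
        have final : (Matrix.of fun (i j : Fin (m' + 1)) => X (f i) (g j))
            = Matrix.of fun (i j : Fin (m' + 1)) => 1 * P (f' i) (g j)
              + (if g j = 0 then 0 else 1 * P (f' i) (g j - 1)) := by
          ext i j
          have hfi : f i = f' i + 1 := by
            have := hf1 i
            simp only [hf'def]
            omega
          simp only [Matrix.of_apply, hPdef]
          rw [hfi]
          rcases hk : g j with _ | k
          · rw [if_pos rfl, hrec0]
            push_cast
            ring
          · rw [if_neg (Nat.succ_ne_zero k), hrec]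
            simp only [Nat.add_sub_cancel]
            push_cast
            ring
        rw [final]
        exact hQ

/-- The Bell triangle, given by $X_{n+1,k} = X_{n,k-1} + (k+1) X_{n,k} + (k+1) X_{n,k+1}$,
is totally positive. -/
theorem bell_triangle_tp (X : ℕ → ℕ → ℝ)
    (hX0 : X 0 0 = 1) (hzero : ∀ n k, n < k → X n k = 0)
    (hrec0 : ∀ n, X (n + 1) 0 = X n 0 + X n 1)
    (hrec : ∀ n k, X (n + 1) (k + 1)
      = X n k + ((k : ℝ) + 2) * X n (k + 1) + ((k : ℝ) + 2) * X n (k + 2)) :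
    IsTotallyPos X := by
  intro m f g hf hg
  exact bell_aux X hX0 hzero hrec0 hrec (m + ∑ i, f i) m f g hf hg le_rfl
end

section
/- The Catalan triangle of Aigner C = [C_{n,k}] defined by C_{0,0}=1, C_{n+1,0} = C_{n,0} + C_{n,1}, C_{n+1,k} = C_{n,k-1} + 2 C_{n,k} + C_{n,k+1} for k ≥ 1 (with C_{n,k}=0 unless n ≥ k ≥ 0) is totally positive. -/
open Matrix

/-- Expanding a determinant whose rows are two-term sums. -/
lemma det_rows_two_sum {m : ℕ} (v : Fin m → Bool → (Fin m → ℝ)) :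
    Matrix.det (Matrix.of fun i => ∑ b : Bool, v i b)
      = ∑ c : Fin m → Bool, Matrix.det (Matrix.of fun i => v i (c i)) := by
  have h := (Matrix.detRowAlternating (R := ℝ) (n := Fin m)).toMultilinearMap.map_sum
    (g := fun i (b : Bool) => v i b)
  simp [Matrix.det] at h ⊢
  exact h

/-- Key expansion lemma: if all "straightened" minors of `B` on rows `n` are
nonnegative, then so is the determinant of a matrix whose `j`-th column is a
nonnegative combination of columns `r₀ j` and `r₁ j` of `B`, provided the
column indices are suitably interlaced. -/
lemma det_expand {m : ℕ} (B : ℕ → ℕ → ℝ) (n : Fin m → ℕ)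
    (w₀ w₁ : Fin m → ℝ) (r₀ r₁ : Fin m → ℕ)
    (hw₀ : ∀ j, 0 ≤ w₀ j) (hw₁ : ∀ j, 0 ≤ w₁ j)
    (hmono : ∀ ⦃j j' : Fin m⦄, j < j' →
      max (r₀ j) (r₁ j) ≤ min (r₀ j') (r₁ j'))
    (hB : ∀ l : Fin m → ℕ, StrictMono l →
      0 ≤ Matrix.det (Matrix.of fun i j => B (n i) (l j))) :
    0 ≤ Matrix.det (Matrix.of fun i j =>
      w₀ j * B (n i) (r₀ j) + w₁ j * B (n i) (r₁ j)) := by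
  set w : Fin m → Bool → ℝ := fun j b => bif b then w₁ j else w₀ j with hw
  set r : Fin m → Bool → ℕ := fun j b => bif b then r₁ j else r₀ j with hr
  rw [← Matrix.det_transpose]
  have ht : (Matrix.of fun i j =>
      w₀ j * B (n i) (r₀ j) + w₁ j * B (n i) (r₁ j))ᵀ
      = Matrix.of fun j => ∑ b : Bool, (fun i => w j b * B (n i) (r j b)) := by
    ext j i
    simp [Matrix.transpose_apply, Fintype.sum_bool, hw, hr]
    ring
  rw [ht, det_rows_two_sum]
  apply Finset.sum_nonneg
  intro c _
  have hc : (Matrix.of fun j i => w j (c j) * B (n i) (r j (c j)))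
      = Matrix.of (fun j i => w j (c j) *
        (Matrix.of fun (j : Fin m) (i : Fin m) => B (n i) (r j (c j))) j i) := rfl
  rw [hc, Matrix.det_mul_column]
  set l : Fin m → ℕ := fun j => r j (c j) with hl
  have hwnn : ∀ j b, 0 ≤ w j b := by
    intro j b; cases b <;> simp [hw] <;> [exact hw₀ j; exact hw₁ j]
  have hbound : ∀ j b, r₀ j ⊓ r₁ j ≤ r j b ∧ r j b ≤ r₀ j ⊔ r₁ j := by
    intro j b; cases b <;> simp [hr]
  by_cases hinj : Function.Injective l
  · have hmon : Monotone l := by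
      intro j j' hle
      rcases lt_or_eq_of_le hle with hlt | heq
      · calc l j ≤ r₀ j ⊔ r₁ j := (hbound j (c j)).2
          _ ≤ r₀ j' ⊓ r₁ j' := hmono hlt
          _ ≤ l j' := (hbound j' (c j')).1
      · rw [heq]
    have hsm : StrictMono l := hmon.strictMono_of_injective hinj
    have h1 : 0 ≤ Matrix.det (Matrix.of fun (j : Fin m) (i : Fin m) => B (n i) (l j)) := by
      rw [← Matrix.det_transpose]
      exact hB l hsm
    exact mul_nonneg (Finset.prod_nonneg fun j _ => hwnn j (c j)) h1
  · obtain ⟨j, j', hjj', hne⟩ : ∃ j j', l j = l j' ∧ j ≠ j' := by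
      simp only [Function.Injective, not_forall] at hinj
      obtain ⟨j, j', h1, h2⟩ := hinj
      exact ⟨j, j', h1, h2⟩
    have : Matrix.det (Matrix.of fun (j : Fin m) (i : Fin m) => B (n i) (l j)) = 0 := by
      apply Matrix.det_zero_of_row_eq hne
      funext i
      simp [hjj']
    rw [this, mul_zero]

section Main

variable (C : ℕ → ℕ → ℝ)
variable (hC0 : C 0 0 = 1) (hzero : ∀ n k, n < k → C n k = 0)
variable (hrec0 : ∀ n, C (n + 1) 0 = C n 0 + C n 1)
variable (hrec : ∀ n k, C (n + 1) (k + 1)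
      = C n k + 2 * C n (k + 1) + C n (k + 2))

include hC0 hzero hrec0 hrec in
lemma aigner_aux : ∀ s : ℕ, ∀ (m : ℕ) (f g : Fin m → ℕ), StrictMono f → StrictMono g →
    m + 2 * (∑ i, f i) ≤ s → 0 ≤ (Matrix.of fun i j => C (f i) (g j)).det := by
  intro s
  induction s using Nat.strong_induction_on with
  | _ s IH =>
  intro m f g hf hg hs
  match m with
  | 0 => simp [Matrix.det_fin_zero]
  | m + 1 =>
    by_cases hf0 : f 0 = 0
    · by_cases hg0 : g 0 = 0
      · rw [Matrix.det_succ_row_zero]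
        rw [Finset.sum_eq_single_of_mem 0 (Finset.mem_univ 0) ?side]
        case side =>
          intro b _ hb
          have hgb : 0 < g b := by
            have : (0 : Fin (m+1)) < b := Fin.pos_of_ne_zero hb
            have := hg this
            omega
          have : C (f 0) (g b) = 0 := by
            rw [hf0]; exact hzero 0 (g b) hgb
          simp [this]
        have hentry : (Matrix.of fun i j => C (f i) (g j)) 0 0 = 1 := by
          simp [hf0, hg0, hC0]
        rw [hentry]
        simp only [Fin.val_zero, pow_zero, one_mul, mul_one, Fin.succAbove_zero]
        have hsub : ((Matrix.of fun i j => C (f i) (g j)).submatrix Fin.succ Fin.succ)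
            = Matrix.of fun i j => C (f (Fin.succ i)) (g (Fin.succ j)) := rfl
        rw [hsub]
        have hsum : ∑ i : Fin (m+1), f i = ∑ i : Fin m, f (Fin.succ i) := by
          rw [Fin.sum_univ_succ, hf0, zero_add]
        have hlt : m + 2 * (∑ i : Fin m, f (Fin.succ i)) < s := by
          rw [← hsum]; omega
        exact IH _ hlt m (f ∘ Fin.succ) (g ∘ Fin.succ)
          (hf.comp Fin.strictMono_succ) (hg.comp Fin.strictMono_succ) le_rfl
      · have : (Matrix.of fun i j => C (f i) (g j)).det = 0 := by
          apply Matrix.det_eq_zero_of_row_eq_zero 0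
          intro j
          have hgj : 0 < g j := by
            have h0 : 0 < g 0 := Nat.pos_of_ne_zero hg0
            have := hg.monotone (Fin.zero_le j)
            omega
          simp only [Matrix.of_apply, hf0]
          exact hzero 0 (g j) hgj
        rw [this]
    · -- f 0 ≥ 1; shift rows down through the bidiagonal factorization
      have hf1 : ∀ i, 1 ≤ f i := by
        intro i
        have := hf.monotone (Fin.zero_le i)
        omega
      set f' : Fin (m+1) → ℕ := fun i => f i - 1 with hf'def
      have hf' : StrictMono f' := by
        intro i i' h
        have h1 := hf1 i
        have h2 := hf h
        simp only [hf'def]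
        omega
      have hsumf' : (∑ i, f' i) + (m + 1) = ∑ i, f i := by
        have h1 : ∑ i, f i = ∑ i : Fin (m+1), (f' i + 1) :=
          Finset.sum_congr rfl (fun i _ => by have := hf1 i; simp only [hf'def]; omega)
        rw [h1, Finset.sum_add_distrib]
        simp
      -- minors of D n k = C n k + C n (k+1) with rows f'
      have hCminor : ∀ l : Fin (m+1) → ℕ, StrictMono l →
          0 ≤ Matrix.det (Matrix.of fun i j => C (f' i) (l j)) := by
        intro l hl
        have hlt : (m + 1) + 2 * (∑ i, f' i) < s := by
          have h1 : (m + 1) + 2 * (∑ i, f i) ≤ s := hs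
          omega
        exact IH _ hlt (m+1) f' l hf' hl le_rfl
      have hDm : ∀ h : Fin (m+1) → ℕ, StrictMono h →
          0 ≤ Matrix.det (Matrix.of fun i j =>
            C (f' i) (h j) + C (f' i) (h j + 1)) := by
        intro h hh
        have := det_expand C f' (fun _ => 1) (fun _ => 1) h (fun j => h j + 1)
          (fun _ => zero_le_one) (fun _ => zero_le_one)
          (by
            intro j j' hjj'
            have := hh hjj'
            simp only [le_min_iff, max_le_iff]
            omega)
          hCminor
        simpa using this
      have key : (Matrix.of fun i j => C (f i) (g j)) = Matrix.of fun i j =>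
          (if g j = 0 then 0 else 1) *
            (C (f' i) (g j - 1) + C (f' i) (g j - 1 + 1))
          + 1 * (C (f' i) (g j) + C (f' i) (g j + 1)) := by
        ext i j
        have hfi : f i = f' i + 1 := by have := hf1 i; simp only [hf'def]; omega
        simp only [Matrix.of_apply]
        rcases Nat.eq_zero_or_pos (g j) with h0 | hpos
        · rw [h0, hfi, hrec0]
          simp
        · obtain ⟨k, hk⟩ : ∃ k, g j = k + 1 := ⟨g j - 1, by omega⟩
          rw [hk, hfi, hrec]
          have : k + 1 - 1 = k := by omega
          rw [this]
          simp only [if_neg (Nat.succ_ne_zero k)]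
          ring
      rw [key]
      apply det_expand (fun n k => C n k + C n (k + 1)) f'
        (fun j => if g j = 0 then 0 else 1) (fun _ => 1)
        (fun j => g j - 1) (fun j => g j)
        (by intro j; by_cases h : g j = 0 <;> simp [h]) (fun _ => zero_le_one)
        (by
          intro j j' hjj'
          have := hg hjj'
          simp only [le_min_iff, max_le_iff]
          omega)
        (by
          intro l hl
          exact hDm l hl)

end Main

/-- The Catalan triangle of Aigner, given by $C_{n+1,0} = C_{n,0} + C_{n,1}$ and
$C_{n+1,k} = C_{n,k-1} + 2 C_{n,k} + C_{n,k+1}$ for $k \ge 1$, is totally positive. -/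
theorem aigner_catalan_triangle_tp (C : ℕ → ℕ → ℝ)
    (hC0 : C 0 0 = 1) (hzero : ∀ n k, n < k → C n k = 0)
    (hrec0 : ∀ n, C (n + 1) 0 = C n 0 + C n 1)
    (hrec : ∀ n k, C (n + 1) (k + 1)
      = C n k + 2 * C n (k + 1) + C n (k + 2)) :
    IsTotallyPos C := by
  intro m f g hf hg
  exact aigner_aux C hC0 hzero hrec0 hrec (m + 2 * ∑ i, f i) m f g hf hg le_rfl
end

section
/- The Catalan triangle of Shapiro B = [B_{n,k}] defined by B_{0,0}=1 and B_{n+1,k} = B_{n,k-1} + 2 B_{n,k} + B_{n,k+1} for all k ≥ 0 (with B_{n,k}=0 unless n ≥ k ≥ 0) is totally positive. -/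
open Matrix Finset

/-- Multilinear expansion of the determinant over per-row binary choices. -/
lemma det_row_split {m : ℕ} (u v : Fin m → Fin m → ℝ) :
    (Matrix.of fun i j => u i j + v i j).det
      = ∑ ε : Fin m → Bool, (Matrix.of fun i j => if ε i then v i j else u i j).det := by
  have h := MultilinearMap.map_sum
    (Matrix.detRowAlternating (R := ℝ) (n := Fin m)).toMultilinearMap
    (g := fun (i : Fin m) (t : Bool) => if t then v i else u i)
  simp only [Fintype.sum_bool, if_true, Bool.false_eq_true, if_false] at h
  have e1 : (Matrix.of fun i j => u i j + v i j).det
      = (Matrix.detRowAlternating (R := ℝ) (n := Fin m)).toMultilinearMap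
          (fun i => v i + u i) := by
    show Matrix.det _ = Matrix.det _
    congr 1
    ext i j
    exact add_comm _ _
  rw [e1, h]
  apply Finset.sum_congr rfl
  intro r _
  show Matrix.det _ = Matrix.det _
  congr 1
  ext i j
  by_cases hr : r i <;> simp [hr]

/-- The Catalan triangle of Shapiro, given by
$B_{n+1,k} = B_{n,k-1} + 2 B_{n,k} + B_{n,k+1}$ for all $k \ge 0$, is totally positive. -/
theorem shapiro_catalan_triangle_tp (B : ℕ → ℕ → ℝ)
    (hB0 : B 0 0 = 1) (hzero : ∀ n k, n < k → B n k = 0)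
    (hrec0 : ∀ n, B (n + 1) 0 = 2 * B n 0 + B n 1)
    (hrec : ∀ n k, B (n + 1) (k + 1)
      = B n k + 2 * B n (k + 1) + B n (k + 2)) :
    IsTotallyPos B := by
  have key : ∀ n m (f g : Fin m → ℕ), StrictMono f → StrictMono g → m + ∑ i, f i ≤ n →
      0 ≤ (Matrix.of fun i j => B (f j) (g i)).det := by
    intro n
    induction n using Nat.strong_induction_on with
    | _ n IH =>
    intro m f g hf hg hn
    match m, f, g, hf, hg, hn with
    | 0, f, g, hf, hg, hn => simp
    | m' + 1, f, g, hf, hg, hn =>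
      by_cases h0 : f 0 = 0
      · -- column 0 of the (transposed) minor is the first row of B
        by_cases hg0 : g 0 = 0
        · rw [Matrix.det_succ_column_zero]
          have hcol : ∀ i : Fin (m' + 1),
              (Matrix.of fun i j => B (f j) (g i)) i 0 = if i = 0 then 1 else 0 := by
            intro i
            simp only [Matrix.of_apply, h0]
            by_cases hi : i = 0
            · subst hi; rw [hg0, hB0]; simp
            · have h1 : (0 : Fin (m' + 1)) < i := by
                cases' (Fin.zero_le i).lt_or_eq with h h
                · exact h
                · exact absurd h.symm hi
              have : 0 < g i := hg0 ▸ hg h1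
              rw [hzero 0 (g i) this]; simp [hi]
          rw [Fintype.sum_eq_single (0 : Fin (m' + 1)) (by
            intro i hi
            rw [hcol i, if_neg hi]
            ring)]
          rw [hcol 0, if_pos rfl]
          have e2 : ((Matrix.of fun i j => B (f j) (g i)).submatrix
              (Fin.succAbove 0) Fin.succ)
              = Matrix.of fun i j => B ((f ∘ Fin.succ) j) ((g ∘ Fin.succ) i) := by
            ext i j
            simp [Fin.succAbove_zero]
          have hm : m' + ∑ i, (f ∘ Fin.succ) i < n := by
            have : ∑ i, f i = f 0 + ∑ i : Fin m', f (Fin.succ i) := Fin.sum_univ_succ f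
            have h2 : ∑ i : Fin m', (f ∘ Fin.succ) i = ∑ i, f i := by
              simp [this, h0]
            omega
          have := IH _ hm m' (f ∘ Fin.succ) (g ∘ Fin.succ)
            (hf.comp (Fin.strictMono_succ)) (hg.comp (Fin.strictMono_succ)) le_rfl
          rw [e2]
          simpa using this
        · -- the whole column is zero
          have : (Matrix.of fun i j => B (f j) (g i)).det = 0 := by
            apply Matrix.det_eq_zero_of_column_eq_zero 0
            intro i
            simp only [Matrix.of_apply, h0]
            apply hzero
            have : g 0 ≤ g i := hg.monotone (Fin.zero_le i)
            omega
          rw [this]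
      · -- use the recurrence: every column index f j is positive
        have hf1 : ∀ j, 1 ≤ f j := by
          intro j
          have : f 0 ≤ f j := hf.monotone (Fin.zero_le j)
          omega
        set f' : Fin (m' + 1) → ℕ := fun j => f j - 1 with hf'def
        have hf' : StrictMono f' := by
          intro a b hab
          have := hf hab
          have := hf1 a
          simp only [hf'def]
          omega
        set Y : ℕ → Fin (m' + 1) → ℝ := fun k j => B (f' j) k with hYdef
        set Z : ℕ → Fin (m' + 1) → ℝ :=
          fun k j => Y k j + if k = 0 then 0 else Y (k - 1) j with hZdef
        have hW : ∀ (k : ℕ) (j : Fin (m' + 1)), B (f j) k = Z k j + Z (k + 1) j := by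
          intro k j
          have hfj : f j = f' j + 1 := by
            have := hf1 j
            simp only [hf'def]
            omega
          rw [hfj]
          cases k with
          | zero => simp only [hZdef, hYdef, hrec0 (f' j)]; simp; ring
          | succ k' =>
            simp only [hZdef, hYdef, hrec (f' j) k']
            simp [Nat.succ_ne_zero]
            ring
        have e3 : (Matrix.of fun i j => B (f j) (g i))
            = Matrix.of fun (i j : Fin (m' + 1)) => Z (g i) j + Z (g i + 1) j := by
          ext i j
          simp only [Matrix.of_apply]
          exact hW (g i) j
        rw [e3, det_row_split (fun i => Z (g i)) (fun i => Z (g i + 1))]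
        apply Finset.sum_nonneg
        intro ε _
        set c : Fin (m' + 1) → ℕ := fun i => if ε i then g i + 1 else g i with hcdef
        have ec : (Matrix.of fun i j => if ε i then Z (g i + 1) j else Z (g i) j)
            = Matrix.of fun i j => Z (c i) j := by
          ext i j
          simp only [Matrix.of_apply, hcdef]
          by_cases hi : ε i <;> simp [hi]
        rw [ec]
        have hcle : ∀ {i i' : Fin (m' + 1)}, i < i' → c i ≤ c i' := by
          intro i i' h
          have h1 : g i < g i' := hg h
          simp only [hcdef]
          split_ifs <;> omega
        by_cases hcinj : Function.Injective c
        · have hcm : StrictMono c := fun i i' h =>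
            lt_of_le_of_ne (hcle h) fun e => (ne_of_lt h) (hcinj e)
          have eZ : (Matrix.of fun i j => Z (c i) j)
              = Matrix.of fun (i j : Fin (m' + 1)) =>
                  Y (c i) j + if c i = 0 then 0 else Y (c i - 1) j := by
            ext i j; simp [hZdef]
          rw [eZ, det_row_split (fun i j => Y (c i) j)
            (fun i j => if c i = 0 then 0 else Y (c i - 1) j)]
          apply Finset.sum_nonneg
          intro δ _
          by_cases hz : ∃ i, δ i = true ∧ c i = 0
          · obtain ⟨i0, hδ0, hc0⟩ := hz
            have : (Matrix.of fun i j => if δ i then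
                (if c i = 0 then (0:ℝ) else Y (c i - 1) j) else Y (c i) j).det = 0 := by
              apply Matrix.det_eq_zero_of_row_eq_zero i0
              intro j
              simp [hδ0, hc0]
            rw [this]
          · push_neg at hz
            set d : Fin (m' + 1) → ℕ := fun i => if δ i then c i - 1 else c i with hddef
            have ed : (Matrix.of fun i j => if δ i then
                (if c i = 0 then (0:ℝ) else Y (c i - 1) j) else Y (c i) j)
                = Matrix.of fun i j => B (f' j) (d i) := by
              ext i j
              simp only [Matrix.of_apply, hddef, hYdef]
              by_cases hi : δ i
              · have := hz i hi
                simp [hi, this]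
              · simp [hi]
            rw [ed]
            have hdle : ∀ {i i' : Fin (m' + 1)}, i < i' → d i ≤ d i' := by
              intro i i' h
              have h1 : c i < c i' := hcm h
              simp only [hddef]
              split_ifs <;> omega
            by_cases hdinj : Function.Injective d
            · have hdm : StrictMono d := fun i i' h =>
                lt_of_le_of_ne (hdle h) fun e => (ne_of_lt h) (hdinj e)
              have hm2 : (m' + 1) + ∑ i, f' i < n := by
                have hlt : ∑ i, f' i < ∑ i, f i := by
                  apply Finset.sum_lt_sum (fun i _ => by
                    have := hf1 i; simp only [hf'def]; omega)
                  refine ⟨0, Finset.mem_univ _, ?_⟩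
                  have := hf1 0
                  simp only [hf'def]
                  omega
                omega
              exact IH _ hm2 (m' + 1) f' d hf' hdm le_rfl
            · rw [Function.not_injective_iff] at hdinj
              obtain ⟨a, b, hab, hne⟩ := hdinj
              have : (Matrix.of fun i j => B (f' j) (d i)).det = 0 := by
                apply Matrix.det_zero_of_row_eq hne
                ext j
                simp [hab]
              rw [this]
        · rw [Function.not_injective_iff] at hcinj
          obtain ⟨a, b, hab, hne⟩ := hcinj
          have : (Matrix.of fun i j => Z (c i) j).det = 0 := by
            apply Matrix.det_zero_of_row_eq hne
            ext j
            simp [hab]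
          rw [this]
  intro m f g hf hg
  have e : (Matrix.of fun i j => B (f i) (g j))
      = (Matrix.of fun i j => B (f j) (g i)).transpose := by
    ext i j
    simp [Matrix.transpose_apply]
  rw [e, Matrix.det_transpose]
  exact key (m + ∑ i, f i) m f g hf hg le_rfl
end

section
/- The sequence of Bell numbers (B_n)_{n≥0} is log-convex: B_n B_{n+2} ≥ B_{n+1}^2 for all n ≥ 0. -/
open Finset
set_option linter.unusedSectionVars false

/-- The $n$-th Bell number: the number of set partitions of an $n$-element set. -/
noncomputable def bell (n : ℕ) : ℕ :=
  Fintype.card (Finpartition (Finset.univ : Finset (Fin n)))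

namespace BellAux
section A



variable {β γ : Type*} [DecidableEq β] [DecidableEq γ]

lemma sup_image_map (f : β ↪ γ) (parts : Finset (Finset β)) :
    (parts.image (Finset.map f)).sup id = (parts.sup id).map f := by
  ext x
  simp only [Finset.mem_sup, mem_image, id_eq, Finset.mem_map]
  constructor
  · rintro ⟨t, ⟨u, hu, rfl⟩, hx⟩
    obtain ⟨y, hy, rfl⟩ := Finset.mem_map.1 hx
    exact ⟨y, ⟨u, hu, hy⟩, rfl⟩
  · rintro ⟨y, ⟨u, hu, hy⟩, rfl⟩
    exact ⟨u.map f, ⟨u, hu, rfl⟩, Finset.mem_map_of_mem f hy⟩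

/-- Push a finpartition forward along an embedding. -/
def embMap (f : β ↪ γ) {s : Finset β} (P : Finpartition s) : Finpartition (s.map f) where
  parts := P.parts.image (Finset.map f)
  supIndep := by
    rw [Finset.supIndep_iff_pairwiseDisjoint]
    intro x hx y hy hxy
    simp only [coe_image, Set.mem_image, mem_coe] at hx hy
    obtain ⟨t, ht, rfl⟩ := hx
    obtain ⟨u, hu, rfl⟩ := hy
    have htu : t ≠ u := by rintro rfl; exact hxy rfl
    exact (Finset.disjoint_map f).2 (P.disjoint ht hu htu)
  sup_parts := by rw [sup_image_map, P.sup_parts]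
  bot_notMem := by
    simp only [bot_eq_empty, mem_image]
    rintro ⟨t, ht, h⟩
    rw [Finset.map_eq_empty] at h
    subst h; exact P.bot_notMem ht

lemma embMap_injective (f : β ↪ γ) {s : Finset β} :
    Function.Injective (embMap f (s := s)) := by
  intro P Q h
  ext1
  have := congrArg Finpartition.parts h
  simpa only [embMap] using
    Finset.image_injective (Finset.map_injective f) this

lemma card_le_embMap (f : β ↪ γ) (s : Finset β) :
    Fintype.card (Finpartition s) ≤ Fintype.card (Finpartition (s.map f)) :=
  Fintype.card_le_of_injective _ (embMap_injective f)


end A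
section B



variable {β γ : Type*} [DecidableEq β] [DecidableEq γ]

/-- Pull a finpartition of `s` back to a finpartition of `univ : Finset ↥s`. -/
def toSubtype (s : Finset γ) (P : Finpartition s) : Finpartition (univ : Finset ↥s) where
  parts := P.parts.image (fun t => t.subtype (· ∈ s))
  supIndep := by
    rw [Finset.supIndep_iff_pairwiseDisjoint]
    intro x hx y hy hxy
    simp only [coe_image, Set.mem_image, mem_coe] at hx hy
    obtain ⟨t, ht, rfl⟩ := hx
    obtain ⟨u, hu, rfl⟩ := hy
    have htu : t ≠ u := by rintro rfl; exact hxy rfl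
    have := P.disjoint ht hu htu
    simp only [id_eq, Function.onFun] at this ⊢
    rw [Finset.disjoint_left] at this ⊢
    intro a ha hb
    rw [Finset.mem_subtype] at ha hb
    exact this ha hb
  sup_parts := by
    ext x
    simp only [Finset.mem_sup, mem_image, id_eq, mem_univ, iff_true]
    have hx : (x : γ) ∈ P.parts.sup id := by rw [P.sup_parts]; exact x.2
    rw [Finset.mem_sup] at hx
    obtain ⟨t, ht, hxt⟩ := hx
    exact ⟨t.subtype _, ⟨t, ht, rfl⟩, by rwa [Finset.mem_subtype]⟩
  bot_notMem := by
    simp only [bot_eq_empty, mem_image]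
    rintro ⟨t, ht, h⟩
    obtain ⟨y, hy⟩ := P.nonempty_of_mem_parts ht
    have : (⟨y, P.le ht hy⟩ : ↥s) ∈ t.subtype (· ∈ s) := by rwa [Finset.mem_subtype]
    rw [h] at this
    exact absurd this (Finset.notMem_empty _)

lemma image_map_subtype (s : Finset γ) (P : Finpartition s) :
    (P.parts.image (fun t => t.subtype (· ∈ s))).image
      (fun u => u.map (Function.Embedding.subtype (· ∈ s))) = P.parts := by
  ext t
  simp only [Finset.mem_image, exists_exists_and_eq_and]
  constructor
  · rintro ⟨u, hu, rfl⟩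
    rwa [Finset.subtype_map, Finset.filter_true_of_mem (fun x hx => P.le hu hx)]
  · intro ht
    exact ⟨t, ht, by rw [Finset.subtype_map, Finset.filter_true_of_mem (fun x hx => P.le ht hx)]⟩

lemma toSubtype_injective (s : Finset γ) : Function.Injective (toSubtype s) := by
  intro P Q h
  ext1
  have := congrArg Finpartition.parts h
  simp only [toSubtype] at this
  rw [← image_map_subtype s P, ← image_map_subtype s Q, this]

lemma card_finpartition_subtype (s : Finset γ) :
    Fintype.card (Finpartition s) = Fintype.card (Finpartition (univ : Finset ↥s)) := by
  refine le_antisymm (Fintype.card_le_of_injective _ (toSubtype_injective s)) ?_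
  have h : (univ : Finset ↥s).map (Function.Embedding.subtype _) = s := by
    rw [← Finset.attach_eq_univ]; exact Finset.attach_map_val
  have := card_le_embMap (Function.Embedding.subtype (· ∈ s)) (univ : Finset ↥s)
  rwa [h] at this

lemma card_finpartition_congr {β γ : Type*} [DecidableEq β] [DecidableEq γ]
    [Fintype β] [Fintype γ] (e : β ≃ γ) :
    Fintype.card (Finpartition (univ : Finset β)) =
      Fintype.card (Finpartition (univ : Finset γ)) := by
  refine le_antisymm ?_ ?_
  · have := card_le_embMap e.toEmbedding (univ : Finset β)
    rwa [Finset.map_univ_equiv] at this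
  · have := card_le_embMap e.symm.toEmbedding (univ : Finset γ)
    rwa [Finset.map_univ_equiv] at this


end B
section D
variable {γ : Type*} [DecidableEq γ] [Fintype γ]

/-- The block containing `none`, built from `s : Finset γ`. -/
def noneBlock (s : Finset γ) : Finset (Option γ) :=
  insert none (s.map Function.Embedding.some)

lemma none_mem_noneBlock (s : Finset γ) : none ∈ noneBlock s := mem_insert_self _ _

lemma some_mem_noneBlock {s : Finset γ} {a : γ} : some a ∈ noneBlock s ↔ a ∈ s := by
  simp [noneBlock]

/-- Assembling a partition of `Option γ` from the `none`-block and a partition of the rest. -/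
def optionPsi (s : Finset γ) (P : Finpartition ((sᶜ : Finset γ))) :
    Finpartition (univ : Finset (Option γ)) where
  parts := insert (noneBlock s) (P.parts.image (Finset.map Function.Embedding.some))
  supIndep := by
    rw [Finset.supIndep_iff_pairwiseDisjoint, coe_insert]
    refine Set.PairwiseDisjoint.insert ?_ ?_
    · intro x hx y hy hxy
      simp only [coe_image, Set.mem_image, mem_coe] at hx hy
      obtain ⟨t, ht, rfl⟩ := hx
      obtain ⟨u, hu, rfl⟩ := hy
      have htu : t ≠ u := by rintro rfl; exact hxy rfl
      have := P.disjoint ht hu htu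
      simp only [id_eq, Function.onFun] at this ⊢
      exact (Finset.disjoint_map _).2 this
    · intro u hu _
      simp only [coe_image, Set.mem_image, mem_coe] at hu
      obtain ⟨t, ht, rfl⟩ := hu
      simp only [id_eq, Function.onFun]
      rw [Finset.disjoint_left]
      rintro (_ | a) hx hx'
      · exact absurd hx' (by simp)
      · rw [some_mem_noneBlock] at hx
        obtain ⟨b, hb, hba⟩ := Finset.mem_map.1 hx'
        have hbs : b ∈ sᶜ := by rw [← P.sup_parts]; exact Finset.mem_sup.2 ⟨t, ht, hb⟩
        have : b = a := by simpa using hba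
        subst this
        exact (Finset.mem_compl.1 hbs) hx
  sup_parts := by
    rw [Finset.sup_insert, sup_image_map, P.sup_parts]
    ext (_ | a)
    · simp [noneBlock]
    · by_cases h : a ∈ s <;> simp [noneBlock, h]
  bot_notMem := by
    simp only [bot_eq_empty, mem_insert, mem_image]
    rintro (h | ⟨t, ht, h⟩)
    · exact absurd (h ▸ none_mem_noneBlock s) (Finset.notMem_empty _)
    · rw [Finset.map_eq_empty] at h
      subst h
      exact P.bot_notMem ht

lemma optionPsi_injective :
    Function.Injective (fun p : Σ s : Finset γ, Finpartition ((sᶜ : Finset γ)) =>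
      optionPsi p.1 p.2) := by
  rintro ⟨s, P⟩ ⟨s', P'⟩ h
  simp only at h
  have hparts := congrArg Finpartition.parts h
  simp only [optionPsi] at hparts
  -- first, the none blocks coincide
  have hnone : ∀ t ∈ P.parts.image (Finset.map (Function.Embedding.some (α := γ))),
      none ∉ t := by
    rintro t ht
    simp only [mem_image] at ht
    obtain ⟨u, _, rfl⟩ := ht
    simp
  have hnone' : ∀ t ∈ P'.parts.image (Finset.map (Function.Embedding.some (α := γ))),
      none ∉ t := by
    rintro t ht
    simp only [mem_image] at ht
    obtain ⟨u, _, rfl⟩ := ht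
    simp
  have hB : noneBlock s = noneBlock s' := by
    have h1 : noneBlock s ∈ insert (noneBlock s')
        (P'.parts.image (Finset.map Function.Embedding.some)) := by
      rw [← hparts]; exact mem_insert_self _ _
    rcases mem_insert.1 h1 with h1 | h1
    · exact h1
    · exact absurd (none_mem_noneBlock s) (hnone' _ h1)
  have hss : s = s' := by
    ext a
    rw [← some_mem_noneBlock (s := s), ← some_mem_noneBlock (s := s'), hB]
  subst hss
  have hX : P.parts.image (Finset.map (Function.Embedding.some (α := γ))) =
      P'.parts.image (Finset.map Function.Embedding.some) := by
    ext t
    constructor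
    · intro ht
      have : t ∈ insert (noneBlock s) (P'.parts.image (Finset.map Function.Embedding.some)) := by
        rw [← hparts]; exact mem_insert_of_mem ht
      rcases mem_insert.1 this with rfl | h2
      · exact absurd (none_mem_noneBlock s) (hnone _ ht)
      · exact h2
    · intro ht
      have : t ∈ insert (noneBlock s) (P.parts.image (Finset.map Function.Embedding.some)) := by
        rw [hparts]; exact mem_insert_of_mem ht
      rcases mem_insert.1 this with rfl | h2
      · exact absurd (none_mem_noneBlock s) (hnone' _ ht)
      · exact h2
  have : P = P' := by
    ext1
    exact Finset.image_injective (Finset.map_injective _) hX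
  rw [this]

lemma optionPsi_surjective :
    Function.Surjective (fun p : Σ s : Finset γ, Finpartition ((sᶜ : Finset γ)) =>
      optionPsi p.1 p.2) := by
  intro Q
  classical
  set B := Q.part none with hBdef
  have hBmem : B ∈ Q.parts := Q.part_mem.2 (mem_univ _)
  have hnoneB : none ∈ B := Q.mem_part (mem_univ _)
  set s : Finset γ := B.eraseNone with hsdef
  -- every other part contains no `none` and consists of `some`s
  have hother : ∀ t ∈ Q.parts.erase B, none ∉ t := by
    intro t ht hn
    exact (Finset.mem_erase.1 ht).1 (Q.eq_of_mem_parts (Finset.mem_erase.1 ht).2 hBmem hn hnoneB)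
  -- the residual partition
  have hmapback : ∀ t ∈ Q.parts.erase B, (Finset.eraseNone t).map Function.Embedding.some = t := by
    intro t ht
    rw [map_some_eraseNone, Finset.erase_eq_of_notMem (hother t ht)]
  refine ⟨⟨s, ?_⟩, ?_⟩
  · refine ⟨(Q.parts.erase B).image Finset.eraseNone, ?_, ?_, ?_⟩
    · rw [Finset.supIndep_iff_pairwiseDisjoint]
      intro x hx y hy hxy
      simp only [coe_image, Set.mem_image, mem_coe] at hx hy
      obtain ⟨t, ht, rfl⟩ := hx
      obtain ⟨u, hu, rfl⟩ := hy
      have htu : t ≠ u := by rintro rfl; exact hxy rfl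
      have := Q.disjoint (Finset.mem_erase.1 ht).2 (Finset.mem_erase.1 hu).2 htu
      simp only [id_eq, Function.onFun] at this ⊢
      rw [Finset.disjoint_left] at this ⊢
      intro a ha hb
      rw [Finset.mem_eraseNone] at ha hb
      exact this ha hb
    · ext a
      simp only [Finset.mem_sup, mem_image, id_eq, Finset.mem_compl, exists_exists_and_eq_and]
      constructor
      · rintro ⟨t, ht, hat⟩ has
        rw [Finset.mem_eraseNone] at hat
        have : t = B := Q.eq_of_mem_parts (Finset.mem_erase.1 ht).2 hBmem hat
          (by rw [hsdef, Finset.mem_eraseNone] at has; exact has)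
        exact (Finset.mem_erase.1 ht).1 this
      · intro has
        have h1 : some a ∈ Q.parts.sup id := by rw [Q.sup_parts]; exact mem_univ _
        obtain ⟨t, ht, hat⟩ := Finset.mem_sup.1 h1
        have htB : t ≠ B := by
          rintro rfl
          exact has (by rw [hsdef, Finset.mem_eraseNone]; exact hat)
        exact ⟨t, Finset.mem_erase.2 ⟨htB, ht⟩, Finset.mem_eraseNone.2 hat⟩
    · simp only [bot_eq_empty, mem_image]
      rintro ⟨t, ht, h⟩
      have := hmapback t ht
      rw [h] at this
      simp only [Finset.map_empty] at this
      have ht2 := (Finset.mem_erase.1 ht).2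
      rw [← this] at ht2
      exact Q.bot_notMem ht2
  · -- optionPsi s P = Q
    ext1
    show insert (noneBlock s) _ = Q.parts
    have hBeq : noneBlock s = B := by
      rw [noneBlock, hsdef, map_some_eraseNone, Finset.insert_erase hnoneB]
    have himg : ((Q.parts.erase B).image Finset.eraseNone).image
        (Finset.map Function.Embedding.some) = Q.parts.erase B := by
      rw [Finset.image_image]
      ext t
      simp only [mem_image, Function.comp_apply]
      constructor
      · rintro ⟨u, hu, rfl⟩
        rw [hmapback u hu]; exact hu
      · intro ht
        exact ⟨t, ht, hmapback t ht⟩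
    rw [hBeq, himg, Finset.insert_erase hBmem]

lemma card_option :
    Fintype.card (Finpartition (univ : Finset (Option γ))) =
      ∑ s : Finset γ, Fintype.card (Finpartition ((sᶜ : Finset γ))) := by
  rw [← Fintype.card_sigma]
  exact (Fintype.card_of_bijective ⟨optionPsi_injective, optionPsi_surjective⟩).symm


end D
lemma card_finpartition_eq_bell {γ : Type*} [Fintype γ] [DecidableEq γ] (s : Finset γ) :
    Fintype.card (Finpartition s) = bell s.card := by
  rw [card_finpartition_subtype]
  exact card_finpartition_congr (Fintype.equivFinOfCardEq (Fintype.card_coe s))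

lemma bell_succ (n : ℕ) :
    bell (n + 1) = ∑ k ∈ range (n + 1), n.choose k * bell k := by
  have h1 : bell (n + 1) = Fintype.card (Finpartition (univ : Finset (Option (Fin n)))) :=
    card_finpartition_congr (finSuccEquiv n)
  rw [h1, card_option]
  have h2 : ∀ s : Finset (Fin n),
      Fintype.card (Finpartition ((sᶜ : Finset (Fin n)))) = bell (n - s.card) := by
    intro s
    rw [card_finpartition_eq_bell, Finset.card_compl, Fintype.card_fin]
  rw [Finset.sum_congr rfl (fun s _ => h2 s)]
  have h3 : (univ : Finset (Finset (Fin n))) = (univ : Finset (Fin n)).powerset :=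
    Finset.powerset_univ.symm
  rw [h3, powerset_card_disjiUnion]
  refine (sum_disjiUnion _ _ _).trans ?_
  have h4 : ∀ k, ∑ t ∈ powersetCard k (univ : Finset (Fin n)), bell (n - t.card) =
      n.choose k * bell (n - k) := by
    intro k
    rw [Finset.sum_powersetCard k (univ : Finset (Fin n)) (fun c => bell (n - c)),
      card_univ, Fintype.card_fin, smul_eq_mul]
  rw [Finset.sum_congr rfl (fun k _ => h4 k)]
  rw [card_univ, Fintype.card_fin]
  conv_rhs => rw [← Finset.sum_range_reflect (fun k => n.choose k * bell k) (n + 1)]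
  refine Finset.sum_congr rfl fun k hk => ?_
  rw [Finset.mem_range, Nat.lt_succ_iff] at hk
  simp only [Nat.add_sub_cancel]
  rw [Nat.choose_symm hk]

lemma two_mul_le_add_of_sq_le_mul {x y c : ℕ} (h : c ^ 2 ≤ x * y) : 2 * c ≤ x + y := by
  zify at h ⊢
  nlinarith [sq_nonneg ((x : ℤ) - y), sq_nonneg ((x : ℤ) + y), (by positivity : (0:ℤ) ≤ (x:ℤ)),
    (by positivity : (0:ℤ) ≤ (y:ℤ)), (by positivity : (0:ℤ) ≤ (c:ℤ))]

lemma sum_choose_succ_nat (m : ℕ) (g : ℕ → ℕ) :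
    ∑ i ∈ range (m + 2), (m + 1).choose i * g i =
      ∑ i ∈ range (m + 1), m.choose i * g i + ∑ i ∈ range (m + 1), m.choose i * g (i + 1) := by
  have := Finset.sum_choose_succ_mul (R := ℕ) (fun i _ => g i) m
  simpa using this

lemma sum_sq_le (m : ℕ) (b : ℕ → ℕ)
    (H : ∀ j ∈ range (m + 1), ∀ k ∈ range (m + 1),
      (b (j + 1) * b (k + 1)) ^ 2 ≤ (b j * b (k + 2)) * (b k * b (j + 2))) :
    (∑ k ∈ range (m + 1), m.choose k * b (k + 1)) ^ 2 ≤
      (∑ k ∈ range (m + 1), m.choose k * b k) *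
        (∑ k ∈ range (m + 1), m.choose k * b (k + 2)) := by
  have key : ∀ j ∈ range (m + 1), ∀ k ∈ range (m + 1),
      2 * ((m.choose j * b (j + 1)) * (m.choose k * b (k + 1))) ≤
        (m.choose j * b j) * (m.choose k * b (k + 2)) +
          (m.choose k * b k) * (m.choose j * b (j + 2)) := by
    intro j hj k hk
    have h1 : 2 * (b (j + 1) * b (k + 1)) ≤ b j * b (k + 2) + b k * b (j + 2) :=
      two_mul_le_add_of_sq_le_mul (H j hj k hk)
    calc 2 * ((m.choose j * b (j + 1)) * (m.choose k * b (k + 1)))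
        = (m.choose j * m.choose k) * (2 * (b (j + 1) * b (k + 1))) := by ring
      _ ≤ (m.choose j * m.choose k) * (b j * b (k + 2) + b k * b (j + 2)) :=
          Nat.mul_le_mul_left _ h1
      _ = (m.choose j * b j) * (m.choose k * b (k + 2)) +
          (m.choose k * b k) * (m.choose j * b (j + 2)) := by ring
  have expand1 : (∑ k ∈ range (m + 1), m.choose k * b (k + 1)) ^ 2 =
      ∑ j ∈ range (m + 1), ∑ k ∈ range (m + 1),
        (m.choose j * b (j + 1)) * (m.choose k * b (k + 1)) := by
    rw [sq, Finset.sum_mul_sum]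
  have expand2 : (∑ k ∈ range (m + 1), m.choose k * b k) *
      (∑ k ∈ range (m + 1), m.choose k * b (k + 2)) =
      ∑ j ∈ range (m + 1), ∑ k ∈ range (m + 1),
        (m.choose j * b j) * (m.choose k * b (k + 2)) := by
    rw [Finset.sum_mul_sum]
  have swap : ∑ j ∈ range (m + 1), ∑ k ∈ range (m + 1),
      (m.choose k * b k) * (m.choose j * b (j + 2)) =
      ∑ j ∈ range (m + 1), ∑ k ∈ range (m + 1),
        (m.choose j * b j) * (m.choose k * b (k + 2)) := by
    rw [Finset.sum_comm]
  have h2 : 2 * ((∑ k ∈ range (m + 1), m.choose k * b (k + 1)) ^ 2) ≤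
      2 * ((∑ k ∈ range (m + 1), m.choose k * b k) *
        (∑ k ∈ range (m + 1), m.choose k * b (k + 2))) := by
    rw [expand1, expand2]
    calc 2 * (∑ j ∈ range (m + 1), ∑ k ∈ range (m + 1),
          (m.choose j * b (j + 1)) * (m.choose k * b (k + 1)))
        = ∑ j ∈ range (m + 1), ∑ k ∈ range (m + 1),
            2 * ((m.choose j * b (j + 1)) * (m.choose k * b (k + 1))) := by
          rw [Finset.mul_sum]
          exact Finset.sum_congr rfl fun j _ => by rw [Finset.mul_sum]
      _ ≤ ∑ j ∈ range (m + 1), ∑ k ∈ range (m + 1),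
            ((m.choose j * b j) * (m.choose k * b (k + 2)) +
              (m.choose k * b k) * (m.choose j * b (j + 2))) := by
          refine Finset.sum_le_sum fun j hj => Finset.sum_le_sum fun k hk => key j hj k hk
      _ = ∑ j ∈ range (m + 1), ∑ k ∈ range (m + 1),
            (m.choose j * b j) * (m.choose k * b (k + 2)) +
          ∑ j ∈ range (m + 1), ∑ k ∈ range (m + 1),
            (m.choose k * b k) * (m.choose j * b (j + 2)) := by
          rw [← Finset.sum_add_distrib]
          exact Finset.sum_congr rfl fun j _ => Finset.sum_add_distrib
      _ = 2 * (∑ j ∈ range (m + 1), ∑ k ∈ range (m + 1),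
            (m.choose j * b j) * (m.choose k * b (k + 2))) := by
          rw [swap, two_mul]
  omega

end BellAux

open BellAux Finset in
/-- The sequence of Bell numbers is log-convex. -/
theorem bell_logConvex : ∀ n : ℕ, bell (n + 1) ^ 2 ≤ bell n * bell (n + 2) := by
  intro n
  induction n using Nat.strong_induction_on with
  | _ n ih =>
    match n with
    | 0 =>
      have e1 : bell 1 = bell 0 := by
        rw [bell_succ 0]; simp
      have e2 : bell 2 = bell 0 + bell 1 := by
        rw [bell_succ 1]
        rw [Finset.sum_range_succ, Finset.sum_range_one]
        simp
      rw [e2, e1, sq]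
      exact Nat.mul_le_mul_left _ (Nat.le_add_right _ _)
    | (m + 1) =>
      set T := ∑ k ∈ range (m + 1), m.choose k * bell k with hTdef
      set U := ∑ k ∈ range (m + 1), m.choose k * bell (k + 1) with hUdef
      set V := ∑ k ∈ range (m + 1), m.choose k * bell (k + 2) with hVdef
      have hT : bell (m + 1) = T := bell_succ m
      have hTU : bell (m + 2) = T + U := by
        rw [show m + 2 = (m + 1) + 1 by rfl, bell_succ (m + 1), sum_choose_succ_nat m bell]
      have hV : bell (m + 3) = (T + U) + (U + V) := by
        rw [show m + 3 = (m + 2) + 1 by rfl, bell_succ (m + 2),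
          show m + 2 = (m + 1) + 1 by rfl, sum_choose_succ_nat (m + 1) bell,
          sum_choose_succ_nat m bell, sum_choose_succ_nat m (fun k => bell (k + 1))]
      have key : U ^ 2 ≤ T * V := by
        refine sum_sq_le m bell ?_
        intro j hj k hk
        rw [Finset.mem_range, Nat.lt_succ_iff] at hj hk
        have h1 := ih j (Nat.lt_succ_of_le hj)
        have h2 := ih k (Nat.lt_succ_of_le hk)
        calc (bell (j + 1) * bell (k + 1)) ^ 2
            = bell (j + 1) ^ 2 * bell (k + 1) ^ 2 := by ring
          _ ≤ (bell j * bell (j + 2)) * (bell k * bell (k + 2)) :=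
              Nat.mul_le_mul h1 h2
          _ = (bell j * bell (k + 2)) * (bell k * bell (j + 2)) := by ring
      rw [hTU, hT, hV]
      have e3 : (T + U) ^ 2 = (T * T + 2 * (T * U)) + U ^ 2 := by ring
      have e4 : T * ((T + U) + (U + V)) = (T * T + 2 * (T * U)) + T * V := by ring
      rw [e3, e4]
      exact Nat.add_le_add_left key _
end
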